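/- arXiv:1510.03014 — 3 statements merged into one kernel-verified Lean document; each statement's English description precedes it below -/
import Mathlib

section
/- Let 𝒜 be an algebra of subsets of Ω, (F_n) a norm bounded sequence in ba(𝒜)₊, δ > 0, and λ a finitely additive probability on 𝒜. Then there exist ξ ∈ ba(𝒜)₊ absolutely continuous with respect to λ satisfying ‖ξ‖ ≥ sup_k limsup_n ‖F_n ∧ 2^k λ‖ − δ, a sequence (G_n) with G_n in the convex hull of {F_n, F_{n+1}, ...}, and sets (A_n) in 𝒜, such that ‖G_n restricted to A_n − ξ‖ → 0 and Σ_n λ(A_nᶜ) < ∞. -/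
noncomputable section
open Filter Set

variable {Ω : Type}

/-- `C` is an algebra of subsets of `Ω`. -/
def IsSetAlg (C : Set (Set Ω)) : Prop :=
  ∅ ∈ C ∧ (∀ A ∈ C, Aᶜ ∈ C) ∧ ∀ A ∈ C, ∀ B ∈ C, A ∪ B ∈ C

/-- `μ` is finitely additive on the algebra `C`. -/
def IsFinAdd (C : Set (Set Ω)) (μ : Set Ω → ℝ) : Prop :=
  μ ∅ = 0 ∧ ∀ A ∈ C, ∀ B ∈ C, Disjoint A B → μ (A ∪ B) = μ A + μ B

/-- `π` is a partition of `A` into finitely many members of `C`. -/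
def IsPartition (C : Set (Set Ω)) (π : Finset (Set Ω)) (A : Set Ω) : Prop :=
  (∀ E ∈ π, E ∈ C) ∧ (π : Set (Set Ω)).PairwiseDisjoint id ∧
    ⋃₀ (π : Set (Set Ω)) = A

/-- The set of partial variation sums of `μ` over finite `C`-partitions of `A`. -/
def varSums (C : Set (Set Ω)) (μ : Set Ω → ℝ) (A : Set Ω) : Set ℝ :=
  {x | ∃ π : Finset (Set Ω), IsPartition C π A ∧ x = ∑ E ∈ π, |μ E|}

/-- The total variation `|μ|(A)`. -/
def totalVar (C : Set (Set Ω)) (μ : Set Ω → ℝ) (A : Set Ω) : ℝ :=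
  sSup (varSums C μ A)

/-- The total variation norm `‖μ‖ = |μ|(Ω)`. -/
def tvNorm (C : Set (Set Ω)) (μ : Set Ω → ℝ) : ℝ :=
  totalVar C μ univ

/-- `μ` has bounded total variation. -/
def BddVar (C : Set (Set Ω)) (μ : Set Ω → ℝ) : Prop :=
  BddAbove (varSums C μ univ)

/-- `μ ∈ ba(C)`: finitely additive with bounded total variation. -/
def Memba (C : Set (Set Ω)) (μ : Set Ω → ℝ) : Prop :=
  IsFinAdd C μ ∧ BddVar C μ

/-- The lattice infimum `μ ∧ ν` in `ba(C)`. -/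
def baInf (C : Set (Set Ω)) (μ ν : Set Ω → ℝ) (A : Set Ω) : ℝ :=
  sInf {x | ∃ B ∈ C, x = μ (A ∩ B) + ν (A ∩ Bᶜ)}

/-- `l` is a finitely additive probability on `C`. -/
def IsFAProb (C : Set (Set Ω)) (l : Set Ω → ℝ) : Prop :=
  Memba C l ∧ (∀ A ∈ C, 0 ≤ l A) ∧ l univ = 1

/-- `ξ ≪ l` : (ε-δ) absolute continuity. -/
def AbsCont (C : Set (Set Ω)) (ξ l : Set Ω → ℝ) : Prop :=
  ∀ ε > (0:ℝ), ∃ δ > (0:ℝ), ∀ A ∈ C, l A < δ → totalVar C ξ A < ε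

/-- The tail sets `{F n, F (n+1), ...}` of a sequence of set functions. -/
def tailSet (F : ℕ → Set Ω → ℝ) (n : ℕ) : Set (Set Ω → ℝ) :=
  {g | ∃ i, n ≤ i ∧ g = F i}

set_option linter.unusedSectionVars false
set_option linter.unusedVariables false

namespace KomlosAux

attribute [local instance] Classical.propDecidable

variable {C : Set (Set Ω)}

/-- partition variation sum -/
def pvar (μ : Set Ω → ℝ) (P : Finset (Set Ω)) : ℝ := ∑ E ∈ P, |μ E|

section SetAlg
variable (hC : IsSetAlg C)
include hC

theorem empty_mem : (∅ : Set Ω) ∈ C := hC.1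
theorem compl_mem {A : Set Ω} (h : A ∈ C) : Aᶜ ∈ C := hC.2.1 A h
theorem union_mem {A B : Set Ω} (hA : A ∈ C) (hB : B ∈ C) : A ∪ B ∈ C := hC.2.2 A hA B hB
theorem univ_mem : (univ : Set Ω) ∈ C := by
  have := compl_mem hC hC.1; simpa using this
theorem inter_mem {A B : Set Ω} (hA : A ∈ C) (hB : B ∈ C) : A ∩ B ∈ C := by
  have : A ∩ B = (Aᶜ ∪ Bᶜ)ᶜ := by simp [Set.compl_union]
  rw [this]; exact compl_mem hC (union_mem hC (compl_mem hC hA) (compl_mem hC hB))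
theorem diff_mem {A B : Set Ω} (hA : A ∈ C) (hB : B ∈ C) : A \ B ∈ C := by
  rw [Set.diff_eq]; exact inter_mem hC hA (compl_mem hC hB)

theorem sUnion_mem (P : Finset (Set Ω)) (h : ∀ E ∈ P, E ∈ C) : ⋃₀ (P : Set (Set Ω)) ∈ C := by
  classical
  induction P using Finset.induction_on with
  | empty => simpa using hC.1
  | @insert E P' hEP ih =>
    rw [Finset.coe_insert, Set.sUnion_insert]
    exact union_mem hC (h E (Finset.mem_insert_self _ _))
      (ih fun E' hE' => h E' (Finset.mem_insert_of_mem hE'))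

theorem biInter_mem (s : Finset ℕ) (B : ℕ → Set Ω) (h : ∀ i ∈ s, B i ∈ C) :
    (⋂ i ∈ s, B i) ∈ C := by
  classical
  induction s using Finset.induction_on with
  | empty => simpa using univ_mem hC
  | @insert i s' his ih =>
    rw [Finset.set_biInter_insert]
    exact inter_mem hC (h i (Finset.mem_insert_self _ _))
      (ih fun j hj => h j (Finset.mem_insert_of_mem hj))

end SetAlg

section FinAdd
variable (hC : IsSetAlg C) {μ : Set Ω → ℝ} (hμ : IsFinAdd C μ)
include hC hμ

/-- additivity over a disjoint finite family, intersected with a fixed set `D`. -/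
theorem sum_inter_sUnion {D : Set Ω} (hD : D ∈ C) (P : Finset (Set Ω))
    (hmem : ∀ E ∈ P, E ∈ C) (hdis : (P : Set (Set Ω)).PairwiseDisjoint id) :
    μ (D ∩ ⋃₀ (P : Set (Set Ω))) = ∑ E ∈ P, μ (D ∩ E) := by
  classical
  induction P using Finset.induction_on with
  | empty => simpa using hμ.1
  | @insert E P' hEP ih =>
    rw [Finset.coe_insert, Set.sUnion_insert, Set.inter_union_distrib_left,
      Finset.sum_insert hEP]
    have hdis' : (P' : Set (Set Ω)).PairwiseDisjoint id :=
      hdis.subset (by simp [Finset.coe_insert, Set.subset_insert])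
    have hU : ⋃₀ (P' : Set (Set Ω)) ∈ C := sUnion_mem hC _
      (fun E' hE' => hmem E' (Finset.mem_insert_of_mem hE'))
    have hdisj : Disjoint (D ∩ E) (D ∩ ⋃₀ (P' : Set (Set Ω))) := by
      apply Set.disjoint_of_subset inter_subset_right inter_subset_right
      rw [Set.disjoint_sUnion_right]
      intro E' hE'
      have hne : E ≠ E' := by rintro rfl; exact hEP hE'
      exact hdis (by simp) (by simp [hE']) hne
    rw [hμ.2 _ (inter_mem hC hD (hmem E (Finset.mem_insert_self _ _)))
        _ (inter_mem hC hD hU) hdisj]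
    rw [ih (fun E' hE' => hmem E' (Finset.mem_insert_of_mem hE')) hdis']

theorem sum_over_partition {D : Set Ω} (hD : D ∈ C) {P : Finset (Set Ω)}
    (hP : IsPartition C P univ) : ∑ E ∈ P, μ (D ∩ E) = μ D := by
  have := sum_inter_sUnion hC hμ hD P hP.1 hP.2.1
  rw [hP.2.2] at this; simpa using this.symm

theorem sum_over_partition' {P : Finset (Set Ω)} (hP : IsPartition C P univ) :
    ∑ E ∈ P, μ E = μ univ := by
  have h := sum_over_partition hC hμ (univ_mem hC) hP
  simpa using h

end FinAdd

section Var
variable (hC : IsSetAlg C)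

theorem isPartition_single {A : Set Ω} (hA : A ∈ C) : IsPartition C {A} A := by
  refine ⟨by simpa using hA, ?_, by simp⟩
  simp [Set.PairwiseDisjoint]

theorem isPartition_pair {A : Set Ω} (hA : A ∈ C) (hAc : Aᶜ ∈ C) :
    IsPartition C ({A, Aᶜ} : Finset (Set Ω)) univ := by
  refine ⟨?_, ?_, ?_⟩
  · intro E hE
    rcases Finset.mem_insert.1 hE with rfl | hE
    · exact hA
    · rcases Finset.mem_singleton.1 hE with rfl; exact hAc
  · intro x hx y hy hxy
    simp only [Finset.coe_insert, Finset.coe_singleton, Set.mem_insert_iff,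
      Set.mem_singleton_iff] at hx hy
    have hd1 : Disjoint A Aᶜ := disjoint_compl_right
    rcases hx with rfl | rfl <;> rcases hy with rfl | rfl
    · exact absurd rfl hxy
    · exact hd1
    · exact hd1.symm
    · exact absurd rfl hxy
  · rw [Finset.coe_insert, Finset.coe_singleton, Set.sUnion_insert, Set.sUnion_singleton,
      Set.union_compl_self]

theorem pvar_nonneg (μ : Set Ω → ℝ) (P : Finset (Set Ω)) : 0 ≤ pvar μ P :=
  Finset.sum_nonneg fun _ _ => abs_nonneg _

theorem pvar_mem_varSums {μ : Set Ω → ℝ} {P : Finset (Set Ω)} {A : Set Ω}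
    (hP : IsPartition C P A) : pvar μ P ∈ varSums C μ A := ⟨P, hP, rfl⟩

theorem totalVar_nonneg (μ : Set Ω → ℝ) (A : Set Ω) : 0 ≤ totalVar C μ A :=
  Real.sSup_nonneg (by rintro x ⟨P, _, rfl⟩; exact pvar_nonneg μ P)

theorem totalVar_le {μ : Set Ω → ℝ} {A : Set Ω} {K : ℝ} (hK : 0 ≤ K)
    (h : ∀ P : Finset (Set Ω), IsPartition C P A → pvar μ P ≤ K) :
    totalVar C μ A ≤ K :=
  Real.sSup_le (by rintro x ⟨P, hP, rfl⟩; exact h P hP) hK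

theorem le_totalVar {μ : Set Ω → ℝ} {A : Set Ω} (hb : BddAbove (varSums C μ A))
    {P : Finset (Set Ω)} (hP : IsPartition C P A) : pvar μ P ≤ totalVar C μ A :=
  le_csSup hb (pvar_mem_varSums hP)

/-- total variation of a positive finitely additive set function. -/
theorem totalVar_of_pos (hC : IsSetAlg C) {μ : Set Ω → ℝ} (hμ : IsFinAdd C μ)
    (hpos : ∀ E ∈ C, 0 ≤ μ E) {A : Set Ω} (hA : A ∈ C) : totalVar C μ A = μ A := by
  have key : ∀ P : Finset (Set Ω), IsPartition C P A → pvar μ P = μ A := by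
    intro P hP
    have hsum : μ (A ∩ ⋃₀ (P : Set (Set Ω))) = ∑ E ∈ P, μ (A ∩ E) :=
      sum_inter_sUnion hC hμ hA P hP.1 hP.2.1
    rw [hP.2.2, Set.inter_self] at hsum
    have hAE : ∀ E ∈ P, A ∩ E = E := by
      intro E hE
      have : E ⊆ A := by rw [← hP.2.2]; exact Set.subset_sUnion_of_mem (by simpa using hE)
      exact Set.inter_eq_self_of_subset_right this
    rw [Finset.sum_congr rfl (fun E hE => by rw [hAE E hE])] at hsum
    unfold pvar
    rw [Finset.sum_congr rfl (fun E hE => abs_of_nonneg (hpos E (hP.1 E hE)))]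
    exact hsum.symm
  apply le_antisymm
  · exact totalVar_le ((key {A} (isPartition_single hA)).symm ▸ pvar_nonneg μ {A})
      (fun P hP => le_of_eq (key P hP))
  · rw [← key {A} (isPartition_single hA)]
    exact le_csSup ⟨μ A, by rintro x ⟨P, hP, rfl⟩; exact le_of_eq (key P hP)⟩
      (pvar_mem_varSums (isPartition_single hA))

theorem bddVar_of_bound {μ : Set Ω → ℝ} {K : ℝ}
    (h : ∀ P : Finset (Set Ω), IsPartition C P univ → pvar μ P ≤ K) : BddVar C μ :=
  ⟨K, by rintro x ⟨P, hP, rfl⟩; exact h P hP⟩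

theorem abs_le_tvNorm (hC : IsSetAlg C) {μ : Set Ω → ℝ} (hb : BddVar C μ)
    {A : Set Ω} (hA : A ∈ C) : |μ A| ≤ tvNorm C μ := by
  classical
  have hP := isPartition_pair hA (compl_mem hC hA)
  have h1 : |μ A| ≤ pvar μ ({A, Aᶜ} : Finset (Set Ω)) := by
    apply Finset.single_le_sum (f := fun E => |μ E|) (fun E _ => abs_nonneg _)
    simp
  exact h1.trans (le_totalVar hb hP)

theorem pvar_add_le (μ ν : Set Ω → ℝ) (P : Finset (Set Ω)) :
    pvar (fun A => μ A + ν A) P ≤ pvar μ P + pvar ν P := by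
  rw [pvar, pvar, pvar, ← Finset.sum_add_distrib]
  exact Finset.sum_le_sum fun E _ => abs_add_le _ _

theorem pvar_le_of_le {μ ν : Set Ω → ℝ} (P : Finset (Set Ω))
    (h : ∀ E ∈ P, |μ E| ≤ |ν E|) : pvar μ P ≤ pvar ν P :=
  Finset.sum_le_sum h

end Var

section BaInf
variable (hC : IsSetAlg C) {l : Set Ω → ℝ} (hl : IsFinAdd C l)
  (hlpos : ∀ A ∈ C, 0 ≤ l A) {μ : Set Ω → ℝ} (hμ : IsFinAdd C μ)
  (hμpos : ∀ A ∈ C, 0 ≤ μ A) {t : ℝ} (ht : 0 ≤ t)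

/-- the defining set of `baInf`. -/
def biSet (C : Set (Set Ω)) (μ ν : Set Ω → ℝ) (A : Set Ω) : Set ℝ :=
  {x | ∃ B ∈ C, x = μ (A ∩ B) + ν (A ∩ Bᶜ)}

theorem baInf_eq (μ ν : Set Ω → ℝ) (A : Set Ω) :
    baInf C μ ν A = sInf (biSet C μ ν A) := rfl

include hC in
theorem biSet_nonempty (μ ν : Set Ω → ℝ) (A : Set Ω) : (biSet C μ ν A).Nonempty :=
  ⟨_, ⟨univ, univ_mem hC, rfl⟩⟩

variable (t) in
/-- `μ ∧ t·l` as a set function. -/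
def tr (C : Set (Set Ω)) (μ l : Set Ω → ℝ) (t : ℝ) : Set Ω → ℝ :=
  fun A => sInf (biSet C μ (fun B => t * l B) A)

theorem tr_eq_baInf (μ l : Set Ω → ℝ) (t : ℝ) :
    tr C μ l t = fun A => baInf C μ (fun B => t * l B) A := rfl

theorem mem_biSet_iff {μ ν : Set Ω → ℝ} {A : Set Ω} {x : ℝ} :
    x ∈ biSet C μ ν A ↔ ∃ B ∈ C, x = μ (A ∩ B) + ν (A ∩ Bᶜ) := Iff.rfl

include hC hl hlpos hμ hμpos ht

theorem biSet_nonneg {A : Set Ω} (hA : A ∈ C) :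
    ∀ x ∈ biSet C μ (fun B => t * l B) A, 0 ≤ x := by
  rintro x ⟨B, hB, rfl⟩
  have h1 : 0 ≤ μ (A ∩ B) := hμpos _ (inter_mem hC hA hB)
  have h2 : 0 ≤ t * l (A ∩ Bᶜ) :=
    mul_nonneg ht (hlpos _ (inter_mem hC hA (compl_mem hC hB)))
  show 0 ≤ μ (A ∩ B) + t * l (A ∩ Bᶜ)
  linarith

theorem biSet_bddBelow {A : Set Ω} (hA : A ∈ C) :
    BddBelow (biSet C μ (fun B => t * l B) A) :=
  ⟨0, fun x hx => biSet_nonneg hC hl hlpos hμ hμpos ht hA x hx⟩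

theorem tr_nonneg {A : Set Ω} (hA : A ∈ C) : 0 ≤ tr C μ l t A := by
  dsimp only [tr]
  exact le_csInf (biSet_nonempty hC _ _ _) (biSet_nonneg hC hl hlpos hμ hμpos ht hA)

theorem tr_le_mu {A : Set Ω} (hA : A ∈ C) : tr C μ l t A ≤ μ A := by
  have hmem : μ (A ∩ univ) + t * l (A ∩ (univ : Set Ω)ᶜ) ∈ biSet C μ (fun B => t * l B) A :=
    ⟨univ, univ_mem hC, rfl⟩
  have h := csInf_le (biSet_bddBelow hC hl hlpos hμ hμpos ht hA) hmem
  dsimp only [tr]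
  simp only [Set.inter_univ, Set.compl_univ, Set.inter_empty, hl.1, mul_zero, add_zero] at h
  exact h

theorem tr_le_nu {A : Set Ω} (hA : A ∈ C) : tr C μ l t A ≤ t * l A := by
  have hmem : μ (A ∩ (∅ : Set Ω)) + t * l (A ∩ (∅ : Set Ω)ᶜ) ∈
      biSet C μ (fun B => t * l B) A := ⟨∅, hC.1, rfl⟩
  have h := csInf_le (biSet_bddBelow hC hl hlpos hμ hμpos ht hA) hmem
  dsimp only [tr]
  simp only [Set.inter_empty, hμ.1, Set.compl_empty, Set.inter_univ, zero_add] at h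
  exact h

theorem tr_exists_lt {A : Set Ω} {ε : ℝ} (hε : 0 < ε) :
    ∃ B ∈ C, μ (A ∩ B) + t * l (A ∩ Bᶜ) < tr C μ l t A + ε := by
  obtain ⟨x, ⟨B, hB, rfl⟩, hx⟩ :=
    Real.lt_sInf_add_pos (biSet_nonempty hC μ (fun B => t * l B) A) hε
  exact ⟨B, hB, hx⟩

theorem tr_finAdd : IsFinAdd C (tr C μ l t) := by
  constructor
  · apply le_antisymm
    · have hmem : μ ((∅ : Set Ω) ∩ univ) + t * l ((∅ : Set Ω) ∩ (univ : Set Ω)ᶜ) ∈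
          biSet C μ (fun B => t * l B) (∅ : Set Ω) := ⟨univ, univ_mem hC, rfl⟩
      have h := csInf_le (biSet_bddBelow hC hl hlpos hμ hμpos ht hC.1) hmem
      simp only [Set.empty_inter, hμ.1, hl.1, mul_zero, add_zero] at h
      exact h
    · exact tr_nonneg hC hl hlpos hμ hμpos ht hC.1
  · intro A hA A' hA' hd
    have hAu : A ∪ A' ∈ C := union_mem hC hA hA'
    apply le_antisymm
    · -- ≤ : combine near optimal sets
      have key : ∀ ε > (0:ℝ), tr C μ l t (A ∪ A') ≤ tr C μ l t A + tr C μ l t A' + ε := by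
        intro ε hε
        obtain ⟨B₁, hB₁, h1⟩ := tr_exists_lt hC hl hlpos hμ hμpos ht (A := A) (half_pos hε)
        obtain ⟨B₂, hB₂, h2⟩ := tr_exists_lt hC hl hlpos hμ hμpos ht (A := A') (half_pos hε)
        set B' := (A ∩ B₁) ∪ (A' ∩ B₂) with hB'def
        have hB' : B' ∈ C := union_mem hC (inter_mem hC hA hB₁) (inter_mem hC hA' hB₂)
        have e1 : (A ∪ A') ∩ B' = (A ∩ B₁) ∪ (A' ∩ B₂) := by
          ext x
          have hdx : x ∈ A → x ∉ A' := fun h h' => Set.disjoint_left.1 hd h h'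
          simp only [hB'def, Set.mem_inter_iff, Set.mem_union]
          tauto
        have e2 : (A ∪ A') ∩ B'ᶜ = (A ∩ B₁ᶜ) ∪ (A' ∩ B₂ᶜ) := by
          ext x
          have hdx : x ∈ A → x ∉ A' := fun h h' => Set.disjoint_left.1 hd h h'
          simp only [hB'def, Set.mem_inter_iff, Set.mem_union, Set.mem_compl_iff,
            not_or, Set.mem_inter_iff, not_and]
          tauto
        have d1 : Disjoint (A ∩ B₁) (A' ∩ B₂) :=
          Set.disjoint_of_subset Set.inter_subset_left Set.inter_subset_left hd
        have d2 : Disjoint (A ∩ B₁ᶜ) (A' ∩ B₂ᶜ) :=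
          Set.disjoint_of_subset Set.inter_subset_left Set.inter_subset_left hd
        have hμadd : μ ((A ∪ A') ∩ B') = μ (A ∩ B₁) + μ (A' ∩ B₂) := by
          rw [e1]
          exact hμ.2 _ (inter_mem hC hA hB₁) _ (inter_mem hC hA' hB₂) d1
        have hladd : l ((A ∪ A') ∩ B'ᶜ) = l (A ∩ B₁ᶜ) + l (A' ∩ B₂ᶜ) := by
          rw [e2]
          exact hl.2 _ (inter_mem hC hA (compl_mem hC hB₁)) _
            (inter_mem hC hA' (compl_mem hC hB₂)) d2
        have hmem : μ ((A ∪ A') ∩ B') + t * l ((A ∪ A') ∩ B'ᶜ) ∈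
            biSet C μ (fun B => t * l B) (A ∪ A') := ⟨B', hB', rfl⟩
        have hle := csInf_le (biSet_bddBelow hC hl hlpos hμ hμpos ht hAu) hmem
        rw [hμadd, hladd] at hle
        have hfin : μ (A ∩ B₁) + μ (A' ∩ B₂) + t * (l (A ∩ B₁ᶜ) + l (A' ∩ B₂ᶜ))
            < tr C μ l t A + tr C μ l t A' + ε := by nlinarith [h1, h2]
        show tr C μ l t (A ∪ A') ≤ tr C μ l t A + tr C μ l t A' + ε
        calc tr C μ l t (A ∪ A') ≤ _ := hle
          _ ≤ tr C μ l t A + tr C μ l t A' + ε := by linarith [hfin]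
      by_contra hcon
      push_neg at hcon
      obtain ⟨ε, hε, hlt⟩ : ∃ ε > (0:ℝ),
          tr C μ l t A + tr C μ l t A' + ε < tr C μ l t (A ∪ A') :=
        ⟨(tr C μ l t (A ∪ A') - (tr C μ l t A + tr C μ l t A')) / 2, by linarith, by linarith⟩
      exact absurd (key ε hε) (by linarith)
    · -- ≥
      have key : ∀ ε > (0:ℝ), tr C μ l t A + tr C μ l t A' ≤ tr C μ l t (A ∪ A') + ε := by
        intro ε hε
        obtain ⟨B, hB, hBlt⟩ := tr_exists_lt hC hl hlpos hμ hμpos ht (A := A ∪ A') hε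
        have e1 : (A ∪ A') ∩ B = (A ∩ B) ∪ (A' ∩ B) := Set.union_inter_distrib_right ..
        have e2 : (A ∪ A') ∩ Bᶜ = (A ∩ Bᶜ) ∪ (A' ∩ Bᶜ) := Set.union_inter_distrib_right ..
        have d1 : Disjoint (A ∩ B) (A' ∩ B) :=
          Set.disjoint_of_subset Set.inter_subset_left Set.inter_subset_left hd
        have d2 : Disjoint (A ∩ Bᶜ) (A' ∩ Bᶜ) :=
          Set.disjoint_of_subset Set.inter_subset_left Set.inter_subset_left hd
        have hμadd : μ ((A ∪ A') ∩ B) = μ (A ∩ B) + μ (A' ∩ B) := by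
          rw [e1]; exact hμ.2 _ (inter_mem hC hA hB) _ (inter_mem hC hA' hB) d1
        have hladd : l ((A ∪ A') ∩ Bᶜ) = l (A ∩ Bᶜ) + l (A' ∩ Bᶜ) := by
          rw [e2]; exact hl.2 _ (inter_mem hC hA (compl_mem hC hB)) _
            (inter_mem hC hA' (compl_mem hC hB)) d2
        have m1 : tr C μ l t A ≤ μ (A ∩ B) + t * l (A ∩ Bᶜ) :=
          csInf_le (biSet_bddBelow hC hl hlpos hμ hμpos ht hA) ⟨B, hB, rfl⟩
        have m2 : tr C μ l t A' ≤ μ (A' ∩ B) + t * l (A' ∩ Bᶜ) :=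
          csInf_le (biSet_bddBelow hC hl hlpos hμ hμpos ht hA') ⟨B, hB, rfl⟩
        rw [hμadd, hladd] at hBlt
        nlinarith
      by_contra hcon
      push_neg at hcon
      have : ∃ ε > (0:ℝ), tr C μ l t (A ∪ A') + ε < tr C μ l t A + tr C μ l t A' :=
        ⟨(tr C μ l t A + tr C μ l t A' - tr C μ l t (A ∪ A')) / 2, by linarith, by linarith⟩
      obtain ⟨ε, hε, hlt⟩ := this
      exact absurd (key ε hε) (by linarith)

theorem tr_mono {t' : ℝ} (htt' : t ≤ t') {A : Set Ω} (hA : A ∈ C) :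
    tr C μ l t A ≤ tr C μ l t' A := by
  show tr C μ l t A ≤ sInf (biSet C μ (fun B => t' * l B) A)
  apply le_csInf (biSet_nonempty hC _ _ _)
  rintro x ⟨B, hB, rfl⟩
  have h1 : tr C μ l t A ≤ μ (A ∩ B) + t * l (A ∩ Bᶜ) :=
    csInf_le (biSet_bddBelow hC hl hlpos hμ hμpos ht hA) ⟨B, hB, rfl⟩
  have h2 : t * l (A ∩ Bᶜ) ≤ t' * l (A ∩ Bᶜ) :=
    mul_le_mul_of_nonneg_right htt' (hlpos _ (inter_mem hC hA (compl_mem hC hB)))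
  show tr C μ l t A ≤ μ (A ∩ B) + t' * l (A ∩ Bᶜ)
  linarith

theorem tr_tvNorm : tvNorm C (tr C μ l t) = tr C μ l t univ :=
  totalVar_of_pos hC (tr_finAdd hC hl hlpos hμ hμpos ht)
    (fun E hE => tr_nonneg hC hl hlpos hμ hμpos ht hE) (univ_mem hC)

end BaInf

section FinAddAlg

theorem finAdd_add {μ ν : Set Ω → ℝ} (hμ : IsFinAdd C μ) (hν : IsFinAdd C ν) :
    IsFinAdd C (fun A => μ A + ν A) := by
  refine ⟨by simp [hμ.1, hν.1], fun A hA B hB hd => ?_⟩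
  simp only [hμ.2 A hA B hB hd, hν.2 A hA B hB hd]; ring

theorem finAdd_sub {μ ν : Set Ω → ℝ} (hμ : IsFinAdd C μ) (hν : IsFinAdd C ν) :
    IsFinAdd C (fun A => μ A - ν A) := by
  refine ⟨by simp [hμ.1, hν.1], fun A hA B hB hd => ?_⟩
  simp only [hμ.2 A hA B hB hd, hν.2 A hA B hB hd]; ring

theorem finAdd_smul {μ : Set Ω → ℝ} (c : ℝ) (hμ : IsFinAdd C μ) :
    IsFinAdd C (fun A => c * μ A) := by
  refine ⟨by simp [hμ.1], fun A hA B hB hd => ?_⟩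
  simp only [hμ.2 A hA B hB hd]; ring

theorem finAdd_sum {ι : Type*} (s : Finset ι) (w : ι → ℝ) (μ : ι → Set Ω → ℝ)
    (hμ : ∀ i ∈ s, IsFinAdd C (μ i)) :
    IsFinAdd C (fun A => ∑ i ∈ s, w i * μ i A) := by
  classical
  induction s using Finset.induction_on with
  | empty => exact ⟨by simp, fun A hA B hB hd => by simp⟩
  | @insert i s' his ih =>
    have h1 := finAdd_smul (C := C) (w i) (hμ i (Finset.mem_insert_self _ _))
    have h2 := ih (fun j hj => hμ j (Finset.mem_insert_of_mem hj))
    have := finAdd_add (C := C) h1 h2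
    refine ⟨?_, ?_⟩
    · simpa [Finset.sum_insert his] using this.1
    · intro A hA B hB hd
      have := this.2 A hA B hB hd
      simpa [Finset.sum_insert his] using this

/-- restriction of a set function to `B`. -/
def rstr (μ : Set Ω → ℝ) (B : Set Ω) : Set Ω → ℝ := fun A => μ (B ∩ A)

theorem rstr_finAdd (hC : IsSetAlg C) {μ : Set Ω → ℝ} (hμ : IsFinAdd C μ) {B : Set Ω}
    (hB : B ∈ C) : IsFinAdd C (rstr μ B) := by
  refine ⟨by simp [rstr, hμ.1], fun A hA A' hA' hd => ?_⟩
  show μ (B ∩ (A ∪ A')) = μ (B ∩ A) + μ (B ∩ A')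
  rw [Set.inter_union_distrib_left]
  exact hμ.2 _ (inter_mem hC hB hA) _ (inter_mem hC hB hA')
    (Set.disjoint_of_subset inter_subset_right inter_subset_right hd)

end FinAddAlg

section Compare
variable (hC : IsSetAlg C) {l : Set Ω → ℝ} (hl : IsFinAdd C l)
  (hlpos : ∀ A ∈ C, 0 ≤ l A) {μ : Set Ω → ℝ} (hμ : IsFinAdd C μ)
  (hμpos : ∀ A ∈ C, 0 ≤ μ A)

include hC hl hlpos hμ hμpos

theorem tr_exists_opt {t : ℝ} (ht : 0 ≤ t) {ε : ℝ} (hε : 0 < ε) :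
    ∃ B ∈ C, μ B + t * l Bᶜ < tr C μ l t univ + ε := by
  obtain ⟨B, hB, hlt⟩ := tr_exists_lt hC hl hlpos hμ hμpos ht (A := univ) hε
  refine ⟨B, hB, ?_⟩
  simpa [Set.univ_inter] using hlt

/-- Key comparison: a near-optimal set at a high level `t` makes the restriction of `μ`
close to the truncation at a lower level `s`. -/
theorem rstr_sub_tr_le {s t ε : ℝ} (hs : 0 ≤ s) (hst : s ≤ t) (hε : 0 ≤ ε)
    {B : Set Ω} (hB : B ∈ C) (hopt : μ B + t * l Bᶜ ≤ tr C μ l t univ + ε) :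
    tvNorm C (fun A => μ (B ∩ A) - tr C μ l s A) ≤
      (tr C μ l t univ - tr C μ l s univ) + ε + 2 * (s * l Bᶜ) := by
  have ht : 0 ≤ t := hs.trans hst
  have htrs := tr_finAdd hC hl hlpos hμ hμpos hs
  have hBc := compl_mem hC hB
  have hKnn : 0 ≤ (tr C μ l t univ - tr C μ l s univ) + ε + 2 * (s * l Bᶜ) := by
    have h1 := tr_mono hC hl hlpos hμ hμpos hs hst (univ_mem hC)
    have h2 : 0 ≤ s * l Bᶜ := mul_nonneg hs (hlpos _ hBc)
    linarith
  apply totalVar_le hKnn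
  intro P hP
  have hterm : ∀ E ∈ P, |μ (B ∩ E) - tr C μ l s E| ≤
      (μ (B ∩ E) - tr C μ l s (B ∩ E)) + tr C μ l s (Bᶜ ∩ E) := by
    intro E hE
    have hEC := hP.1 E hE
    have hBE := inter_mem hC hB hEC
    have hBcE := inter_mem hC hBc hEC
    have hadd : tr C μ l s E = tr C μ l s (B ∩ E) + tr C μ l s (Bᶜ ∩ E) := by
      have hE2 : E = (B ∩ E) ∪ (Bᶜ ∩ E) := by
        rw [← Set.union_inter_distrib_right, Set.union_compl_self, Set.univ_inter]
      conv_lhs => rw [hE2]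
      exact htrs.2 _ hBE _ hBcE (Set.disjoint_of_subset inter_subset_left inter_subset_left
        disjoint_compl_right)
    have hx : 0 ≤ μ (B ∩ E) - tr C μ l s (B ∩ E) := by
      have := tr_le_mu hC hl hlpos hμ hμpos hs hBE; linarith
    have hy : 0 ≤ tr C μ l s (Bᶜ ∩ E) := tr_nonneg hC hl hlpos hμ hμpos hs hBcE
    rw [hadd]
    rw [abs_le]
    constructor <;> linarith
  have hsum := Finset.sum_le_sum hterm
  have e1 : ∑ E ∈ P, μ (B ∩ E) = μ B := sum_over_partition hC hμ hB hP
  have e2 : ∑ E ∈ P, tr C μ l s (B ∩ E) = tr C μ l s B :=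
    sum_over_partition hC htrs hB hP
  have e3 : ∑ E ∈ P, tr C μ l s (Bᶜ ∩ E) = tr C μ l s Bᶜ :=
    sum_over_partition hC htrs hBc hP
  have hle1 : pvar (fun A => μ (B ∩ A) - tr C μ l s A) P ≤
      μ B - tr C μ l s B + tr C μ l s Bᶜ := by
    unfold pvar
    calc ∑ E ∈ P, |μ (B ∩ E) - tr C μ l s E|
        ≤ ∑ E ∈ P, ((μ (B ∩ E) - tr C μ l s (B ∩ E)) + tr C μ l s (Bᶜ ∩ E)) := hsum
      _ = μ B - tr C μ l s B + tr C μ l s Bᶜ := by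
          rw [Finset.sum_add_distrib, Finset.sum_sub_distrib, e1, e2, e3]
  have hsplit : tr C μ l s univ = tr C μ l s B + tr C μ l s Bᶜ := by
    have : (univ : Set Ω) = B ∪ Bᶜ := (Set.union_compl_self B).symm
    rw [this]
    exact htrs.2 _ hB _ hBc disjoint_compl_right
  have hnu : tr C μ l s Bᶜ ≤ s * l Bᶜ := tr_le_nu hC hl hlpos hμ hμpos hs hBc
  have hmuB : μ B ≤ tr C μ l t univ + ε - t * l Bᶜ := by linarith
  have hlB : 0 ≤ t * l Bᶜ := mul_nonneg ht (hlpos _ hBc)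
  calc pvar (fun A => μ (B ∩ A) - tr C μ l s A) P
      ≤ μ B - tr C μ l s B + tr C μ l s Bᶜ := hle1
    _ ≤ (tr C μ l t univ - tr C μ l s univ) + ε + 2 * (s * l Bᶜ) := by linarith

theorem opt_l_compl_le {t ε : ℝ} (ht : 0 < t) (hε : 0 ≤ ε)
    {B : Set Ω} (hB : B ∈ C) (hopt : μ B + t * l Bᶜ ≤ tr C μ l t univ + ε) :
    l Bᶜ ≤ (μ univ + ε) / t := by
  have h1 : tr C μ l t univ ≤ μ univ := tr_le_mu hC hl hlpos hμ hμpos ht.le (univ_mem hC)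
  have h2 : 0 ≤ μ B := hμpos _ hB
  have h3 : t * l Bᶜ ≤ μ univ + ε := by linarith
  calc l Bᶜ = (t * l Bᶜ) / t := by field_simp
    _ ≤ (μ univ + ε) / t := by gcongr

end Compare

section Qmach
variable (hC : IsSetAlg C) {l : Set Ω → ℝ} (hl : IsFinAdd C l)
  (hlpos : ∀ A ∈ C, 0 ≤ l A)

/-- partition sum of squares (quadratic seminorm candidate). -/
def psq (l : Set Ω → ℝ) (τ : Set Ω → ℝ) (P : Finset (Set Ω)) : ℝ :=
  ∑ E ∈ P, (τ E) ^ 2 / l E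

variable (C) in
def Qset (l τ : Set Ω → ℝ) : Set ℝ :=
  {x | ∃ P : Finset (Set Ω), IsPartition C P univ ∧ x = psq l τ P}

variable (C) in
def Qv (l τ : Set Ω → ℝ) : ℝ := sSup (Qset C l τ)

variable (C) in
/-- `τ` dominated by `T·l` on `C`. -/
def Dm (l : Set Ω → ℝ) (τ : Set Ω → ℝ) (T : ℝ) : Prop := ∀ A ∈ C, |τ A| ≤ T * l A

theorem Dm.sub {τ σ : Set Ω → ℝ} {T S : ℝ} (hτ : Dm C l τ T) (hσ : Dm C l σ S) :
    Dm C l (fun A => τ A - σ A) (T + S) := by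
  intro A hA
  calc |τ A - σ A| ≤ |τ A| + |σ A| := abs_sub _ _
    _ ≤ T * l A + S * l A := add_le_add (hτ A hA) (hσ A hA)
    _ = (T + S) * l A := by ring

theorem Dm.add {τ σ : Set Ω → ℝ} {T S : ℝ} (hτ : Dm C l τ T) (hσ : Dm C l σ S) :
    Dm C l (fun A => τ A + σ A) (T + S) := by
  intro A hA
  calc |τ A + σ A| ≤ |τ A| + |σ A| := abs_add_le _ _
    _ ≤ T * l A + S * l A := add_le_add (hτ A hA) (hσ A hA)
    _ = (T + S) * l A := by ring

theorem Dm.half_add {τ σ : Set Ω → ℝ} {T : ℝ} (hτ : Dm C l τ T) (hσ : Dm C l σ T) :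
    Dm C l (fun A => (τ A + σ A) / 2) T := by
  intro A hA
  rw [abs_div, abs_two]
  calc |τ A + σ A| / 2 ≤ (|τ A| + |σ A|) / 2 := by gcongr; exact abs_add_le _ _
    _ ≤ (T * l A + T * l A) / 2 := by gcongr <;> [exact hτ A hA; exact hσ A hA]
    _ = T * l A := by ring

theorem Dm.of_pos_le {τ : Set Ω → ℝ} {T : ℝ}
    (hpos : ∀ A ∈ C, 0 ≤ τ A) (hle : ∀ A ∈ C, τ A ≤ T * l A) : Dm C l τ T := by
  intro A hA
  rw [abs_of_nonneg (hpos A hA)]; exact hle A hA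

theorem Dm.convex {ι : Type*} (s : Finset ι) (w : ι → ℝ) (μ : ι → Set Ω → ℝ) {T : ℝ}
    (hw : ∀ i ∈ s, 0 ≤ w i) (hw1 : ∑ i ∈ s, w i = 1)
    (hμ : ∀ i ∈ s, Dm C l (μ i) T) : Dm C l (fun A => ∑ i ∈ s, w i * μ i A) T := by
  intro A hA
  calc |∑ i ∈ s, w i * μ i A| ≤ ∑ i ∈ s, |w i * μ i A| := Finset.abs_sum_le_sum_abs _ _
    _ ≤ ∑ i ∈ s, w i * (T * l A) := by
        apply Finset.sum_le_sum
        intro i hi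
        rw [abs_mul, abs_of_nonneg (hw i hi)]
        exact mul_le_mul_of_nonneg_left (hμ i hi A hA) (hw i hi)
    _ = T * l A := by rw [← Finset.sum_mul, hw1, one_mul]

/-- two-variable Cauchy–Schwarz for quotients, with junk division. -/
theorem cs2 {a₁ a₂ s₁ s₂ : ℝ} (h₁ : 0 ≤ s₁) (h₂ : 0 ≤ s₂)
    (hz₁ : s₁ = 0 → a₁ = 0) (hz₂ : s₂ = 0 → a₂ = 0) :
    (a₁ + a₂) ^ 2 / (s₁ + s₂) ≤ a₁ ^ 2 / s₁ + a₂ ^ 2 / s₂ := by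
  rcases eq_or_lt_of_le h₁ with h₁' | h₁'
  · rw [hz₁ h₁'.symm, ← h₁']; simp
  rcases eq_or_lt_of_le h₂ with h₂' | h₂'
  · rw [hz₂ h₂'.symm, ← h₂']; simp
  rw [div_add_div _ _ (ne_of_gt h₁') (ne_of_gt h₂'),
    div_le_div_iff₀ (by positivity) (by positivity)]
  nlinarith [sq_nonneg (a₁ * s₂ - a₂ * s₁), mul_pos h₁' h₂']

/-- finset Cauchy–Schwarz for quotients. -/
theorem csn {ι : Type*} (s : Finset ι) (a f : ι → ℝ) (hf : ∀ i ∈ s, 0 ≤ f i)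
    (hz : ∀ i ∈ s, f i = 0 → a i = 0) :
    (∑ i ∈ s, a i) ^ 2 / (∑ i ∈ s, f i) ≤ ∑ i ∈ s, a i ^ 2 / f i := by
  classical
  induction s using Finset.induction_on with
  | empty => simp
  | @insert i s' his ih =>
    rw [Finset.sum_insert his, Finset.sum_insert his, Finset.sum_insert his]
    have hf' : ∀ j ∈ s', 0 ≤ f j := fun j hj => hf j (Finset.mem_insert_of_mem hj)
    have hz' : ∀ j ∈ s', f j = 0 → a j = 0 := fun j hj => hz j (Finset.mem_insert_of_mem hj)
    have step : (a i + ∑ j ∈ s', a j) ^ 2 / (f i + ∑ j ∈ s', f j) ≤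
        a i ^ 2 / f i + (∑ j ∈ s', a j) ^ 2 / (∑ j ∈ s', f j) := by
      apply cs2 (hf i (Finset.mem_insert_self _ _)) (Finset.sum_nonneg hf')
        (hz i (Finset.mem_insert_self _ _))
      intro hsum
      have : ∀ j ∈ s', f j = 0 := by
        intro j hj
        exact le_antisymm (hsum ▸ Finset.single_le_sum hf' hj) (hf' j hj)
      exact Finset.sum_eq_zero fun j hj => hz' j hj (this j hj)
    exact step.trans (by linarith [ih hf' hz'])

/-- sum over an image of sets, when collisions can only happen at `∅` and `g ∅ = 0`. -/
theorem sum_image_setfun {α : Type*} [DecidableEq α] (t : Finset α) (f : α → Set Ω)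
    (g : Set Ω → ℝ) (hg : g ∅ = 0)
    (hinj : ∀ a ∈ t, ∀ b ∈ t, f a = f b → f a ≠ ∅ → a = b) :
    ∑ x ∈ t.image f, g x = ∑ a ∈ t, g (f a) := by
  classical
  set t' := t.filter (fun a => f a ≠ ∅) with ht'
  have h1 : ∑ x ∈ t'.image f, g x = ∑ x ∈ t.image f, g x := by
    apply Finset.sum_subset (Finset.image_subset_image (Finset.filter_subset _ _))
    intro x hx hx'
    obtain ⟨a, ha, rfl⟩ := Finset.mem_image.1 hx
    by_cases hfa : f a = ∅
    · rw [hfa]; exact hg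
    · exact absurd (Finset.mem_image_of_mem f (Finset.mem_filter.2 ⟨ha, hfa⟩)) hx'
  have h2 : ∑ x ∈ t'.image f, g x = ∑ a ∈ t', g (f a) := by
    apply Finset.sum_image
    intro a ha b hb hab
    have ha' := Finset.mem_filter.1 ha
    exact hinj a ha'.1 b (Finset.mem_filter.1 hb).1 hab ha'.2
  have h3 : ∑ a ∈ t', g (f a) = ∑ a ∈ t, g (f a) := by
    apply Finset.sum_subset (Finset.filter_subset _ _)
    intro a ha ha'
    have : f a = ∅ := by
      by_contra hne
      exact ha' (Finset.mem_filter.2 ⟨ha, hne⟩)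
    rw [this]; exact hg
  rw [← h1, h2, h3]

/-- common refinement of two partitions. -/
def cref (P₁ P₂ : Finset (Set Ω)) : Finset (Set Ω) :=
  (P₁ ×ˢ P₂).image (fun p => p.1 ∩ p.2)

include hC in
theorem isPartition_cref {P₁ P₂ : Finset (Set Ω)} (h₁ : IsPartition C P₁ univ)
    (h₂ : IsPartition C P₂ univ) : IsPartition C (cref P₁ P₂) univ := by
  classical
  refine ⟨?_, ?_, ?_⟩
  · intro E hE
    obtain ⟨p, hp, rfl⟩ := Finset.mem_image.1 hE
    have hp' := Finset.mem_product.1 hp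
    exact inter_mem hC (h₁.1 _ hp'.1) (h₂.1 _ hp'.2)
  · intro x hx y hy hxy
    simp only [cref, Finset.coe_image, Set.mem_image] at hx hy
    obtain ⟨p, hp, rfl⟩ := hx
    obtain ⟨q, hq, rfl⟩ := hy
    have hp' := Finset.mem_product.1 (by exact_mod_cast hp)
    have hq' := Finset.mem_product.1 (by exact_mod_cast hq)
    by_cases h : p.1 = q.1
    · have h2 : p.2 ≠ q.2 := by
        intro h2; exact hxy (by rw [h, h2])
      have : Disjoint p.2 q.2 := h₂.2.1 (by simpa using hp'.2) (by simpa using hq'.2) h2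
      exact Set.disjoint_of_subset inter_subset_right inter_subset_right this
    · have : Disjoint p.1 q.1 := h₁.2.1 (by simpa using hp'.1) (by simpa using hq'.1) h
      exact Set.disjoint_of_subset inter_subset_left inter_subset_left this
  · apply Set.eq_univ_of_forall
    intro x
    have hx₁ : x ∈ ⋃₀ (P₁ : Set (Set Ω)) := h₁.2.2.symm ▸ Set.mem_univ x
    have hx₂ : x ∈ ⋃₀ (P₂ : Set (Set Ω)) := h₂.2.2.symm ▸ Set.mem_univ x
    obtain ⟨E₁, hE₁, hxE₁⟩ := hx₁
    obtain ⟨E₂, hE₂, hxE₂⟩ := hx₂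
    refine ⟨E₁ ∩ E₂, ?_, ⟨hxE₁, hxE₂⟩⟩
    simp only [cref, Finset.coe_image, Set.mem_image]
    exact ⟨(E₁, E₂), by exact_mod_cast Finset.mem_product.2 ⟨by simpa using hE₁, by simpa using hE₂⟩, rfl⟩

/-- the square sum over the common refinement as a double sum. -/
theorem psq_cref_eq {τ : Set Ω → ℝ} (hτ0 : τ ∅ = 0) {P₁ P₂ : Finset (Set Ω)}
    (h₁ : IsPartition C P₁ univ) (h₂ : IsPartition C P₂ univ) :
    psq l τ (cref P₁ P₂) = ∑ E₁ ∈ P₁, ∑ E₂ ∈ P₂, (τ (E₁ ∩ E₂)) ^ 2 / l (E₁ ∩ E₂) := by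
  classical
  have hdedup : ∀ p ∈ P₁ ×ˢ P₂, ∀ q ∈ P₁ ×ˢ P₂,
      (p.1 ∩ p.2 : Set Ω) = q.1 ∩ q.2 → (p.1 ∩ p.2 : Set Ω) ≠ ∅ → p = q := by
    intro p hp q hq heq hne
    have hp' := Finset.mem_product.1 hp
    have hq' := Finset.mem_product.1 hq
    have hc1 : p.1 = q.1 := by
      by_contra hne1
      have hd := h₁.2.1 (Finset.mem_coe.2 hp'.1) (Finset.mem_coe.2 hq'.1) hne1
      apply hne
      apply Set.eq_empty_iff_forall_notMem.2
      intro x hx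
      have hx' : x ∈ q.1 ∩ q.2 := heq ▸ hx
      exact Set.disjoint_left.1 hd hx.1 hx'.1
    have hc2 : p.2 = q.2 := by
      by_contra hne2
      have hd := h₂.2.1 (Finset.mem_coe.2 hp'.2) (Finset.mem_coe.2 hq'.2) hne2
      apply hne
      apply Set.eq_empty_iff_forall_notMem.2
      intro x hx
      have hx' : x ∈ q.1 ∩ q.2 := heq ▸ hx
      exact Set.disjoint_left.1 hd hx.2 hx'.2
    exact Prod.ext hc1 hc2
  unfold psq cref
  rw [sum_image_setfun (P₁ ×ˢ P₂) (fun p => p.1 ∩ p.2) (fun x => τ x ^ 2 / l x)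
    (by simp [hτ0]) hdedup]
  rw [Finset.sum_product]

include hC hl hlpos in
theorem psq_cref_ge₁ {τ : Set Ω → ℝ} (hτ : IsFinAdd C τ) {T : ℝ} (hD : Dm C l τ T)
    {P₁ P₂ : Finset (Set Ω)} (h₁ : IsPartition C P₁ univ) (h₂ : IsPartition C P₂ univ) :
    psq l τ P₁ ≤ psq l τ (cref P₁ P₂) := by
  rw [psq_cref_eq hτ.1 h₁ h₂]
  apply Finset.sum_le_sum
  intro E₁ hE₁
  have ha : τ E₁ = ∑ E₂ ∈ P₂, τ (E₁ ∩ E₂) := (sum_over_partition hC hτ (h₁.1 E₁ hE₁) h₂).symm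
  have hf : l E₁ = ∑ E₂ ∈ P₂, l (E₁ ∩ E₂) := (sum_over_partition hC hl (h₁.1 E₁ hE₁) h₂).symm
  rw [ha, hf]
  apply csn
  · intro E₂ h; exact hlpos _ (inter_mem hC (h₁.1 _ hE₁) (h₂.1 _ h))
  · intro E₂ h h0
    have hd := hD _ (inter_mem hC (h₁.1 _ hE₁) (h₂.1 _ h))
    rw [h0, mul_zero] at hd
    exact abs_eq_zero.1 (le_antisymm hd (abs_nonneg _))

include hC hl hlpos in
theorem psq_cref_ge₂ {τ : Set Ω → ℝ} (hτ : IsFinAdd C τ) {T : ℝ} (hD : Dm C l τ T)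
    {P₁ P₂ : Finset (Set Ω)} (h₁ : IsPartition C P₁ univ) (h₂ : IsPartition C P₂ univ) :
    psq l τ P₂ ≤ psq l τ (cref P₁ P₂) := by
  rw [psq_cref_eq hτ.1 h₁ h₂, Finset.sum_comm]
  apply Finset.sum_le_sum
  intro E₂ hE₂
  have hcomm : ∀ E₁ ∈ P₁, E₁ ∩ E₂ = E₂ ∩ E₁ := fun E₁ _ => Set.inter_comm _ _
  rw [Finset.sum_congr rfl (fun E₁ h => by rw [hcomm E₁ h])]
  have ha : τ E₂ = ∑ E₁ ∈ P₁, τ (E₂ ∩ E₁) := (sum_over_partition hC hτ (h₂.1 E₂ hE₂) h₁).symm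
  have hf : l E₂ = ∑ E₁ ∈ P₁, l (E₂ ∩ E₁) := (sum_over_partition hC hl (h₂.1 E₂ hE₂) h₁).symm
  rw [ha, hf]
  apply csn
  · intro E₁ h; exact hlpos _ (inter_mem hC (h₂.1 _ hE₂) (h₁.1 _ h))
  · intro E₁ h h0
    have hd := hD _ (inter_mem hC (h₂.1 _ hE₂) (h₁.1 _ h))
    rw [h0, mul_zero] at hd
    exact abs_eq_zero.1 (le_antisymm hd (abs_nonneg _))

include hlpos in
theorem psq_nonneg {τ : Set Ω → ℝ} {P : Finset (Set Ω)} (hP : IsPartition C P univ) :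
    0 ≤ psq l τ P :=
  Finset.sum_nonneg fun E hE => div_nonneg (sq_nonneg _) (hlpos _ (hP.1 E hE))

include hC hlpos in
theorem Qv_nonneg (τ : Set Ω → ℝ) : 0 ≤ Qv C l τ :=
  Real.sSup_nonneg (by rintro x ⟨P, hP, rfl⟩; exact psq_nonneg hlpos hP)

include hC in
theorem Qset_nonempty (τ : Set Ω → ℝ) : (Qset C l τ).Nonempty :=
  ⟨_, {univ}, isPartition_single (univ_mem hC), rfl⟩

include hC hl hlpos in
theorem pvar_le_of_dm {τ : Set Ω → ℝ} {T : ℝ} (hD : Dm C l τ T)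
    {P : Finset (Set Ω)} (hP : IsPartition C P univ) : pvar τ P ≤ T * l univ := by
  have : pvar τ P ≤ ∑ E ∈ P, T * l E :=
    Finset.sum_le_sum fun E hE => hD E (hP.1 E hE)
  rw [← Finset.mul_sum, sum_over_partition' hC hl hP] at this
  exact this

include hlpos in
theorem psq_le_T_pvar {τ : Set Ω → ℝ} {T : ℝ} (hT : 0 ≤ T) (hD : Dm C l τ T)
    {P : Finset (Set Ω)} (hP : IsPartition C P univ) : psq l τ P ≤ T * pvar τ P := by
  unfold psq pvar
  rw [Finset.mul_sum]
  apply Finset.sum_le_sum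
  intro E hE
  have hd := hD E (hP.1 E hE)
  rcases eq_or_lt_of_le (hlpos E (hP.1 E hE)) with h0 | h0
  · have hτ0 : τ E = 0 := by
      rw [← h0, mul_zero] at hd
      exact abs_eq_zero.1 (le_antisymm hd (abs_nonneg _))
    simp [hτ0]
  · rw [div_le_iff₀ h0]
    have h1 : τ E ^ 2 = |τ E| * |τ E| := by rw [← sq_abs]; ring
    rw [h1]
    calc |τ E| * |τ E| ≤ |τ E| * (T * l E) :=
          mul_le_mul_of_nonneg_left hd (abs_nonneg _)
      _ = T * |τ E| * l E := by ring

include hC hl hlpos in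
theorem Qv_bddAbove {τ : Set Ω → ℝ} {T : ℝ} (hT : 0 ≤ T) (hD : Dm C l τ T) :
    BddAbove (Qset C l τ) := by
  refine ⟨T * (T * l univ), ?_⟩
  rintro x ⟨P, hP, rfl⟩
  calc psq l τ P ≤ T * pvar τ P := psq_le_T_pvar hlpos hT hD hP
    _ ≤ T * (T * l univ) :=
        mul_le_mul_of_nonneg_left (pvar_le_of_dm hC hl hlpos hD hP) hT

include hC hl hlpos in
theorem Qv_le {τ : Set Ω → ℝ} {T : ℝ} (hT : 0 ≤ T) (hD : Dm C l τ T) :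
    Qv C l τ ≤ T * (T * l univ) := by
  apply Real.sSup_le
  · rintro x ⟨P, hP, rfl⟩
    calc psq l τ P ≤ T * pvar τ P := psq_le_T_pvar hlpos hT hD hP
      _ ≤ T * (T * l univ) :=
          mul_le_mul_of_nonneg_left (pvar_le_of_dm hC hl hlpos hD hP) hT
  · have h0 : 0 ≤ l univ := hlpos _ (univ_mem hC)
    positivity

theorem le_Qv {τ : Set Ω → ℝ} (hb : BddAbove (Qset C l τ)) {P : Finset (Set Ω)}
    (hP : IsPartition C P univ) : psq l τ P ≤ Qv C l τ :=
  le_csSup hb ⟨P, hP, rfl⟩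

include hC hl hlpos in
/-- partition variation controlled by the square sum (Cauchy–Schwarz). -/
theorem pvar_le_sqrt_psq {τ : Set Ω → ℝ} {T : ℝ} (hD : Dm C l τ T)
    {P : Finset (Set Ω)} (hP : IsPartition C P univ) :
    pvar τ P ≤ Real.sqrt (psq l τ P * l univ) := by
  have key : pvar τ P ^ 2 ≤ psq l τ P * l univ := by
    have hcs := Finset.sum_mul_sq_le_sq_mul_sq P
      (fun E => |τ E| / Real.sqrt (l E)) (fun E => Real.sqrt (l E))
    have he : ∀ E ∈ P, |τ E| / Real.sqrt (l E) * Real.sqrt (l E) = |τ E| := by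
      intro E hE
      rcases eq_or_lt_of_le (hlpos E (hP.1 E hE)) with h0 | h0
      · have hτ0 : τ E = 0 := by
          have hd := hD E (hP.1 E hE)
          rw [← h0, mul_zero] at hd
          exact abs_eq_zero.1 (le_antisymm hd (abs_nonneg _))
        simp [hτ0]
      · field_simp
    have he2 : ∀ E ∈ P, (|τ E| / Real.sqrt (l E)) ^ 2 = τ E ^ 2 / l E := by
      intro E hE
      rw [div_pow, sq_abs, Real.sq_sqrt (hlpos E (hP.1 E hE))]
    have he3 : ∀ E ∈ P, (Real.sqrt (l E)) ^ 2 = l E := by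
      intro E hE
      exact Real.sq_sqrt (hlpos E (hP.1 E hE))
    rw [Finset.sum_congr rfl he, Finset.sum_congr rfl he2, Finset.sum_congr rfl he3] at hcs
    rw [sum_over_partition' hC hl hP] at hcs
    exact hcs
  have h1 : 0 ≤ psq l τ P * l univ := by
    have := psq_nonneg (C := C) hlpos (τ := τ) hP
    have := hlpos _ (univ_mem hC)
    positivity
  calc pvar τ P = Real.sqrt (pvar τ P ^ 2) := by
        rw [Real.sqrt_sq (pvar_nonneg τ P)]
    _ ≤ Real.sqrt (psq l τ P * l univ) := Real.sqrt_le_sqrt key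

include hC hl hlpos in
theorem tvNorm_le_sqrt_Qv {τ : Set Ω → ℝ} {T : ℝ} (hT : 0 ≤ T) (hD : Dm C l τ T) :
    tvNorm C τ ≤ Real.sqrt (Qv C l τ * l univ) := by
  apply totalVar_le (Real.sqrt_nonneg _)
  intro P hP
  calc pvar τ P ≤ Real.sqrt (psq l τ P * l univ) := pvar_le_sqrt_psq hC hl hlpos hD hP
    _ ≤ Real.sqrt (Qv C l τ * l univ) := by
        apply Real.sqrt_le_sqrt
        exact mul_le_mul_of_nonneg_right (le_Qv (Qv_bddAbove hC hl hlpos hT hD) hP)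
          (hlpos _ (univ_mem hC))

include hC hl hlpos in
/-- near-parallelogram inequality for `Qv`. -/
theorem Qv_diff_le {x y : Set Ω → ℝ} {T : ℝ} (hT : 0 ≤ T)
    (hx : IsFinAdd C x) (hy : IsFinAdd C y) (hDx : Dm C l x T) (hDy : Dm C l y T) :
    Qv C l (fun A => x A - y A) ≤
      2 * Qv C l x + 2 * Qv C l y - 4 * Qv C l (fun A => (x A + y A) / 2) := by
  have hdiff : IsFinAdd C (fun A => x A - y A) := finAdd_sub hx hy
  have hDdiff : Dm C l (fun A => x A - y A) (T + T) := hDx.sub hDy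
  have hmid : IsFinAdd C (fun A => (x A + y A) / 2) := by
    have h := finAdd_smul (C := C) (2⁻¹) (finAdd_add hx hy)
    refine ⟨by simpa using h.1, fun A hA B hB hd => ?_⟩
    have := h.2 A hA B hB hd
    simp only at this ⊢
    rw [div_eq_inv_mul, div_eq_inv_mul, div_eq_inv_mul]
    exact this
  have hDmid : Dm C l (fun A => (x A + y A) / 2) T := hDx.half_add hDy
  apply le_of_forall_pos_le_add
  intro ε hε
  obtain ⟨a, ⟨P, hP, rfl⟩, ha⟩ := exists_lt_of_lt_csSup (Qset_nonempty hC _)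
    (show Qv C l (fun A => x A - y A) - ε/5 < Qv C l (fun A => x A - y A) by linarith)
  obtain ⟨b, ⟨P', hP', rfl⟩, hb⟩ := exists_lt_of_lt_csSup (Qset_nonempty hC _)
    (show Qv C l (fun A => (x A + y A) / 2) - ε/5 < Qv C l (fun A => (x A + y A) / 2) by linarith)
  set R := cref P P' with hR
  have hRP : IsPartition C R univ := isPartition_cref hC hP hP'
  have h1 : psq l (fun A => x A - y A) P ≤ psq l (fun A => x A - y A) R :=
    psq_cref_ge₁ hC hl hlpos hdiff hDdiff hP hP'
  have h2 : psq l (fun A => (x A + y A) / 2) P' ≤ psq l (fun A => (x A + y A) / 2) R :=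
    psq_cref_ge₂ hC hl hlpos hmid hDmid hP hP'
  have hiden : psq l (fun A => x A - y A) R =
      2 * psq l x R + 2 * psq l y R - 4 * psq l (fun A => (x A + y A) / 2) R := by
    unfold psq
    have hterm : ∀ E ∈ R, ((fun A => x A - y A) E) ^ 2 / l E =
        2 * (x E ^ 2 / l E) + 2 * (y E ^ 2 / l E) -
          4 * (((fun A => (x A + y A) / 2) E) ^ 2 / l E) := by
      intro E hE
      simp only
      have hnum : (x E - y E)^2 = 2 * x E ^2 + 2 * y E ^2 - 4 * ((x E + y E)/2)^2 := by ring
      rw [hnum, sub_div, add_div, mul_div_assoc, mul_div_assoc, mul_div_assoc]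
    rw [Finset.sum_congr rfl hterm, Finset.sum_sub_distrib, Finset.sum_add_distrib,
      ← Finset.mul_sum, ← Finset.mul_sum, ← Finset.mul_sum]
  have h3 : psq l x R ≤ Qv C l x := le_Qv (Qv_bddAbove hC hl hlpos hT hDx) hRP
  have h4 : psq l y R ≤ Qv C l y := le_Qv (Qv_bddAbove hC hl hlpos hT hDy) hRP
  have h5 : Qv C l (fun A => (x A + y A) / 2) - ε/5 < psq l (fun A => (x A + y A) / 2) R :=
    lt_of_lt_of_le hb h2
  have h6 : Qv C l (fun A => x A - y A) - ε/5 < psq l (fun A => x A - y A) R :=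
    lt_of_lt_of_le ha h1
  rw [hiden] at h6
  linarith

end Qmach

/-- a finitely supported convex-combination weight. -/
structure Cmb where
  s : Finset ℕ
  w : ℕ → ℝ
  nonneg : ∀ i, 0 ≤ w i
  zero_off : ∀ i, i ∉ s → w i = 0
  total : ∑ i ∈ s, w i = 1

namespace Cmb

def ge' (c : Cmb) (n : ℕ) : Prop := ∀ i ∈ c.s, n ≤ i

theorem ge'_mono {c : Cmb} {n m : ℕ} (h : c.ge' n) (hmn : m ≤ n) : c.ge' m :=
  fun i hi => hmn.trans (h i hi)

def app (c : Cmb) (V : ℕ → Set Ω → ℝ) : Set Ω → ℝ := fun A => ∑ i ∈ c.s, c.w i * V i A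

def delta (n : ℕ) : Cmb where
  s := {n}
  w := fun i => if i = n then 1 else 0
  nonneg := fun i => by split <;> norm_num
  zero_off := fun i hi => by
    rw [if_neg]; intro h; exact hi (by simp [h])
  total := by simp

theorem delta_ge (n : ℕ) : (delta n).ge' n := fun i hi => by
  simp only [delta, Finset.mem_singleton] at hi; omega

theorem delta_app (n : ℕ) (V : ℕ → Set Ω → ℝ) : (delta n).app V = V n := by
  funext A; simp [app, delta]

def mix (c₁ c₂ : Cmb) : Cmb where
  s := c₁.s ∪ c₂.s
  w := fun i => (c₁.w i + c₂.w i) / 2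
  nonneg := fun i => by
    have := c₁.nonneg i; have := c₂.nonneg i; positivity
  zero_off := fun i hi => by
    rw [c₁.zero_off i (fun h => hi (Finset.mem_union_left _ h)),
      c₂.zero_off i (fun h => hi (Finset.mem_union_right _ h))]
    norm_num
  total := by
    have h1 : ∑ i ∈ c₁.s ∪ c₂.s, c₁.w i = 1 := by
      rw [← c₁.total]
      exact (Finset.sum_subset Finset.subset_union_left
        (fun i _ hi => c₁.zero_off i hi)).symm
    have h2 : ∑ i ∈ c₁.s ∪ c₂.s, c₂.w i = 1 := by
      rw [← c₂.total]
      exact (Finset.sum_subset Finset.subset_union_right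
        (fun i _ hi => c₂.zero_off i hi)).symm
    show ∑ i ∈ c₁.s ∪ c₂.s, (c₁.w i + c₂.w i) / 2 = 1
    rw [← Finset.sum_div, Finset.sum_add_distrib, h1, h2]
    norm_num
  
theorem mix_ge {c₁ c₂ : Cmb} {n : ℕ} (h₁ : c₁.ge' n) (h₂ : c₂.ge' n) : (mix c₁ c₂).ge' n := by
  intro i hi
  rcases Finset.mem_union.1 hi with h | h
  · exact h₁ i h
  · exact h₂ i h

theorem mix_app (c₁ c₂ : Cmb) (V : ℕ → Set Ω → ℝ) :
    (mix c₁ c₂).app V = fun A => (c₁.app V A + c₂.app V A) / 2 := by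
  funext A
  show ∑ i ∈ c₁.s ∪ c₂.s, (c₁.w i + c₂.w i) / 2 * V i A = _
  have h1 : ∑ i ∈ c₁.s ∪ c₂.s, c₁.w i * V i A = c₁.app V A :=
    (Finset.sum_subset Finset.subset_union_left
      (fun i _ hi => by rw [c₁.zero_off i hi, zero_mul])).symm
  have h2 : ∑ i ∈ c₁.s ∪ c₂.s, c₂.w i * V i A = c₂.app V A :=
    (Finset.sum_subset Finset.subset_union_right
      (fun i _ hi => by rw [c₂.zero_off i hi, zero_mul])).symm
  have hterm : ∀ i ∈ c₁.s ∪ c₂.s, (c₁.w i + c₂.w i) / 2 * V i A =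
      (c₁.w i * V i A + c₂.w i * V i A) / 2 := by intro i _; ring
  rw [Finset.sum_congr rfl hterm, ← Finset.sum_div, Finset.sum_add_distrib, h1, h2]

def flat (d : Cmb) (S : ℕ → Cmb) : Cmb where
  s := d.s.biUnion (fun j => (S j).s)
  w := fun i => ∑ j ∈ d.s, d.w j * (S j).w i
  nonneg := fun i => Finset.sum_nonneg fun j _ =>
    mul_nonneg (d.nonneg j) ((S j).nonneg i)
  zero_off := fun i hi => by
    apply Finset.sum_eq_zero
    intro j hj
    rw [(S j).zero_off i (fun h => hi (Finset.mem_biUnion.2 ⟨j, hj, h⟩)), mul_zero]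
  total := by
    rw [Finset.sum_comm]
    have : ∀ j ∈ d.s, ∑ i ∈ d.s.biUnion (fun j => (S j).s), d.w j * (S j).w i = d.w j := by
      intro j hj
      rw [← Finset.mul_sum]
      have : ∑ i ∈ d.s.biUnion (fun j => (S j).s), (S j).w i = 1 := by
        rw [← (S j).total]
        exact (Finset.sum_subset (Finset.subset_biUnion_of_mem _ hj)
          (fun i _ hi => (S j).zero_off i hi)).symm
      rw [this, mul_one]
    rw [Finset.sum_congr rfl this, d.total]

theorem flat_ge {d : Cmb} {S : ℕ → Cmb} {n : ℕ} (hd : d.ge' n)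
    (hS : ∀ j ∈ d.s, (S j).ge' j) : (flat d S).ge' n := by
  intro i hi
  obtain ⟨j, hj, hij⟩ := Finset.mem_biUnion.1 hi
  exact (hd j hj).trans (hS j hj i hij)

theorem flat_app (d : Cmb) (S : ℕ → Cmb) (V : ℕ → Set Ω → ℝ) :
    (flat d S).app V = fun A => ∑ j ∈ d.s, d.w j * (S j).app V A := by
  funext A
  show ∑ i ∈ d.s.biUnion (fun j => (S j).s), (∑ j ∈ d.s, d.w j * (S j).w i) * V i A = _
  rw [Finset.sum_congr rfl (fun i (_ : i ∈ _) => Finset.sum_mul ..)]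
  rw [Finset.sum_comm]
  apply Finset.sum_congr rfl
  intro j hj
  show ∑ i ∈ d.s.biUnion (fun j => (S j).s), d.w j * (S j).w i * V i A = _
  have h1 : ∑ i ∈ d.s.biUnion (fun j => (S j).s), d.w j * ((S j).w i * V i A) =
      ∑ i ∈ (S j).s, d.w j * ((S j).w i * V i A) :=
    (Finset.sum_subset (Finset.subset_biUnion_of_mem _ hj)
      (fun i _ hi => by rw [(S j).zero_off i hi, zero_mul, mul_zero])).symm
  calc ∑ i ∈ d.s.biUnion (fun j => (S j).s), d.w j * (S j).w i * V i A
      = ∑ i ∈ d.s.biUnion (fun j => (S j).s), d.w j * ((S j).w i * V i A) := by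
        apply Finset.sum_congr rfl; intro i _; ring
    _ = ∑ i ∈ (S j).s, d.w j * ((S j).w i * V i A) := h1
    _ = d.w j * ∑ i ∈ (S j).s, (S j).w i * V i A := by rw [Finset.mul_sum]
    _ = d.w j * (S j).app V A := rfl

end Cmb

section Core
variable (hC : IsSetAlg C) {l : Set Ω → ℝ} (hl : IsFinAdd C l) (hlpos : ∀ A ∈ C, 0 ≤ l A)

theorem app_finAdd {V : ℕ → Set Ω → ℝ} (hV : ∀ i, IsFinAdd C (V i)) (c : Cmb) :
    IsFinAdd C (c.app V) := finAdd_sum c.s c.w V (fun i _ => hV i)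

theorem app_pos {V : ℕ → Set Ω → ℝ} (hV : ∀ i, ∀ A ∈ C, 0 ≤ V i A) (c : Cmb) :
    ∀ A ∈ C, 0 ≤ c.app V A := fun A hA =>
  Finset.sum_nonneg fun i _ => mul_nonneg (c.nonneg i) (hV i A hA)

theorem app_dm {V : ℕ → Set Ω → ℝ} {T : ℝ} (hV : ∀ i, Dm C l (V i) T) (c : Cmb) :
    Dm C l (c.app V) T :=
  Dm.convex c.s c.w V (fun i _ => c.nonneg i) c.total (fun i _ => hV i)

theorem app_sub (c : Cmb) (V : ℕ → Set Ω → ℝ) (ξ : Set Ω → ℝ) :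
    (fun A => c.app V A - ξ A) = fun A => ∑ i ∈ c.s, c.w i * (V i A - ξ A) := by
  funext A
  show c.app V A - ξ A = _
  have : ∑ i ∈ c.s, c.w i * (V i A - ξ A) =
      (∑ i ∈ c.s, c.w i * V i A) - (∑ i ∈ c.s, c.w i) * ξ A := by
    rw [Finset.sum_mul, ← Finset.sum_sub_distrib]
    apply Finset.sum_congr rfl
    intro i _; ring
  rw [this, c.total, one_mul]; rfl

include hC in
theorem tvNorm_app_le (c : Cmb) (τ : ℕ → Set Ω → ℝ) (K : ℕ → ℝ)
    (hK : ∀ i ∈ c.s, ∀ P : Finset (Set Ω), IsPartition C P univ → pvar (τ i) P ≤ K i) :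
    tvNorm C (fun A => ∑ i ∈ c.s, c.w i * τ i A) ≤ ∑ i ∈ c.s, c.w i * K i := by
  have hKnn : ∀ i ∈ c.s, 0 ≤ K i := by
    intro i hi
    exact (pvar_nonneg (τ i) {univ}).trans (hK i hi {univ} (isPartition_single (univ_mem hC)))
  apply totalVar_le (Finset.sum_nonneg fun i hi => mul_nonneg (c.nonneg i) (hKnn i hi))
  intro P hP
  calc pvar (fun A => ∑ i ∈ c.s, c.w i * τ i A) P
      ≤ ∑ E ∈ P, ∑ i ∈ c.s, c.w i * |τ i E| := by
        apply Finset.sum_le_sum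
        intro E hE
        calc |∑ i ∈ c.s, c.w i * τ i E| ≤ ∑ i ∈ c.s, |c.w i * τ i E| :=
              Finset.abs_sum_le_sum_abs _ _
          _ = ∑ i ∈ c.s, c.w i * |τ i E| := by
              apply Finset.sum_congr rfl
              intro i _
              rw [abs_mul, abs_of_nonneg (c.nonneg i)]
    _ = ∑ i ∈ c.s, c.w i * pvar (τ i) P := by
        rw [Finset.sum_comm]
        apply Finset.sum_congr rfl
        intro i _
        rw [pvar, Finset.mul_sum]
    _ ≤ ∑ i ∈ c.s, c.w i * K i := by
        apply Finset.sum_le_sum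
        intro i hi
        exact mul_le_mul_of_nonneg_left (hK i hi P hP) (c.nonneg i)

include hC hl hlpos in
/-- Minimal norm trick: convex combinations of the tails converging in total variation. -/
theorem core {T : ℝ} (hT : 0 ≤ T) (x : ℕ → Set Ω → ℝ)
    (hfa : ∀ j, IsFinAdd C (x j)) (hpos : ∀ j, ∀ A ∈ C, 0 ≤ x j A)
    (hdm : ∀ j, Dm C l (x j) T) :
    ∃ (c : ℕ → Cmb) (ξ : Set Ω → ℝ),
      (∀ r, (c r).ge' r) ∧ IsFinAdd C ξ ∧ (∀ A ∈ C, 0 ≤ ξ A) ∧ Dm C l ξ T ∧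
      Tendsto (fun r => tvNorm C (fun A => (c r).app x A - ξ A)) atTop (nhds 0) := by
  classical
  set Ds : ℕ → Set ℝ := fun r => {q | ∃ d : Cmb, d.ge' r ∧ q = Qv C l (d.app x)} with hDs
  set D : ℕ → ℝ := fun r => sInf (Ds r) with hD
  have hne : ∀ r, (Ds r).Nonempty := fun r => ⟨_, Cmb.delta r, Cmb.delta_ge r, rfl⟩
  have hbb : ∀ r, BddBelow (Ds r) :=
    fun r => ⟨0, by rintro q ⟨d, _, rfl⟩; exact Qv_nonneg hC hlpos _⟩
  have hDnn : ∀ r, 0 ≤ D r :=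
    fun r => le_csInf (hne r) (by rintro q ⟨d, _, rfl⟩; exact Qv_nonneg hC hlpos _)
  have hDub : ∀ r, D r ≤ T * (T * l univ) := by
    intro r
    have h1 : D r ≤ Qv C l ((Cmb.delta r).app x) :=
      csInf_le (hbb r) ⟨Cmb.delta r, Cmb.delta_ge r, rfl⟩
    rw [Cmb.delta_app] at h1
    exact h1.trans (Qv_le hC hl hlpos hT (hdm r))
  have hmono : Monotone D := by
    intro r r' hrr'
    apply csInf_le_csInf (hbb r) (hne r')
    rintro q ⟨d, hd, rfl⟩
    exact ⟨d, Cmb.ge'_mono hd hrr', rfl⟩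
  have hbdd : BddAbove (Set.range D) := ⟨T * (T * l univ), by rintro q ⟨r, rfl⟩; exact hDub r⟩
  set Dinf : ℝ := ⨆ r, D r with hDinf
  have hDtend : Tendsto D atTop (nhds Dinf) := tendsto_atTop_ciSup hmono hbdd
  have hDleinf : ∀ r, D r ≤ Dinf := fun r => le_ciSup hbdd r
  have hch : ∀ r : ℕ, ∃ d : Cmb, d.ge' r ∧ Qv C l (d.app x) < D r + 1 / (r + 1) := by
    intro r
    obtain ⟨q, ⟨d, hd, rfl⟩, hq⟩ := Real.lt_sInf_add_pos (hne r)
      (show (0:ℝ) < 1 / (r + 1) by positivity)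
    exact ⟨d, hd, hq⟩
  choose c hcge hcQ using hch
  -- quantitative Cauchy bound on Qv of differences
  have key : ∀ N r r', N ≤ r → N ≤ r' →
      Qv C l (fun A => (c r).app x A - (c r').app x A) ≤
        4 * (Dinf - D N) + 2 / (r + 1) + 2 / (r' + 1) := by
    intro N r r' hNr hNr'
    have hQd := Qv_diff_le hC hl hlpos hT (app_finAdd hfa (c r)) (app_finAdd hfa (c r'))
      (app_dm hdm (c r)) (app_dm hdm (c r'))
    have hmid_eq : (fun A => ((c r).app x A + (c r').app x A) / 2) =
        (Cmb.mix (c r) (c r')).app x := (Cmb.mix_app (c r) (c r') x).symm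
    have hmidge : (Cmb.mix (c r) (c r')).ge' N :=
      Cmb.mix_ge (Cmb.ge'_mono (hcge r) hNr) (Cmb.ge'_mono (hcge r') hNr')
    have h1 : D N ≤ Qv C l ((Cmb.mix (c r) (c r')).app x) :=
      csInf_le (hbb N) ⟨_, hmidge, rfl⟩
    rw [← hmid_eq] at h1
    have h2 := hcQ r
    have h3 := hcQ r'
    have h4 := hDleinf r
    have h5 := hDleinf r'
    have h6 := hmono hNr
    have e1 : (2:ℝ) / (r + 1) = 2 * (1 / (r + 1)) := by ring
    have e2 : (2:ℝ) / (r' + 1) = 2 * (1 / (r' + 1)) := by ring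
    rw [e1, e2]
    linarith
  set b : ℕ → ℝ := fun N => Real.sqrt ((4 * (Dinf - D N) + 4 / (N + 1)) * l univ) with hb
  have hkeytv : ∀ N r r', N ≤ r → N ≤ r' →
      tvNorm C (fun A => (c r).app x A - (c r').app x A) ≤ b N := by
    intro N r r' hNr hNr'
    have hdmd : Dm C l (fun A => (c r).app x A - (c r').app x A) (T + T) :=
      (app_dm hdm (c r)).sub (app_dm hdm (c r'))
    have h1 := tvNorm_le_sqrt_Qv hC hl hlpos (by linarith : (0:ℝ) ≤ T + T) hdmd
    apply h1.trans
    apply Real.sqrt_le_sqrt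
    apply mul_le_mul_of_nonneg_right _ (hlpos _ (univ_mem hC))
    have hc1 : ((N:ℝ) + 1) ≤ ((r:ℝ) + 1) := by
      have : (N:ℝ) ≤ r := Nat.cast_le.2 hNr
      linarith
    have hc2 : ((N:ℝ) + 1) ≤ ((r':ℝ) + 1) := by
      have : (N:ℝ) ≤ r' := Nat.cast_le.2 hNr'
      linarith
    have hr : 2 / ((r:ℝ) + 1) ≤ 2 / ((N:ℝ) + 1) := by gcongr
    have hr' : 2 / ((r':ℝ) + 1) ≤ 2 / ((N:ℝ) + 1) := by gcongr
    have := key N r r' hNr hNr'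
    have hsplit : (4:ℝ) / (N + 1) = 2 / (N + 1) + 2 / (N + 1) := by ring
    linarith
  have hb0 : Tendsto b atTop (nhds 0) := by
    have h1 : Tendsto (fun N : ℕ => (4 * (Dinf - D N) + 4 / (N + 1)) * l univ) atTop
        (nhds 0) := by
      have ha : Tendsto (fun N : ℕ => 4 * (Dinf - D N)) atTop (nhds 0) := by
        have := (tendsto_const_nhds (x := Dinf) (f := atTop (α := ℕ))).sub hDtend
        simpa using this.const_mul 4
      have hbt : Tendsto (fun N : ℕ => 4 / ((N:ℝ) + 1)) atTop (nhds 0) := by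
        have := tendsto_one_div_add_atTop_nhds_zero_nat (𝕜 := ℝ)
        simpa [div_eq_mul_inv] using this.const_mul 4
      have := (ha.add hbt).mul_const (l univ)
      simpa using this
    have h2 : Tendsto (fun y : ℝ => Real.sqrt y) (nhds 0) (nhds 0) := by
      have := Real.continuous_sqrt.tendsto 0
      simpa using this
    exact h2.comp h1
  -- pointwise limits
  have hbv : ∀ r r', BddVar C (fun A => (c r).app x A - (c r').app x A) := by
    intro r r'
    apply bddVar_of_bound
    intro P hP
    exact pvar_le_of_dm hC hl hlpos ((app_dm hdm (c r)).sub (app_dm hdm (c r'))) hP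
  have hptCauchy : ∀ A, A ∈ C → ∃ L, Tendsto (fun r => (c r).app x A) atTop (nhds L) := by
    intro A hA
    apply cauchySeq_tendsto_of_complete
    apply cauchySeq_of_le_tendsto_0 b _ hb0
    intro r r' N hNr hNr'
    rw [Real.dist_eq]
    exact (abs_le_tvNorm hC (hbv r r') hA).trans (hkeytv N r r' hNr hNr')
  set ξ : Set Ω → ℝ := fun A =>
    if h : ∃ L, Tendsto (fun r => (c r).app x A) atTop (nhds L) then h.choose else 0 with hξ
  have hξtend : ∀ A, A ∈ C → Tendsto (fun r => (c r).app x A) atTop (nhds (ξ A)) := by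
    intro A hA
    have h := hptCauchy A hA
    simp only [hξ, dif_pos h]
    exact h.choose_spec
  have hξfa : IsFinAdd C ξ := by
    constructor
    · have h0 : (fun r => (c r).app x (∅ : Set Ω)) = fun _ => (0:ℝ) :=
        funext fun r => (app_finAdd hfa (c r)).1
      have := hξtend ∅ hC.1
      rw [h0] at this
      exact tendsto_nhds_unique this tendsto_const_nhds
    · intro A hA B hB hd
      have h1 : (fun r => (c r).app x (A ∪ B)) =
          fun r => (c r).app x A + (c r).app x B :=
        funext fun r => (app_finAdd hfa (c r)).2 A hA B hB hd
      have h2 := hξtend (A ∪ B) (union_mem hC hA hB)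
      rw [h1] at h2
      exact tendsto_nhds_unique h2 ((hξtend A hA).add (hξtend B hB))
  have hξpos : ∀ A ∈ C, 0 ≤ ξ A := by
    intro A hA
    exact ge_of_tendsto (hξtend A hA)
      (Filter.Eventually.of_forall fun r => app_pos hpos (c r) A hA)
  have hξdm : Dm C l ξ T := by
    intro A hA
    exact le_of_tendsto ((hξtend A hA).abs)
      (Filter.Eventually.of_forall fun r => app_dm hdm (c r) A hA)
  refine ⟨c, ξ, hcge, hξfa, hξpos, hξdm, ?_⟩
  have hfinal : ∀ N, tvNorm C (fun A => (c N).app x A - ξ A) ≤ b N := by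
    intro N
    apply totalVar_le (Real.sqrt_nonneg _)
    intro P hP
    have hlim : Tendsto (fun r' => pvar (fun A => (c N).app x A - (c r').app x A) P)
        atTop (nhds (pvar (fun A => (c N).app x A - ξ A) P)) := by
      apply tendsto_finset_sum
      intro E hE
      exact ((tendsto_const_nhds.sub (hξtend E (hP.1 E hE))).abs)
    apply le_of_tendsto hlim
    filter_upwards [Filter.eventually_ge_atTop N] with r' hr'
    exact (le_totalVar (hbv N r') hP).trans (hkeytv N N r' le_rfl hr')
  apply squeeze_zero (fun N => totalVar_nonneg _ _) hfinal hb0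

end Core

section Support

/-- dependent recursion with choice along `ℕ`. -/
theorem exists_seq_rec {α : Type*} (P : ℕ → α → Prop) (R : ℕ → α → α → Prop)
    (h0 : ∃ a, P 0 a) (hstep : ∀ m a, P m a → ∃ b, P (m + 1) b ∧ R m a b) :
    ∃ f : ℕ → α, (∀ m, P m (f m)) ∧ ∀ m, R m (f m) (f (m + 1)) := by
  classical
  obtain ⟨a0, ha0⟩ := h0
  choose! step hstep1 hstep2 using hstep
  refine ⟨fun m => Nat.rec a0 step m, ?_, ?_⟩
  · intro m
    induction m with
    | zero => exact ha0
    | succ m ih => exact hstep1 m _ ih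
  · intro m
    have hP : ∀ m', P m' (Nat.rec a0 step m' : α) := by
      intro m'
      induction m' with
      | zero => exact ha0
      | succ m' ih => exact hstep1 m' _ ih
    exact hstep2 m _ (hP m)

/-- a bounded real sequence has a subsequence converging to its limsup. -/
theorem subseq_attains_limsup {f : ℕ → ℝ} {M : ℝ} (hf0 : ∀ n, 0 ≤ f n) (hfM : ∀ n, f n ≤ M) :
    ∃ φ : ℕ → ℕ, StrictMono φ ∧
      Tendsto (fun j => f (φ j)) atTop (nhds (limsup f atTop)) := by
  have hbdd : IsBoundedUnder (· ≤ ·) atTop f := Filter.isBoundedUnder_of ⟨M, fun n => hfM n⟩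
  have hbdd' : IsBoundedUnder (· ≥ ·) atTop f := Filter.isBoundedUnder_of ⟨0, fun n => hf0 n⟩
  have hcob : IsCoboundedUnder (· ≤ ·) atTop f := hbdd'.isCoboundedUnder_le
  set L := limsup f atTop with hL
  have hfreq : ∀ j : ℕ, ∃ᶠ n in atTop, |f n - L| < 1 / (j + 1) := by
    intro j
    have h1 : ∃ᶠ n in atTop, L - 1 / (j + 1) < f n :=
      frequently_lt_of_lt_limsup hcob (by
        have : (0:ℝ) < 1 / (j + 1) := by positivity
        linarith)
    have h2 : ∀ᶠ n in atTop, f n < L + 1 / (j + 1) :=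
      eventually_lt_of_limsup_lt (by
        have : (0:ℝ) < 1 / (j + 1) := by positivity
        linarith) hbdd
    apply (h1.and_eventually h2).mono
    rintro n ⟨hn1, hn2⟩
    rw [abs_lt]
    constructor <;> linarith
  obtain ⟨φ, hφ, hφP⟩ := Filter.extraction_forall_of_frequently hfreq
  refine ⟨φ, hφ, ?_⟩
  rw [tendsto_iff_dist_tendsto_zero]
  apply squeeze_zero (f := fun j : ℕ => dist (f (φ j)) L) (g := fun j : ℕ => 1 / ((j:ℝ) + 1))
    (fun j => dist_nonneg) (fun j => by rw [Real.dist_eq]; exact (hφP j).le)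
  exact tendsto_one_div_add_atTop_nhds_zero_nat

/-- simultaneous convergence of countably many bounded sequences along one subsequence. -/
theorem all_levels_subseq {a : ℕ → ℕ → ℝ} {M : ℝ} (hM : 0 ≤ M)
    (h0 : ∀ k n, 0 ≤ a k n) (h1 : ∀ k n, a k n ≤ M) :
    ∃ (θ : ℕ → ℕ) (L : ℕ → ℝ), StrictMono θ ∧
      ∀ k, Tendsto (fun i => a k (θ i)) atTop (nhds (L k)) := by
  haveI : CompactSpace (Set.Icc (0:ℝ) M) := isCompact_iff_compactSpace.mp isCompact_Icc
  set x : ℕ → (ℕ → Set.Icc (0:ℝ) M) := fun n k => ⟨a k n, h0 k n, h1 k n⟩ with hx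
  obtain ⟨Lp, θ, hθ, htend⟩ := CompactSpace.tendsto_subseq x
  refine ⟨θ, fun k => (Lp k : ℝ), hθ, ?_⟩
  intro k
  have hk : Tendsto (fun i => x (θ i) k) atTop (nhds (Lp k)) := by
    have := tendsto_pi_nhds.1 htend k
    exact this
  have := (continuous_subtype_val.tendsto (Lp k)).comp hk
  exact this

end Support

section Misc
variable (hC : IsSetAlg C)

include hC in
theorem pvar_eq_of_pos {μ : Set Ω → ℝ} (hμ : IsFinAdd C μ) (hpos : ∀ E ∈ C, 0 ≤ μ E)
    {P : Finset (Set Ω)} (hP : IsPartition C P univ) : pvar μ P = μ univ := by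
  unfold pvar
  rw [Finset.sum_congr rfl (fun E hE => abs_of_nonneg (hpos E (hP.1 E hE)))]
  exact sum_over_partition' hC hμ hP

theorem bddVar_add {μ ν : Set Ω → ℝ} {Kμ Kν : ℝ}
    (hμ : ∀ P : Finset (Set Ω), IsPartition C P univ → pvar μ P ≤ Kμ)
    (hν : ∀ P : Finset (Set Ω), IsPartition C P univ → pvar ν P ≤ Kν) :
    ∀ P : Finset (Set Ω), IsPartition C P univ → pvar (fun A => μ A + ν A) P ≤ Kμ + Kν :=
  fun P hP => (pvar_add_le μ ν P).trans (add_le_add (hμ P hP) (hν P hP))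

include hC in
theorem tvNorm_add_le {μ ν : Set Ω → ℝ} (hbμ : BddVar C μ) (hbν : BddVar C ν) :
    tvNorm C (fun A => μ A + ν A) ≤ tvNorm C μ + tvNorm C ν := by
  apply totalVar_le (add_nonneg (totalVar_nonneg _ _) (totalVar_nonneg _ _))
  intro P hP
  exact (pvar_add_le μ ν P).trans (add_le_add (le_totalVar hbμ hP) (le_totalVar hbν hP))

include hC in
theorem finadd_mono {μ : Set Ω → ℝ} (hμ : IsFinAdd C μ) (hpos : ∀ E ∈ C, 0 ≤ μ E)
    {A B : Set Ω} (hA : A ∈ C) (hB : B ∈ C) (hAB : A ⊆ B) : μ A ≤ μ B := by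
  have h1 : B = A ∪ (B \ A) := by
    rw [Set.union_diff_cancel hAB]
  have h2 := hμ.2 A hA (B \ A) (diff_mem hC hB hA) disjoint_sdiff_right
  rw [← h1] at h2
  have := hpos (B \ A) (diff_mem hC hB hA)
  linarith

include hC in
theorem finadd_union_le {μ : Set Ω → ℝ} (hμ : IsFinAdd C μ) (hpos : ∀ E ∈ C, 0 ≤ μ E)
    {A B : Set Ω} (hA : A ∈ C) (hB : B ∈ C) : μ (A ∪ B) ≤ μ A + μ B := by
  have h1 : A ∪ B = A ∪ (B \ A) := by rw [Set.union_diff_self]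
  have h2 := hμ.2 A hA (B \ A) (diff_mem hC hB hA) disjoint_sdiff_right
  rw [← h1] at h2
  rw [h2]
  have := finadd_mono hC hμ hpos (diff_mem hC hB hA) hB (Set.diff_subset)
  linarith

include hC in
theorem finadd_biUnion_le {μ : Set Ω → ℝ} (hμ : IsFinAdd C μ) (hpos : ∀ E ∈ C, 0 ≤ μ E)
    (s : Finset ℕ) (B : ℕ → Set Ω) (hB : ∀ i ∈ s, B i ∈ C) :
    μ (⋃ i ∈ s, B i) ≤ ∑ i ∈ s, μ (B i) := by
  classical
  induction s using Finset.induction_on with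
  | empty => simp [hμ.1]
  | @insert i s' his ih =>
    rw [Finset.set_biUnion_insert, Finset.sum_insert his]
    have hU : (⋃ j ∈ s', B j) ∈ C := by
      have : (⋃ j ∈ s', B j) = ⋃₀ ((s'.image B : Finset (Set Ω)) : Set (Set Ω)) := by
        simp [Set.sUnion_image]
      rw [this]
      apply sUnion_mem hC
      intro E hE
      obtain ⟨j, hj, rfl⟩ := Finset.mem_image.1 hE
      exact hB j (Finset.mem_insert_of_mem hj)
    calc μ (B i ∪ ⋃ j ∈ s', B j) ≤ μ (B i) + μ (⋃ j ∈ s', B j) :=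
          finadd_union_le hC hμ hpos (hB i (Finset.mem_insert_self _ _)) hU
      _ ≤ μ (B i) + ∑ j ∈ s', μ (B j) := by
          have := ih (fun j hj => hB j (Finset.mem_insert_of_mem hj))
          linarith

/-- geometric tail bound for finsets of indices `≥ r`. -/
theorem geom_tail_le (s : Finset ℕ) (r : ℕ) (hs : ∀ i ∈ s, r ≤ i) :
    ∑ i ∈ s, ((1:ℝ)/2) ^ i ≤ 2 * (1/2) ^ r := by
  classical
  rcases s.eq_empty_or_nonempty with rfl | hne
  · simp only [Finset.sum_empty]
    positivity
  set N := (s.sup id) + 1 with hN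
  have hrN : r ≤ N := by
    obtain ⟨i, hi⟩ := hne
    have h1 := hs i hi
    have h2 : i ≤ s.sup id := Finset.le_sup (f := id) hi
    omega
  have hsub : s ⊆ Finset.Ico r N := by
    intro i hi
    rw [Finset.mem_Ico]
    refine ⟨hs i hi, ?_⟩
    have : i ≤ s.sup id := Finset.le_sup (f := id) hi
    omega
  have h1 : ∑ i ∈ s, ((1:ℝ)/2)^i ≤ ∑ i ∈ Finset.Ico r N, ((1:ℝ)/2)^i :=
    Finset.sum_le_sum_of_subset_of_nonneg hsub (fun i _ _ => by positivity)
  have h2 : ∑ i ∈ Finset.Ico r N, ((1:ℝ)/2)^i = (((1:ℝ)/2)^N - (1/2)^r)/((1/2:ℝ) - 1) :=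
    geom_sum_Ico (by norm_num) hrN
  have h3 : (((1:ℝ)/2)^N - (1/2)^r)/((1/2:ℝ) - 1) = 2*((1/2)^r - (1/2)^N) := by
    field_simp
    ring
  have hNpos : (0:ℝ) ≤ (1/2:ℝ)^N := by positivity
  rw [h2, h3] at h1
  linarith

/-- convergence of convex combinations of tails. -/
theorem tendsto_app_of_tendsto (c : ℕ → Cmb) (hge : ∀ r, (c r).ge' r) (v : ℕ → ℝ) (L : ℝ)
    (hv : Tendsto v atTop (nhds L)) :
    Tendsto (fun r => ∑ i ∈ (c r).s, (c r).w i * v i) atTop (nhds L) := by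
  rw [tendsto_iff_dist_tendsto_zero]
  rw [Metric.tendsto_atTop] at hv ⊢
  intro ε hε
  obtain ⟨N, hN⟩ := hv (ε/2) (half_pos hε)
  refine ⟨N, fun r hr => ?_⟩
  have hdist : dist (∑ i ∈ (c r).s, (c r).w i * v i) L ≤ ε/2 := by
    rw [Real.dist_eq]
    have he : ∑ i ∈ (c r).s, (c r).w i * v i - L =
        ∑ i ∈ (c r).s, (c r).w i * (v i - L) := by
      rw [Finset.sum_congr rfl (fun i (_ : i ∈ (c r).s) => mul_sub ((c r).w i) (v i) L),
        Finset.sum_sub_distrib, ← Finset.sum_mul, (c r).total, one_mul]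
    rw [he]
    calc |∑ i ∈ (c r).s, (c r).w i * (v i - L)| ≤
        ∑ i ∈ (c r).s, |(c r).w i * (v i - L)| := Finset.abs_sum_le_sum_abs _ _
      _ ≤ ∑ i ∈ (c r).s, (c r).w i * (ε/2) := by
          apply Finset.sum_le_sum
          intro i hi
          rw [abs_mul, abs_of_nonneg ((c r).nonneg i)]
          apply mul_le_mul_of_nonneg_left _ ((c r).nonneg i)
          have : N ≤ i := hr.trans (hge r i hi)
          have := hN i this
          rw [Real.dist_eq] at this
          exact this.le
      _ = ε/2 := by rw [← Finset.sum_mul, (c r).total, one_mul]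
  calc dist (dist (∑ i ∈ (c r).s, (c r).w i * v i) L) 0 =
      dist (∑ i ∈ (c r).s, (c r).w i * v i) L := by
        rw [Real.dist_eq, sub_zero, abs_of_nonneg dist_nonneg]
    _ ≤ ε/2 := hdist
    _ < ε := by linarith

end Misc

end KomlosAux

namespace KomlosAux
variable {C : Set (Set Ω)}

theorem pvar_sub_le (μ ν : Set Ω → ℝ) (P : Finset (Set Ω)) :
    pvar (fun A => μ A - ν A) P ≤ pvar μ P + pvar ν P := by
  rw [pvar, pvar, pvar, ← Finset.sum_add_distrib]
  exact Finset.sum_le_sum fun E _ => abs_sub _ _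

theorem pvar_neg (μ : Set Ω → ℝ) (P : Finset (Set Ω)) :
    pvar (fun A => -μ A) P = pvar μ P := by
  unfold pvar
  exact Finset.sum_congr rfl fun E _ => abs_neg _

theorem pvar_sub_comm (μ ν : Set Ω → ℝ) (P : Finset (Set Ω)) :
    pvar (fun A => μ A - ν A) P = pvar (fun A => ν A - μ A) P := by
  unfold pvar
  exact Finset.sum_congr rfl fun E _ => abs_sub_comm _ _

theorem pvar_app_le (c : Cmb) (τ : ℕ → Set Ω → ℝ) (K : ℕ → ℝ) (P : Finset (Set Ω))
    (hK : ∀ i ∈ c.s, pvar (τ i) P ≤ K i) :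
    pvar (fun A => ∑ i ∈ c.s, c.w i * τ i A) P ≤ ∑ i ∈ c.s, c.w i * K i := by
  calc pvar (fun A => ∑ i ∈ c.s, c.w i * τ i A) P
      ≤ ∑ E ∈ P, ∑ i ∈ c.s, c.w i * |τ i E| := by
        apply Finset.sum_le_sum
        intro E _
        calc |∑ i ∈ c.s, c.w i * τ i E| ≤ ∑ i ∈ c.s, |c.w i * τ i E| :=
              Finset.abs_sum_le_sum_abs _ _
          _ = ∑ i ∈ c.s, c.w i * |τ i E| := by
              apply Finset.sum_congr rfl
              intro i _
              rw [abs_mul, abs_of_nonneg (c.nonneg i)]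
    _ = ∑ i ∈ c.s, c.w i * pvar (τ i) P := by
        rw [Finset.sum_comm]
        apply Finset.sum_congr rfl
        intro i _
        rw [pvar, Finset.mul_sum]
    _ ≤ ∑ i ∈ c.s, c.w i * K i := by
        apply Finset.sum_le_sum
        intro i hi
        exact mul_le_mul_of_nonneg_left (hK i hi) (c.nonneg i)

theorem tvNorm_le_add4 {τ τ₁ τ₂ τ₃ τ₄ : Set Ω → ℝ}
    (hsplit : ∀ A, A ∈ C → τ A = τ₁ A + τ₂ A + τ₃ A + τ₄ A) {K₁ K₂ K₃ K₄ : ℝ}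
    (hK₁0 : 0 ≤ K₁) (hK₂0 : 0 ≤ K₂) (hK₃0 : 0 ≤ K₃) (hK₄0 : 0 ≤ K₄)
    (h₁ : ∀ P : Finset (Set Ω), IsPartition C P univ → pvar τ₁ P ≤ K₁)
    (h₂ : ∀ P : Finset (Set Ω), IsPartition C P univ → pvar τ₂ P ≤ K₂)
    (h₃ : ∀ P : Finset (Set Ω), IsPartition C P univ → pvar τ₃ P ≤ K₃)
    (h₄ : ∀ P : Finset (Set Ω), IsPartition C P univ → pvar τ₄ P ≤ K₄) :
    tvNorm C τ ≤ K₁ + K₂ + K₃ + K₄ := by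
  apply totalVar_le (by linarith)
  intro P hP
  have hle : pvar τ P ≤ pvar τ₁ P + pvar τ₂ P + pvar τ₃ P + pvar τ₄ P := by
    unfold pvar
    rw [← Finset.sum_add_distrib, ← Finset.sum_add_distrib, ← Finset.sum_add_distrib]
    apply Finset.sum_le_sum
    intro E hE
    rw [hsplit E (hP.1 E hE)]
    calc |τ₁ E + τ₂ E + τ₃ E + τ₄ E| ≤ |τ₁ E + τ₂ E + τ₃ E| + |τ₄ E| := abs_add_le _ _
      _ ≤ |τ₁ E + τ₂ E| + |τ₃ E| + |τ₄ E| := by linarith [abs_add_le (τ₁ E + τ₂ E) (τ₃ E)]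
      _ ≤ |τ₁ E| + |τ₂ E| + |τ₃ E| + |τ₄ E| := by linarith [abs_add_le (τ₁ E) (τ₂ E)]
  linarith [h₁ P hP, h₂ P hP, h₃ P hP, h₄ P hP]

end KomlosAux

/-- (Komlós theorem for additive set functions.) Given a norm bounded
sequence `(F n)` in `ba(C)₊`, `δ > 0` and a finitely additive probability `l`, there
are `ξ ∈ ba(C)₊` with `ξ ≪ l` and `‖ξ‖ ≥ sup_k limsup_n ‖F n ∧ 2^k l‖ − δ`, a sequence
`(G n)` with `G n ∈ co {F n, F (n+1), ...}` and sets `(A n)` in `C` such that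
`‖(G n)_{A n} − ξ‖ → 0` and `Σ_n l((A n)ᶜ) < ∞`. -/
theorem komlos_ba {Ω : Type} (C : Set (Set Ω)) (hC : IsSetAlg C)
    (F : ℕ → Set Ω → ℝ) (hF : ∀ n, Memba C (F n))
    (hFpos : ∀ n, ∀ A ∈ C, 0 ≤ F n A)
    (hbdd : ∃ M : ℝ, ∀ n, tvNorm C (F n) ≤ M)
    (δ : ℝ) (hδ : 0 < δ) (l : Set Ω → ℝ) (hl : IsFAProb C l) :
    ∃ (ξ : Set Ω → ℝ) (G : ℕ → Set Ω → ℝ) (A : ℕ → Set Ω),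
      Memba C ξ ∧ (∀ B ∈ C, 0 ≤ ξ B) ∧ AbsCont C ξ l ∧
      (⨆ k : ℕ, Filter.limsup
          (fun n => tvNorm C (baInf C (F n) (fun B => (2:ℝ) ^ k * l B))) atTop) - δ
        ≤ tvNorm C ξ ∧
      (∀ n, G n ∈ convexHull ℝ (tailSet F n)) ∧
      (∀ n, A n ∈ C) ∧
      Tendsto (fun n => tvNorm C (fun B => G n (A n ∩ B) - ξ B)) atTop (nhds 0) ∧
      Summable (fun n => l (A n)ᶜ) := by
  classical
  open KomlosAux in
  obtain ⟨M, hM⟩ := hbdd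
  obtain ⟨⟨hlfa, hlbv⟩, hlpos, hl1⟩ := hl
  set M₀ : ℝ := max M 0 with hM₀def
  have hM₀nn : 0 ≤ M₀ := le_max_right _ _
  have hFuniv : ∀ n, F n univ ≤ M₀ := by
    intro n
    have h1 : totalVar C (F n) univ = F n univ :=
      totalVar_of_pos hC (hF n).1 (hFpos n) (univ_mem hC)
    have h2 := hM n
    rw [tvNorm] at h2
    rw [h1] at h2
    exact h2.trans (le_max_left _ _)
  -- the truncation levels
  have hpow : ∀ k : ℕ, (0:ℝ) ≤ 2 ^ k := fun k => by positivity
  set a : ℕ → ℕ → ℝ := fun k n => tr C (F n) l ((2:ℝ) ^ k) univ with hadef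
  have ha0 : ∀ k n, 0 ≤ a k n := fun k n =>
    tr_nonneg hC hlfa hlpos (hF n).1 (hFpos n) (hpow k) (univ_mem hC)
  have haM : ∀ k n, a k n ≤ M₀ := fun k n =>
    (tr_le_mu hC hlfa hlpos (hF n).1 (hFpos n) (hpow k) (univ_mem hC)).trans (hFuniv n)
  have hbaInf_tr : ∀ (k : ℕ) (n : ℕ),
      (fun A => baInf C (F n) (fun B => (2:ℝ)^k * l B) A) = tr C (F n) l ((2:ℝ)^k) := by
    intro k n; rfl
  have hagoal : ∀ k n, tvNorm C (baInf C (F n) (fun B => (2:ℝ)^k * l B)) = a k n := by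
    intro k n
    have h1 : tvNorm C (baInf C (F n) (fun B => (2:ℝ)^k * l B)) =
        tvNorm C (tr C (F n) l ((2:ℝ)^k)) := rfl
    rw [h1, tr_tvNorm hC hlfa hlpos (hF n).1 (hFpos n) (hpow k)]
  set cv : ℕ → ℝ := fun k => limsup (fun n => a k n) atTop with hcvdef
  set cs : ℝ := ⨆ k, cv k with hcsdef
  obtain ⟨kb, hkb⟩ : ∃ kb, cs - δ < cv kb :=
    exists_lt_of_lt_ciSup (by linarith : cs - δ < cs)
  -- first subsequence: attain the limsup at level kb
  obtain ⟨φ₁, hφ₁mono, hφ₁tend⟩ := subseq_attains_limsup (ha0 kb) (haM kb)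
  -- second subsequence: all levels converge
  obtain ⟨θ, L, hθmono, hθtend⟩ := all_levels_subseq (a := fun k i => a k (φ₁ i)) hM₀nn
    (fun k i => ha0 k (φ₁ i)) (fun k i => haM k (φ₁ i))
  set ψ : ℕ → ℕ := fun i => φ₁ (θ i) with hψdef
  have hψmono : StrictMono ψ := hφ₁mono.comp hθmono
  have hLkb : L kb = cv kb := by
    have h1 : Tendsto (fun i => a kb (ψ i)) atTop (nhds (cv kb)) :=
      hφ₁tend.comp hθmono.tendsto_atTop
    exact tendsto_nhds_unique (hθtend kb) h1
  have hamono : ∀ k k' : ℕ, k ≤ k' → ∀ n, a k n ≤ a k' n := by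
    intro k k' hkk' n
    apply tr_mono hC hlfa hlpos (hF n).1 (hFpos n) (hpow k) _ (univ_mem hC)
    exact pow_le_pow_right₀ (by norm_num) hkk'
  have hLmono : Monotone L := by
    intro k k' hkk'
    exact le_of_tendsto_of_tendsto' (hθtend k) (hθtend k')
      (fun i => hamono k k' hkk' (φ₁ (θ i)))
  have hLM : ∀ k, L k ≤ M₀ := fun k =>
    le_of_tendsto (hθtend k) (Filter.Eventually.of_forall fun i => haM k (φ₁ (θ i)))
  have hL0 : ∀ k, 0 ≤ L k := fun k =>
    ge_of_tendsto (hθtend k) (Filter.Eventually.of_forall fun i => ha0 k (φ₁ (θ i)))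
  set Linf : ℝ := ⨆ k, L k with hLinfdef
  have hLbdd : BddAbove (Set.range L) := ⟨M₀, by rintro x ⟨k, rfl⟩; exact hLM k⟩
  have hLtend : Tendsto L atTop (nhds Linf) := tendsto_atTop_ciSup hLmono hLbdd
  have hLleinf : ∀ k, L k ≤ Linf := fun k => le_ciSup hLbdd k
  have hLinfM : Linf ≤ M₀ := ciSup_le hLM
  have hLinf_gt : cs - δ < Linf := hkb.trans_le (hLkb ▸ hLleinf kb)
  -- accuracy thinning
  have haccN : ∀ m : ℕ, ∃ N, ∀ i ≥ N, ∀ k ≤ m + 1, |a k (ψ i) - L k| ≤ 1 / (m + 1) := by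
    intro m
    have hone : (0:ℝ) < 1 / (m + 1) := by positivity
    have hk1 : ∀ k : ℕ, ∃ N, ∀ i ≥ N, |a k (ψ i) - L k| ≤ 1 / (m + 1) := by
      intro k
      obtain ⟨N, hN⟩ := (Metric.tendsto_atTop.1 (hθtend k)) (1/(m+1)) hone
      exact ⟨N, fun i hi => by
        have := hN i hi
        rw [Real.dist_eq] at this
        exact this.le⟩
    choose Nf hNf using hk1
    refine ⟨(Finset.range (m + 2)).sup Nf, fun i hi k hk => ?_⟩
    apply hNf k i
    exact le_trans (Finset.le_sup (f := Nf) (Finset.mem_range.2 (by omega))) hi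
  choose Nacc hNacc using haccN
  obtain ⟨N'', hN''P, hN''step⟩ := exists_seq_rec (P := fun m x => Nacc m ≤ x)
    (R := fun _ x y => x < y) ⟨Nacc 0, le_rfl⟩
    (fun m x _ => ⟨max (Nacc (m+1)) (x+1), le_max_left _ _, by omega⟩)
  have hN''mono : StrictMono N'' := strictMono_nat_of_lt_succ hN''step
  set Φ : ℕ → ℕ := fun i => ψ (N'' i) with hΦdef
  have hΦmono : StrictMono Φ := hψmono.comp hN''mono
  have hΦge : ∀ i, i ≤ Φ i := fun i => hΦmono.le_apply
  set F' : ℕ → Set Ω → ℝ := fun i => F (Φ i) with hF'def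
  set b' : ℕ → ℕ → ℝ := fun k i => a k (Φ i) with hb'def
  have hbacc : ∀ i, ∀ k ≤ i + 1, |b' k i - L k| ≤ 1 / (i + 1) :=
    fun i k hk => hNacc i (N'' i) (hN''P i) k hk
  have hblim : ∀ k, Tendsto (fun i => b' k i) atTop (nhds (L k)) :=
    fun k => (hθtend k).comp hN''mono.tendsto_atTop
  -- level truncations of the subsequence
  set V : ℕ → ℕ → Set Ω → ℝ := fun m i => tr C (F' i) l ((2:ℝ) ^ m) with hVdef
  have hF'fa : ∀ i, IsFinAdd C (F' i) := fun i => (hF (Φ i)).1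
  have hF'pos : ∀ i, ∀ A ∈ C, 0 ≤ F' i A := fun i => hFpos (Φ i)
  have hVfa : ∀ m i, IsFinAdd C (V m i) :=
    fun m i => tr_finAdd hC hlfa hlpos (hF'fa i) (hF'pos i) (hpow m)
  have hVpos : ∀ m i, ∀ A ∈ C, 0 ≤ V m i A :=
    fun m i A hA => tr_nonneg hC hlfa hlpos (hF'fa i) (hF'pos i) (hpow m) hA
  have hVdm : ∀ m i, Dm C l (V m i) ((2:ℝ)^m) := by
    intro m i
    apply Dm.of_pos_le (hVpos m i)
    intro A hA
    exact tr_le_nu hC hlfa hlpos (hF'fa i) (hF'pos i) (hpow m) hA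
  have hVuniv : ∀ m i, V m i univ = b' m i := fun m i => rfl
  have hVmono : ∀ m i, ∀ A ∈ C, V m i A ≤ V (m+1) i A := by
    intro m i A hA
    exact tr_mono hC hlfa hlpos (hF'fa i) (hF'pos i) (hpow m)
      (pow_le_pow_right₀ (by norm_num) (by omega)) hA
  -- stage recursion over levels
  set Good : ℕ → ((ℕ → Cmb) × (ℕ → Set Ω → ℝ)) → Prop := fun m p =>
    (∀ r, (p.1 r).ge' r) ∧ ∀ j ≤ m, IsFinAdd C (p.2 j) ∧ (∀ A ∈ C, 0 ≤ p.2 j A) ∧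
      Dm C l (p.2 j) ((2:ℝ)^j) ∧
      Tendsto (fun r => tvNorm C (fun A => (p.1 r).app (V j) A - p.2 j A)) atTop (nhds 0)
    with hGooddef
  have hbase : ∃ p, Good 0 p := by
    obtain ⟨c, ξ0, hge, hfa0, hpos0, hdm0, htend0⟩ :=
      core hC hlfa hlpos (hpow 0) (V 0) (hVfa 0) (hVpos 0) (hVdm 0)
    refine ⟨(c, fun _ => ξ0), hge, ?_⟩
    intro j hj
    interval_cases j
    exact ⟨hfa0, hpos0, hdm0, htend0⟩
  have hstep : ∀ m p, Good m p → ∃ p', Good (m+1) p' ∧ (∀ j ≤ m, p'.2 j = p.2 j) := by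
    intro m p hp
    obtain ⟨d, ξ', hdge, hfa', hpos', hdm', htend'⟩ :=
      core hC hlfa hlpos (hpow (m+1)) (fun j => (p.1 j).app (V (m+1)))
        (fun j => app_finAdd (hVfa (m+1)) (p.1 j))
        (fun j => app_pos (hVpos (m+1)) (p.1 j))
        (fun j => app_dm (hVdm (m+1)) (p.1 j))
    refine ⟨(fun r => Cmb.flat (d r) p.1, Function.update p.2 (m+1) ξ'), ⟨?_, ?_⟩, ?_⟩
    · intro r
      exact Cmb.flat_ge (hdge r) (fun j _ => hp.1 j)
    · intro j hj
      rcases Nat.lt_succ_iff_lt_or_eq.1 (Nat.lt_succ_of_le hj) with hjm | rfl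
      · have hjm' : j ≤ m := by omega
        have hupd : Function.update p.2 (m+1) ξ' j = p.2 j :=
          Function.update_of_ne (by omega) _ _
        simp only [hupd]
        obtain ⟨h1, h2, h3, h4⟩ := hp.2 j hjm'
        refine ⟨h1, h2, h3, ?_⟩
        -- convex combination of converging sequences still converges
        have hKnn : ∀ j', 0 ≤ tvNorm C (fun A => (p.1 j').app (V j) A - p.2 j A) :=
          fun j' => totalVar_nonneg _ _
        have hbvτ : ∀ j', ∀ P : Finset (Set Ω), IsPartition C P univ →
            pvar (fun A => (p.1 j').app (V j) A - p.2 j A) P ≤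
            tvNorm C (fun A => (p.1 j').app (V j) A - p.2 j A) := by
          intro j' P hP
          apply le_totalVar _ hP
          apply bddVar_of_bound
          intro P' hP'
          exact pvar_le_of_dm hC hlfa hlpos ((app_dm (hVdm j) (p.1 j')).sub h3) hP'
        have heq : ∀ r, (fun A => (Cmb.flat (d r) p.1).app (V j) A - p.2 j A) =
            (fun A => ∑ j' ∈ (d r).s, (d r).w j' *
              ((p.1 j').app (V j) A - p.2 j A)) := by
          intro r
          funext A
          have h5 : (Cmb.flat (d r) p.1).app (V j) A =
              ∑ j' ∈ (d r).s, (d r).w j' * (p.1 j').app (V j) A :=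
            congrFun (Cmb.flat_app (d r) p.1 (V j)) A
          have h6 : ∑ j' ∈ (d r).s, (d r).w j' * ((p.1 j').app (V j) A - p.2 j A) =
              (∑ j' ∈ (d r).s, (d r).w j' * (p.1 j').app (V j) A) -
              (∑ j' ∈ (d r).s, (d r).w j') * p.2 j A := by
            rw [Finset.sum_mul, ← Finset.sum_sub_distrib]
            apply Finset.sum_congr rfl
            intro j' _; ring
          rw [h5, h6, (d r).total, one_mul]
        rw [Metric.tendsto_atTop]
        intro ε hε
        obtain ⟨R, hR⟩ := (Metric.tendsto_atTop.1 h4) (ε/2) (half_pos hε)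
        refine ⟨R, fun r hr => ?_⟩
        have hbound : tvNorm C (fun A => (Cmb.flat (d r) p.1).app (V j) A - p.2 j A) ≤
            ε/2 := by
          rw [heq r]
          have h7 := tvNorm_app_le hC (d r)
            (fun j' => fun A => (p.1 j').app (V j) A - p.2 j A)
            (fun j' => tvNorm C (fun A => (p.1 j').app (V j) A - p.2 j A))
            (fun j' _ P hP => hbvτ j' P hP)
          apply h7.trans
          have h8 : ∀ j' ∈ (d r).s,
              (d r).w j' * tvNorm C (fun A => (p.1 j').app (V j) A - p.2 j A) ≤
              (d r).w j' * (ε/2) := by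
            intro j' hj'
            apply mul_le_mul_of_nonneg_left _ ((d r).nonneg j')
            have hj'R : R ≤ j' := hr.trans (hdge r j' hj')
            have := hR j' hj'R
            rw [Real.dist_eq, sub_zero] at this
            exact (le_abs_self _).trans this.le
          calc ∑ j' ∈ (d r).s, (d r).w j' *
                tvNorm C (fun A => (p.1 j').app (V j) A - p.2 j A)
              ≤ ∑ j' ∈ (d r).s, (d r).w j' * (ε/2) := Finset.sum_le_sum h8
            _ = ε/2 := by rw [← Finset.sum_mul, (d r).total, one_mul]
        have hnn : 0 ≤ tvNorm C (fun A => (Cmb.flat (d r) p.1).app (V j) A - p.2 j A) :=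
          totalVar_nonneg _ _
        show dist (tvNorm C (fun A => (Cmb.flat (d r) p.1).app (V j) A - p.2 j A)) 0 < ε
        rw [Real.dist_eq, sub_zero, abs_of_nonneg hnn]
        linarith
      · have hupd : Function.update p.2 (m+1) ξ' (m+1) = ξ' :=
          Function.update_self _ _ _
        simp only [hupd]
        refine ⟨hfa', hpos', hdm', ?_⟩
        have heq : ∀ r, (fun A => (Cmb.flat (d r) p.1).app (V (m+1)) A - ξ' A) =
            (fun A => (d r).app (fun j => (p.1 j).app (V (m+1))) A - ξ' A) := by
          intro r
          funext A
          have h5 : (Cmb.flat (d r) p.1).app (V (m+1)) A =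
              ∑ j' ∈ (d r).s, (d r).w j' * (p.1 j').app (V (m+1)) A :=
            congrFun (Cmb.flat_app (d r) p.1 (V (m+1))) A
          rw [h5]; rfl
        have := htend'
        apply Tendsto.congr _ this
        intro r
        rw [heq r]
    · intro j hj
      exact Function.update_of_ne (by omega) _ _
  obtain ⟨pkg, hGoodall, hRall⟩ := exists_seq_rec Good
    (fun m p q => ∀ j ≤ m, q.2 j = p.2 j) hbase hstep
  set S : ℕ → ℕ → Cmb := fun m => (pkg m).1 with hSdef
  set xi : ℕ → Set Ω → ℝ := fun m => (pkg m).2 m with hxidef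
  have hcoh : ∀ m j, j ≤ m → (pkg m).2 j = xi j := by
    intro m
    induction m with
    | zero => intro j hj; interval_cases j; rfl
    | succ m ih =>
      intro j hj
      rcases Nat.lt_succ_iff_lt_or_eq.1 (Nat.lt_succ_of_le hj) with hjm | rfl
      · have hjm' : j ≤ m := by omega
        rw [hRall m j hjm', ih j hjm']
      · rfl
  have hSge : ∀ m r, (S m r).ge' r := fun m r => (hGoodall m).1 r
  have hstage : ∀ m j, j ≤ m →
      Tendsto (fun r => tvNorm C (fun A => (S m r).app (V j) A - xi j A)) atTop (nhds 0) := by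
    intro m j hj
    have h := ((hGoodall m).2 j hj).2.2.2
    rw [hcoh m j hj] at h
    exact h
  have hxifa : ∀ j, IsFinAdd C (xi j) := fun j => ((hGoodall j).2 j le_rfl).1
  have hxipos : ∀ j, ∀ A ∈ C, 0 ≤ xi j A := fun j => ((hGoodall j).2 j le_rfl).2.1
  have hxidm : ∀ j, Dm C l (xi j) ((2:ℝ)^j) := fun j => ((hGoodall j).2 j le_rfl).2.2.1
  -- pointwise convergence of the stage combinations
  have happt : ∀ m j, j ≤ m → ∀ A, A ∈ C →
      Tendsto (fun r => (S m r).app (V j) A) atTop (nhds (xi j A)) := by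
    intro m j hj A hA
    rw [tendsto_iff_dist_tendsto_zero]
    apply squeeze_zero (f := fun r => dist ((S m r).app (V j) A) (xi j A))
      (g := fun r => tvNorm C (fun A => (S m r).app (V j) A - xi j A))
      (fun r => dist_nonneg) _ (hstage m j hj)
    intro r
    show dist ((S m r).app (V j) A) (xi j A) ≤
      tvNorm C (fun A => (S m r).app (V j) A - xi j A)
    rw [Real.dist_eq]
    have hbv : BddVar C (fun A => (S m r).app (V j) A - xi j A) :=
      bddVar_of_bound (fun P hP =>
        pvar_le_of_dm hC hlfa hlpos ((app_dm (hVdm j) (S m r)).sub (hxidm j)) hP)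
    exact abs_le_tvNorm hC hbv hA
  have hxiuniv : ∀ m, xi m univ = L m := by
    intro m
    have h1 := happt m m le_rfl univ (univ_mem hC)
    have h2 : Tendsto (fun r => (S m r).app (V m) univ) atTop (nhds (L m)) :=
      tendsto_app_of_tendsto (S m) (hSge m) (fun i => b' m i) (L m) (hblim m)
    exact tendsto_nhds_unique h1 h2
  have hximono' : ∀ m, ∀ A ∈ C, xi m A ≤ xi (m+1) A := by
    intro m A hA
    apply le_of_tendsto_of_tendsto' (happt (m+1) m (by omega) A hA)
      (happt (m+1) (m+1) le_rfl A hA)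
    intro r
    apply Finset.sum_le_sum
    intro i _
    exact mul_le_mul_of_nonneg_left (hVmono m i A hA) ((S (m+1) r).nonneg i)
  have hximono : ∀ A, A ∈ C → Monotone (fun m => xi m A) := fun A hA =>
    monotone_nat_of_le_succ (fun m => hximono' m A hA)
  have hxiuniv_le : ∀ m, ∀ A ∈ C, xi m A ≤ L m := by
    intro m A hA
    have h1 : xi m A ≤ xi m univ :=
      finadd_mono hC (hxifa m) (hxipos m) hA (univ_mem hC) (Set.subset_univ A)
    rw [hxiuniv m] at h1
    exact h1
  -- the limit measure
  set ξ : Set Ω → ℝ := fun A => ⨆ m, xi m A with hξdef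
  have hξbdd : ∀ A, A ∈ C → BddAbove (Set.range fun m => xi m A) := fun A hA =>
    ⟨M₀, by rintro x ⟨m, rfl⟩; exact (hxiuniv_le m A hA).trans (hLM m)⟩
  have hξtend : ∀ A, A ∈ C → Tendsto (fun m => xi m A) atTop (nhds (ξ A)) := fun A hA =>
    tendsto_atTop_ciSup (hximono A hA) (hξbdd A hA)
  have hξfa : IsFinAdd C ξ := by
    constructor
    · have h := hξtend ∅ hC.1
      have h0 : (fun m => xi m ∅) = fun _ => (0:ℝ) := funext fun m => (hxifa m).1
      rw [h0] at h
      exact tendsto_nhds_unique h tendsto_const_nhds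
    · intro A hA B' hB' hd
      have h1 := hξtend (A ∪ B') (union_mem hC hA hB')
      have heq : (fun m => xi m (A ∪ B')) = fun m => xi m A + xi m B' :=
        funext fun m => (hxifa m).2 A hA B' hB' hd
      rw [heq] at h1
      exact tendsto_nhds_unique h1 ((hξtend A hA).add (hξtend B' hB'))
  have hξpos : ∀ A ∈ C, 0 ≤ ξ A := fun A hA =>
    ge_of_tendsto (hξtend A hA) (Filter.Eventually.of_forall fun m => hxipos m A hA)
  have hξuniv : ξ univ = Linf := by
    have h1 := hξtend univ (univ_mem hC)
    have heq : (fun m => xi m univ) = L := funext hxiuniv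
    rw [heq] at h1
    exact tendsto_nhds_unique h1 hLtend
  have hξxi : ∀ m, ∀ A, A ∈ C → xi m A ≤ ξ A := fun m A hA => le_ciSup (hξbdd A hA) m
  have hξnorm : tvNorm C ξ = Linf := by
    have h1 : tvNorm C ξ = ξ univ := totalVar_of_pos hC hξfa hξpos (univ_mem hC)
    rw [h1, hξuniv]
  have hξmemba : Memba C ξ :=
    ⟨hξfa, bddVar_of_bound (fun P hP => le_of_eq (pvar_eq_of_pos hC hξfa hξpos hP))⟩
  have hdiffm : ∀ m, IsFinAdd C (fun A => ξ A - xi m A) := fun m => finAdd_sub hξfa (hxifa m)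
  have hdiffpos : ∀ m, ∀ A ∈ C, 0 ≤ ξ A - xi m A := fun m A hA => by
    have := hξxi m A hA; linarith
  have hdiff_tv : ∀ m, tvNorm C (fun A => ξ A - xi m A) = Linf - L m := by
    intro m
    have h1 : tvNorm C (fun A => ξ A - xi m A) = ξ univ - xi m univ :=
      totalVar_of_pos hC (hdiffm m) (hdiffpos m) (univ_mem hC)
    rw [h1, hξuniv, hxiuniv m]
  have hdiff_bv : ∀ m, BddVar C (fun A => ξ A - xi m A) := fun m =>
    bddVar_of_bound (fun P hP => le_of_eq (pvar_eq_of_pos hC (hdiffm m) (hdiffpos m) hP))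
  -- absolute continuity
  have habs : AbsCont C ξ l := by
    intro ε hε
    have h1 : ∀ᶠ m in atTop, Linf - L m < ε/2 := by
      rw [Metric.tendsto_atTop] at hLtend
      obtain ⟨N, hN⟩ := hLtend (ε/2) (by linarith)
      filter_upwards [Filter.eventually_ge_atTop N] with m hm
      have h2 := hN m hm
      rw [Real.dist_eq] at h2
      have h3 := abs_lt.1 h2
      linarith [h3.1, h3.2]
    obtain ⟨m, hm⟩ := h1.exists
    refine ⟨ε/(2 * 2^m), by positivity, ?_⟩
    intro A hA hlA
    have h3 : totalVar C ξ A = ξ A := totalVar_of_pos hC hξfa hξpos hA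
    rw [h3]
    have h4 : ξ A - xi m A ≤ Linf - L m := by
      have h5 := abs_le_tvNorm hC (hdiff_bv m) hA
      rw [hdiff_tv m] at h5
      exact (le_abs_self _).trans h5
    have h6 : xi m A ≤ 2^m * l A := (le_abs_self _).trans (hxidm m A hA)
    have h7 : (2:ℝ)^m * l A < 2^m * (ε/(2*2^m)) :=
      mul_lt_mul_of_pos_left hlA (by positivity)
    have h8 : (2:ℝ)^m * (ε/(2*2^m)) = ε/2 := by field_simp
    linarith
  -- near optimal truncation sets
  have hBex : ∀ i : ℕ, ∃ Bi ∈ C,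
      F' i Bi + 2^i * l Biᶜ < tr C (F' i) l ((2:ℝ)^i) univ + 1/(i+1) := fun i =>
    tr_exists_opt hC hlfa hlpos (hF'fa i) (hF'pos i) (hpow i) (by positivity)
  choose B hBC hBoptlt using hBex
  have hBopt : ∀ i, F' i (B i) + 2^i * l (B i)ᶜ ≤ tr C (F' i) l ((2:ℝ)^i) univ + 1/(i+1) :=
    fun i => (hBoptlt i).le
  have hone_le : ∀ i : ℕ, (1:ℝ)/(i+1) ≤ 1 := by
    intro i
    rw [div_le_one (by positivity)]
    have : (0:ℝ) ≤ (i:ℝ) := Nat.cast_nonneg i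
    linarith
  have hlBc : ∀ i, l (B i)ᶜ ≤ (M₀ + 1) * (1/2)^i := by
    intro i
    have h1 := opt_l_compl_le hC hlfa hlpos (hF'fa i) (hF'pos i) (t := 2^i)
      (by positivity) (by positivity) (hBC i) (hBopt i)
    apply h1.trans
    have h2 : F' i univ + 1/(i+1) ≤ M₀ + 1 :=
      add_le_add (hFuniv (Φ i)) (hone_le i)
    calc (F' i univ + 1/(i+1))/2^i ≤ (M₀+1)/2^i := by gcongr
      _ = (M₀+1)*(1/2)^i := by
          rw [one_div, inv_pow, div_eq_mul_inv]
  -- the γ comparison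
  have hgam : ∀ m i, m ≤ i → tvNorm C (fun A => F' i (B i ∩ A) - V m i A) ≤
      (b' i i - b' m i) + 1/(i+1) + 2*((2:ℝ)^m * l (B i)ᶜ) :=
    fun m i hmi => rstr_sub_tr_le hC hlfa hlpos (hF'fa i) (hF'pos i) (hpow m)
      (pow_le_pow_right₀ (by norm_num) hmi) (by positivity) (hBC i) (hBopt i)
  have hgam2 : ∀ m : ℕ, ∀ η > (0:ℝ), ∃ I₀, ∀ i ≥ I₀, m ≤ i ∧
      tvNorm C (fun A => F' i (B i ∩ A) - V m i A) ≤ (Linf - L m) + η := by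
    intro m η hη
    have htail : Tendsto (fun i : ℕ => 3/((i:ℝ)+1) + 2^(m+1)*(M₀+1)*(1/2)^i) atTop
        (nhds 0) := by
      have ht1 : Tendsto (fun i : ℕ => 3/((i:ℝ)+1)) atTop (nhds 0) := by
        have := tendsto_one_div_add_atTop_nhds_zero_nat (𝕜 := ℝ)
        have h2 := this.const_mul (3:ℝ)
        simp only [mul_zero] at h2
        apply h2.congr
        intro i
        ring
      have ht2 : Tendsto (fun i : ℕ => 2^(m+1)*(M₀+1)*((1:ℝ)/2)^i) atTop (nhds 0) := by
        have h3 : Tendsto (fun i : ℕ => ((1:ℝ)/2)^i) atTop (nhds 0) :=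
          tendsto_pow_atTop_nhds_zero_of_lt_one (by norm_num) (by norm_num)
        have h4 := h3.const_mul ((2:ℝ)^(m+1)*(M₀+1))
        simp only [mul_zero] at h4
        exact h4
      have := ht1.add ht2
      simpa using this
    have hev : ∀ᶠ i : ℕ in atTop, 3/((i:ℝ)+1) + 2^(m+1)*(M₀+1)*(1/2)^i ≤ η := by
      rw [Metric.tendsto_atTop] at htail
      obtain ⟨N, hN⟩ := htail η hη
      filter_upwards [Filter.eventually_ge_atTop N] with i hi
      have := hN i hi
      rw [Real.dist_eq, sub_zero] at this
      exact (le_abs_self _).trans this.le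
    obtain ⟨I₁, hI₁⟩ := Filter.eventually_atTop.1 hev
    refine ⟨max m I₁, fun i hi => ⟨le_trans (le_max_left _ _) hi, ?_⟩⟩
    have hmi : m ≤ i := le_trans (le_max_left _ _) hi
    have hiI : I₁ ≤ i := le_trans (le_max_right _ _) hi
    have h1 := hgam m i hmi
    have h2 : b' i i ≤ Linf + 1/(i+1) := by
      have h3 := hbacc i i (by omega)
      have h4 := abs_le.1 h3
      have h5 := hLleinf i
      linarith [h4.1, h4.2]
    have h6 : L m - 1/(i+1) ≤ b' m i := by
      have h3 := hbacc i m (by omega)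
      have h4 := abs_le.1 h3
      linarith [h4.1, h4.2]
    have h7 : 2*((2:ℝ)^m * l (B i)ᶜ) ≤ 2^(m+1)*(M₀+1)*(1/2)^i := by
      have h8 := hlBc i
      have h9 : (0:ℝ) < 2^m := by positivity
      calc 2*((2:ℝ)^m * l (B i)ᶜ) ≤ 2*((2:ℝ)^m * ((M₀+1)*(1/2)^i)) := by
            apply mul_le_mul_of_nonneg_left _ (by norm_num)
            exact mul_le_mul_of_nonneg_left h8 (by positivity)
        _ = 2^(m+1)*(M₀+1)*(1/2)^i := by ring
    have h10 := hI₁ i hiI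
    have he3 : (3:ℝ)/(i+1) = 1/(i+1) + 1/(i+1) + 1/(i+1) := by ring
    apply h1.trans
    linarith
  -- choice of stage and index for each n
  have hmch : ∀ n : ℕ, ∃ m, Linf - L m ≤ 1/((n:ℝ)+1) := by
    intro n
    obtain ⟨N, hN⟩ := Metric.tendsto_atTop.1 hLtend (1/((n:ℝ)+1)) (by positivity)
    refine ⟨N, ?_⟩
    have h1 := hN N le_rfl
    rw [Real.dist_eq] at h1
    have h2 := abs_lt.1 h1
    linarith [h2.1, h2.2]
  have hrch : ∀ n : ℕ, ∃ (m r : ℕ),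
      (Linf - L m ≤ 1/((n:ℝ)+1)) ∧ n ≤ r ∧ m + n ≤ r ∧
      (∀ i ≥ r, m ≤ i ∧ tvNorm C (fun A => F' i (B i ∩ A) - V m i A) ≤
        (Linf - L m) + 1/((n:ℝ)+1)) ∧
      tvNorm C (fun A => (S m r).app (V m) A - xi m A) ≤ 1/((n:ℝ)+1) := by
    intro n
    obtain ⟨m, hm⟩ := hmch n
    obtain ⟨I₀, hI₀⟩ := hgam2 m (1/((n:ℝ)+1)) (by positivity)
    obtain ⟨R, hR⟩ := Metric.tendsto_atTop.1 (hstage m m le_rfl) (1/((n:ℝ)+1)) (by positivity)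
    refine ⟨m, max (max n (m+n)) (max I₀ R), hm, ?_, ?_, ?_, ?_⟩
    · exact le_trans (le_max_left n (m+n)) (le_max_left _ _)
    · exact le_trans (le_max_right n (m+n)) (le_max_left _ _)
    · intro i hi
      exact hI₀ i (le_trans (le_trans (le_max_left I₀ R) (le_max_right _ _)) hi)
    · have h1 := hR (max (max n (m+n)) (max I₀ R))
        (le_trans (le_max_right I₀ R) (le_max_right _ _))
      rw [Real.dist_eq, sub_zero] at h1
      exact (le_abs_self _).trans h1.le
  choose mf rf hQ1 hQ2 hQ3 hQ4 hQ5 using hrch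
  set w : ℕ → Cmb := fun n => S (mf n) (rf n) with hwdef
  set Gg : ℕ → Set Ω → ℝ := fun n => (w n).app F' with hGgdef
  set An : ℕ → Set Ω := fun n => ⋂ i ∈ (w n).s, B i with hAndef
  have hwge : ∀ n, ∀ i ∈ (w n).s, rf n ≤ i := fun n => hSge (mf n) (rf n)
  have hsupge : ∀ n, ∀ i ∈ (w n).s, n ≤ i := fun n i hi => le_trans (hQ2 n) (hwge n i hi)
  have hAnC : ∀ n, An n ∈ C := fun n => biInter_mem hC _ B (fun i _ => hBC i)
  -- G in the convex hull of the tails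
  have hGmem : ∀ n, Gg n ∈ convexHull ℝ (tailSet F n) := by
    intro n
    have hG_eq : Gg n = (w n).s.centerMass (w n).w (fun i => F (Φ i)) := by
      rw [Finset.centerMass, (w n).total, inv_one, one_smul]
      funext A
      show ∑ i ∈ (w n).s, (w n).w i * F' i A = _
      rw [Finset.sum_apply]
      apply Finset.sum_congr rfl
      intro i _
      simp [Pi.smul_apply, smul_eq_mul, hF'def]
    rw [hG_eq]
    apply Finset.centerMass_mem_convexHull _ (fun i _ => (w n).nonneg i)
      (by rw [(w n).total]; norm_num)
    intro i hi
    exact ⟨Φ i, le_trans (hsupge n i hi) (hΦge i), rfl⟩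
  -- measure of the complements
  have hAn_compl : ∀ n, (An n)ᶜ = ⋃ i ∈ (w n).s, (B i)ᶜ := by
    intro n
    simp [hAndef, Set.compl_iInter]
  have hlAn' : ∀ n, l (An n)ᶜ ≤ 2*(M₀+1)*(1/2)^(rf n) := by
    intro n
    rw [hAn_compl n]
    have h1 := finadd_biUnion_le hC hlfa hlpos (w n).s (fun i => (B i)ᶜ)
      (fun i _ => compl_mem hC (hBC i))
    apply h1.trans
    have h2 : ∀ i ∈ (w n).s, l (B i)ᶜ ≤ (M₀+1)*(1/2)^i := fun i _ => hlBc i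
    calc ∑ i ∈ (w n).s, l (B i)ᶜ ≤ ∑ i ∈ (w n).s, (M₀+1)*(1/2)^i := Finset.sum_le_sum h2
      _ = (M₀+1) * ∑ i ∈ (w n).s, ((1:ℝ)/2)^i := by rw [Finset.mul_sum]
      _ ≤ (M₀+1) * (2*(1/2)^(rf n)) := by
          apply mul_le_mul_of_nonneg_left (geom_tail_le _ _ (hwge n)) (by linarith)
      _ = 2*(M₀+1)*(1/2)^(rf n) := by ring
  have hlAn : ∀ n, l (An n)ᶜ ≤ 2*(M₀+1)*(1/2)^n := by
    intro n
    apply (hlAn' n).trans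
    have h3 : ((1:ℝ)/2)^(rf n) ≤ (1/2)^n :=
      pow_le_pow_of_le_one (by norm_num) (by norm_num) (hQ2 n)
    have h4 : (0:ℝ) ≤ 2*(M₀+1) := by linarith
    exact mul_le_mul_of_nonneg_left h3 h4
  have hsummable : Summable (fun n => l (An n)ᶜ) := by
    apply Summable.of_nonneg_of_le (fun n => hlpos _ (compl_mem hC (hAnC n))) hlAn
    apply Summable.mul_left
    exact summable_geometric_of_lt_one (by norm_num) (by norm_num)
  -- the main error estimate
  have hAnBi : ∀ n, ∀ i ∈ (w n).s, An n ⊆ B i := by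
    intro n i hi x hx
    simp only [hAndef, Set.mem_iInter] at hx
    exact hx i hi
  have herr : ∀ n : ℕ, tvNorm C (fun A => Gg n (An n ∩ A) - ξ A) ≤
      (2*(M₀+1)*(1/2)^n + 2/((n:ℝ)+1)) + 2/((n:ℝ)+1) + 1/((n:ℝ)+1) + 1/((n:ℝ)+1) := by
    intro n
    set m := mf n with hmdef
    set r := rf n with hrdef
    set c : Cmb := w n with hcdef
    set D : ℕ → Set Ω := fun i => B i ∩ (An n)ᶜ with hDdef
    have hDC : ∀ i, D i ∈ C := fun i => inter_mem hC (hBC i) (compl_mem hC (hAnC n))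
    have hinv : (0:ℝ) < 1/((n:ℝ)+1) := by positivity
    -- pointwise split
    have hsplit : ∀ A, A ∈ C → Gg n (An n ∩ A) - ξ A =
        (∑ i ∈ c.s, c.w i * (-(F' i (D i ∩ A)))) +
        (∑ i ∈ c.s, c.w i * (F' i (B i ∩ A) - V m i A)) +
        (c.app (V m) A - xi m A) + (xi m A - ξ A) := by
      intro A hA
      have h1 : Gg n (An n ∩ A) = ∑ i ∈ c.s, c.w i * F' i (An n ∩ A) := rfl
      have happV : c.app (V m) A = ∑ i ∈ c.s, c.w i * V m i A := rfl
      have h2 : ∀ i ∈ c.s, F' i (B i ∩ A) = F' i (An n ∩ A) + F' i (D i ∩ A) := by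
        intro i hi
        have hBA : B i ∩ A = (An n ∩ A) ∪ (D i ∩ A) := by
          ext x
          simp only [Set.mem_inter_iff, Set.mem_union, Set.mem_compl_iff, hDdef]
          constructor
          · rintro ⟨hxB, hxA⟩
            by_cases hxAn : x ∈ An n
            · exact Or.inl ⟨hxAn, hxA⟩
            · exact Or.inr ⟨⟨hxB, hxAn⟩, hxA⟩
          · rintro (⟨hxAn, hxA⟩ | ⟨⟨hxB, _⟩, hxA⟩)
            · exact ⟨hAnBi n i hi hxAn, hxA⟩
            · exact ⟨hxB, hxA⟩
        have hdisj : Disjoint (An n ∩ A) (D i ∩ A) := by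
          rw [Set.disjoint_left]
          rintro x ⟨hxAn, _⟩ ⟨⟨_, hxc⟩, _⟩
          exact hxc hxAn
        rw [hBA]
        exact (hF'fa i).2 _ (inter_mem hC (hAnC n) hA) _ (inter_mem hC (hDC i) hA) hdisj
      have h3 : ∑ i ∈ c.s, c.w i * F' i (An n ∩ A) =
          ∑ i ∈ c.s, c.w i * (F' i (B i ∩ A) - F' i (D i ∩ A)) := by
        apply Finset.sum_congr rfl
        intro i hi
        rw [h2 i hi]; ring
      rw [h1, h3, happV]
      have h4 : ∑ i ∈ c.s, c.w i * (F' i (B i ∩ A) - F' i (D i ∩ A)) =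
          (∑ i ∈ c.s, c.w i * (-(F' i (D i ∩ A)))) +
          (∑ i ∈ c.s, c.w i * (F' i (B i ∩ A) - V m i A)) +
          (∑ i ∈ c.s, c.w i * V m i A) := by
        rw [← Finset.sum_add_distrib, ← Finset.sum_add_distrib]
        apply Finset.sum_congr rfl
        intro i _
        ring
      rw [h4]
      ring
    -- bddVar for the middle per-index difference
    have hbvi : ∀ i, BddVar C (fun A => F' i (B i ∩ A) - V m i A) := by
      intro i
      apply bddVar_of_bound (K := F' i (B i) + V m i univ)
      intro P hP
      apply (pvar_sub_le _ _ P).trans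
      have hp1 : pvar (fun A => F' i (B i ∩ A)) P = F' i (B i) := by
        have h5 := pvar_eq_of_pos hC (rstr_finAdd hC (hF'fa i) (hBC i))
          (fun E hE => hF'pos i _ (inter_mem hC (hBC i) hE)) hP
        rw [show rstr (F' i) (B i) univ = F' i (B i) by
          rw [rstr, Set.inter_univ]] at h5
        exact h5
      have hp2 : pvar (V m i) P = V m i univ :=
        pvar_eq_of_pos hC (hVfa m i) (hVpos m i) hP
      rw [hp1, hp2]
    have hgami : ∀ i ∈ c.s, tvNorm C (fun A => F' i (B i ∩ A) - V m i A) ≤ 2/((n:ℝ)+1) := by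
      intro i hi
      have hir : r ≤ i := hwge n i hi
      have h6 := (hQ4 n i hir).2
      have h7 := hQ1 n
      calc tvNorm C (fun A => F' i (B i ∩ A) - V m i A) ≤ (Linf - L m) + 1/((n:ℝ)+1) := h6
        _ ≤ 2/((n:ℝ)+1) := by
            have : (2:ℝ)/((n:ℝ)+1) = 1/((n:ℝ)+1) + 1/((n:ℝ)+1) := by ring
            linarith
    -- the crucial 2^m (1/2)^r ≤ (1/2)^n inequality
    have hpowmr : (2:ℝ)^m * (2*(M₀+1)*(1/2)^r) ≤ 2*(M₀+1)*(1/2)^n := by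
      have h8 : ((1:ℝ)/2)^r ≤ (1/2)^(m+n) :=
        pow_le_pow_of_le_one (by norm_num) (by norm_num) (hQ3 n)
      have h9 : (2:ℝ)^m * (1/2)^(m+n) = (1/2)^n := by
        rw [pow_add, ← mul_assoc, ← mul_pow]
        norm_num
      have h10 : (0:ℝ) ≤ 2*(M₀+1) := by linarith
      calc (2:ℝ)^m * (2*(M₀+1)*(1/2)^r) ≤ (2:ℝ)^m * (2*(M₀+1)*(1/2)^(m+n)) := by
            apply mul_le_mul_of_nonneg_left _ (by positivity)
            exact mul_le_mul_of_nonneg_left h8 h10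
        _ = 2*(M₀+1)*((2:ℝ)^m * (1/2)^(m+n)) := by ring
        _ = 2*(M₀+1)*(1/2)^n := by rw [h9]
    -- per-index bound for the first piece
    have hKi1 : ∀ i ∈ c.s, F' i (D i) ≤ 2*(M₀+1)*(1/2)^n + 2/((n:ℝ)+1) := by
      intro i hi
      have hAcC : (An n)ᶜ ∈ C := compl_mem hC (hAnC n)
      have h11 : |F' i (B i ∩ (An n)ᶜ) - V m i ((An n)ᶜ)| ≤
          tvNorm C (fun A => F' i (B i ∩ A) - V m i A) :=
        abs_le_tvNorm hC (hbvi i) hAcC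
      have h12 : tvNorm C (fun A => F' i (B i ∩ A) - V m i A) ≤
          (Linf - L m) + 1/((n:ℝ)+1) := (hQ4 n i (hwge n i hi)).2
      have h13 : V m i ((An n)ᶜ) ≤ 2^m * l (An n)ᶜ :=
        tr_le_nu hC hlfa hlpos (hF'fa i) (hF'pos i) (hpow m) hAcC
      have h14 : (2:ℝ)^m * l (An n)ᶜ ≤ 2*(M₀+1)*(1/2)^n := by
        have h15 := hlAn' n
        calc (2:ℝ)^m * l (An n)ᶜ ≤ (2:ℝ)^m * (2*(M₀+1)*(1/2)^r) := by
              apply mul_le_mul_of_nonneg_left h15 (by positivity)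
          _ ≤ 2*(M₀+1)*(1/2)^n := hpowmr
      have h16 := hQ1 n
      have h17 : F' i (D i) - V m i ((An n)ᶜ) ≤ (Linf - L m) + 1/((n:ℝ)+1) := by
        have := (le_abs_self _).trans (h11.trans h12)
        exact this
      have : (2:ℝ)/((n:ℝ)+1) = 1/((n:ℝ)+1) + 1/((n:ℝ)+1) := by ring
      linarith
    -- the four per-partition bounds
    have hb1 : ∀ P : Finset (Set Ω), IsPartition C P univ →
        pvar (fun A => ∑ i ∈ c.s, c.w i * (-(F' i (D i ∩ A)))) P ≤
          2*(M₀+1)*(1/2)^n + 2/((n:ℝ)+1) := by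
      intro P hP
      have h18 := pvar_app_le c (fun i => fun A => -(F' i (D i ∩ A)))
        (fun i => 2*(M₀+1)*(1/2)^n + 2/((n:ℝ)+1)) P ?_
      · apply h18.trans
        rw [← Finset.sum_mul, c.total, one_mul]
      · intro i hi
        have h19 : pvar (fun A => -(F' i (D i ∩ A))) P = pvar (fun A => F' i (D i ∩ A)) P :=
          pvar_neg _ P
        have h20 : pvar (fun A => F' i (D i ∩ A)) P = F' i (D i) := by
          have h21 := pvar_eq_of_pos hC (rstr_finAdd hC (hF'fa i) (hDC i))
            (fun E hE => hF'pos i _ (inter_mem hC (hDC i) hE)) hP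
          rw [show rstr (F' i) (D i) univ = F' i (D i) by
            rw [rstr, Set.inter_univ]] at h21
          exact h21
        rw [h19, h20]
        exact hKi1 i hi
    have hb2 : ∀ P : Finset (Set Ω), IsPartition C P univ →
        pvar (fun A => ∑ i ∈ c.s, c.w i * (F' i (B i ∩ A) - V m i A)) P ≤ 2/((n:ℝ)+1) := by
      intro P hP
      have h18 := pvar_app_le c (fun i => fun A => F' i (B i ∩ A) - V m i A)
        (fun i => 2/((n:ℝ)+1)) P ?_
      · apply h18.trans
        rw [← Finset.sum_mul, c.total, one_mul]
      · intro i hi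
        exact (le_totalVar (hbvi i) hP).trans (hgami i hi)
    have hb3 : ∀ P : Finset (Set Ω), IsPartition C P univ →
        pvar (fun A => c.app (V m) A - xi m A) P ≤ 1/((n:ℝ)+1) := by
      intro P hP
      have hbv3 : BddVar C (fun A => c.app (V m) A - xi m A) :=
        bddVar_of_bound (fun P' hP' =>
          pvar_le_of_dm hC hlfa hlpos ((app_dm (hVdm m) c).sub (hxidm m)) hP')
      exact (le_totalVar hbv3 hP).trans (hQ5 n)
    have hb4 : ∀ P : Finset (Set Ω), IsPartition C P univ →
        pvar (fun A => xi m A - ξ A) P ≤ 1/((n:ℝ)+1) := by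
      intro P hP
      rw [pvar_sub_comm]
      have h22 := pvar_eq_of_pos hC (hdiffm m) (hdiffpos m) hP
      rw [h22]
      show ξ univ - xi m univ ≤ 1/((n:ℝ)+1)
      rw [hξuniv, hxiuniv m]
      exact hQ1 n
    exact tvNorm_le_add4 hsplit
      (by positivity) (by positivity) (by positivity) (by positivity)
      hb1 hb2 hb3 hb4
  -- the convergence
  have htendsto : Tendsto (fun n => tvNorm C (fun A => Gg n (An n ∩ A) - ξ A)) atTop
      (nhds 0) := by
    apply squeeze_zero (fun n => totalVar_nonneg _ _) herr
    have h1 : Tendsto (fun n : ℕ => 2*(M₀+1)*((1:ℝ)/2)^n) atTop (nhds 0) := by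
      have h2 : Tendsto (fun n : ℕ => ((1:ℝ)/2)^n) atTop (nhds 0) :=
        tendsto_pow_atTop_nhds_zero_of_lt_one (by norm_num) (by norm_num)
      have h3 := h2.const_mul (2*(M₀+1))
      simpa using h3
    have h4 : Tendsto (fun n : ℕ => ((1:ℝ)/((n:ℝ)+1))) atTop (nhds 0) :=
      tendsto_one_div_add_atTop_nhds_zero_nat
    have h5 : Tendsto (fun n : ℕ =>
        (2*(M₀+1)*((1:ℝ)/2)^n + 2/((n:ℝ)+1)) + 2/((n:ℝ)+1) + 1/((n:ℝ)+1) + 1/((n:ℝ)+1))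
        atTop (nhds 0) := by
      have h6 : Tendsto (fun n : ℕ => 2/((n:ℝ)+1)) atTop (nhds 0) := by
        have h7 := h4.const_mul (2:ℝ)
        simp only [mul_zero] at h7
        apply h7.congr
        intro n
        ring
      have h8 := ((h1.add h6).add h6).add (h4.add h4)
      simp only [add_zero, zero_add] at h8
      apply h8.congr
      intro n
      ring
    exact h5
  -- assemble the statement
  refine ⟨ξ, Gg, An, hξmemba, hξpos, habs, ?_, hGmem, hAnC, htendsto, hsummable⟩
  have hiSup : (⨆ k : ℕ, Filter.limsup
      (fun n => tvNorm C (baInf C (F n) (fun B => (2:ℝ) ^ k * l B))) atTop) = cs := by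
    apply iSup_congr
    intro k
    have heq : (fun n => tvNorm C (baInf C (F n) (fun B => (2:ℝ) ^ k * l B))) =
        fun n => a k n := funext (hagoal k)
    rw [heq]
  rw [hiSup, hξnorm]
  linarith [hLinf_gt]
end
end

section
/- Let (F_n) be a norm bounded sequence in ba(𝒜)₊ that is asymptotically orthogonal, i.e. lim_n ‖F_n ∧ F_j‖ = 0 for every fixed j. Then for every finitely additive probability λ on 𝒜, sup_k limsup_n ‖F_n ∧ 2^k λ‖ = 0. -/
noncomputable section
open Filter Set

variable {Ω : Type}

namespace AO

variable {C : Set (Set Ω)} {μ ν : Set Ω → ℝ}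

lemma compl_mem (hC : IsSetAlg C) {A : Set Ω} (hA : A ∈ C) : Aᶜ ∈ C := hC.2.1 _ hA

lemma univ_mem (hC : IsSetAlg C) : (univ : Set Ω) ∈ C := by
  simpa using compl_mem hC hC.1

lemma union_mem (hC : IsSetAlg C) {A B : Set Ω} (hA : A ∈ C) (hB : B ∈ C) : A ∪ B ∈ C :=
  hC.2.2 _ hA _ hB

lemma inter_mem (hC : IsSetAlg C) {A B : Set Ω} (hA : A ∈ C) (hB : B ∈ C) : A ∩ B ∈ C := by
  have := compl_mem hC (union_mem hC (compl_mem hC hA) (compl_mem hC hB))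
  simpa [compl_union] using this

lemma biUnion_mem (hC : IsSetAlg C) {ι : Type} [DecidableEq ι] (s : Finset ι) (D : ι → Set Ω)
    (h : ∀ i ∈ s, D i ∈ C) : (⋃ i ∈ s, D i) ∈ C := by
  induction s using Finset.induction_on with
  | empty => simpa using hC.1
  | @insert a s ha ih =>
    rw [Finset.set_biUnion_insert]
    exact union_mem hC (h a (Finset.mem_insert_self a s))
      (ih fun i hi => h i (Finset.mem_insert_of_mem hi))

lemma biInter_mem (hC : IsSetAlg C) {ι : Type} [DecidableEq ι] (s : Finset ι) (D : ι → Set Ω)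
    (h : ∀ i ∈ s, D i ∈ C) : (⋂ i ∈ s, D i) ∈ C := by
  have : (⋂ i ∈ s, D i) = (⋃ i ∈ s, (D i)ᶜ)ᶜ := by simp
  rw [this]
  exact compl_mem hC (biUnion_mem hC s _ fun i hi => compl_mem hC (h i hi))

variable (hC : IsSetAlg C) (hμ : IsFinAdd C μ) (hμ0 : ∀ A ∈ C, 0 ≤ μ A)

lemma fa_mono (hC : IsSetAlg C) (hμ : IsFinAdd C μ) (hμ0 : ∀ A ∈ C, 0 ≤ μ A)
    {A B : Set Ω} (hA : A ∈ C) (hB : B ∈ C) (hAB : A ⊆ B) : μ A ≤ μ B := by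
  have h1 : B = A ∪ (B ∩ Aᶜ) := by
    rw [← Set.diff_eq, Set.union_diff_cancel hAB]
  have hBA : B ∩ Aᶜ ∈ C := inter_mem hC hB (compl_mem hC hA)
  have hd : Disjoint A (B ∩ Aᶜ) := by
    rw [Set.disjoint_left]; intro x hx hx'; exact hx'.2 hx
  have := hμ.2 A hA _ hBA hd
  rw [← h1] at this
  have := hμ0 _ hBA
  linarith

lemma fa_subadd_pair (hC : IsSetAlg C) (hμ : IsFinAdd C μ) (hμ0 : ∀ A ∈ C, 0 ≤ μ A)
    {A B : Set Ω} (hA : A ∈ C) (hB : B ∈ C) : μ (A ∪ B) ≤ μ A + μ B := by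
  have h1 : A ∪ B = A ∪ (B ∩ Aᶜ) := by
    rw [← Set.diff_eq, Set.union_diff_self]
  have hBA : B ∩ Aᶜ ∈ C := inter_mem hC hB (compl_mem hC hA)
  have hd : Disjoint A (B ∩ Aᶜ) := by
    rw [Set.disjoint_left]; intro x hx hx'; exact hx'.2 hx
  rw [h1, hμ.2 A hA _ hBA hd]
  have := fa_mono hC hμ hμ0 hBA hB (inter_subset_left)
  linarith

lemma fa_biUnion_subadd (hC : IsSetAlg C) (hμ : IsFinAdd C μ) (hμ0 : ∀ A ∈ C, 0 ≤ μ A)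
    {ι : Type} [DecidableEq ι] (s : Finset ι) (D : ι → Set Ω) (h : ∀ i ∈ s, D i ∈ C) :
    μ (⋃ i ∈ s, D i) ≤ ∑ i ∈ s, μ (D i) := by
  induction s using Finset.induction_on with
  | empty => simp [hμ.1]
  | @insert a s ha ih =>
    rw [Finset.set_biUnion_insert, Finset.sum_insert ha]
    calc μ (D a ∪ ⋃ i ∈ s, D i) ≤ μ (D a) + μ (⋃ i ∈ s, D i) :=
          fa_subadd_pair hC hμ hμ0 (h a (Finset.mem_insert_self a s))
            (biUnion_mem hC s D fun i hi => h i (Finset.mem_insert_of_mem hi))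
      _ ≤ _ := by
          have := ih (fun i hi => h i (Finset.mem_insert_of_mem hi))
          linarith

lemma fa_biUnion_add (hC : IsSetAlg C) (hμ : IsFinAdd C μ)
    {ι : Type} [DecidableEq ι] (s : Finset ι) (D : ι → Set Ω) (h : ∀ i ∈ s, D i ∈ C)
    (hd : ∀ i ∈ s, ∀ j ∈ s, i ≠ j → Disjoint (D i) (D j)) :
    μ (⋃ i ∈ s, D i) = ∑ i ∈ s, μ (D i) := by
  induction s using Finset.induction_on with
  | empty => simp [hμ.1]
  | @insert a s ha ih =>
    rw [Finset.set_biUnion_insert, Finset.sum_insert ha]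
    have hdj : Disjoint (D a) (⋃ i ∈ s, D i) := by
      rw [Set.disjoint_iUnion₂_right]
      intro i hi
      exact hd a (Finset.mem_insert_self a s) i (Finset.mem_insert_of_mem hi)
        (fun he => ha (he ▸ hi))
    rw [hμ.2 _ (h a (Finset.mem_insert_self a s)) _
      (biUnion_mem hC s D fun i hi => h i (Finset.mem_insert_of_mem hi)) hdj,
      ih (fun i hi => h i (Finset.mem_insert_of_mem hi))
        (fun i hi j hj => hd i (Finset.mem_insert_of_mem hi) j (Finset.mem_insert_of_mem hj))]


/-- The defining set for `baInf`. -/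
def baSet (C : Set (Set Ω)) (μ ν : Set Ω → ℝ) (A : Set Ω) : Set ℝ :=
  {x | ∃ B ∈ C, x = μ (A ∩ B) + ν (A ∩ Bᶜ)}

lemma baInf_def (C : Set (Set Ω)) (μ ν : Set Ω → ℝ) (A : Set Ω) :
    baInf C μ ν A = sInf (baSet C μ ν A) := rfl

lemma baSet_nonempty (hC : IsSetAlg C) (μ ν : Set Ω → ℝ) (A : Set Ω) :
    (baSet C μ ν A).Nonempty :=
  ⟨_, ⟨∅, hC.1, rfl⟩⟩

variable {ν : Set Ω → ℝ}

lemma baSet_bddBelow (hC : IsSetAlg C) (hμ0 : ∀ A ∈ C, 0 ≤ μ A) (hν0 : ∀ A ∈ C, 0 ≤ ν A)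
    {A : Set Ω} (hA : A ∈ C) : BddBelow (baSet C μ ν A) := by
  refine ⟨0, ?_⟩
  rintro x ⟨B, hB, rfl⟩
  have h1 := hμ0 _ (inter_mem hC hA hB)
  have h2 := hν0 _ (inter_mem hC hA (compl_mem hC hB))
  linarith

lemma baInf_nonneg (hC : IsSetAlg C) (hμ0 : ∀ A ∈ C, 0 ≤ μ A) (hν0 : ∀ A ∈ C, 0 ≤ ν A)
    {A : Set Ω} (hA : A ∈ C) : 0 ≤ baInf C μ ν A := by
  apply le_csInf (baSet_nonempty hC μ ν A)
  rintro x ⟨B, hB, rfl⟩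
  have h1 := hμ0 _ (inter_mem hC hA hB)
  have h2 := hν0 _ (inter_mem hC hA (compl_mem hC hB))
  linarith

lemma baInf_le (hC : IsSetAlg C) (hμ0 : ∀ A ∈ C, 0 ≤ μ A) (hν0 : ∀ A ∈ C, 0 ≤ ν A)
    {A B : Set Ω} (hA : A ∈ C) (hB : B ∈ C) :
    baInf C μ ν A ≤ μ (A ∩ B) + ν (A ∩ Bᶜ) :=
  csInf_le (baSet_bddBelow hC hμ0 hν0 hA) ⟨B, hB, rfl⟩

lemma baInf_le_right (hC : IsSetAlg C) (hμ : IsFinAdd C μ) (hμ0 : ∀ A ∈ C, 0 ≤ μ A)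
    (hν0 : ∀ A ∈ C, 0 ≤ ν A) {A : Set Ω} (hA : A ∈ C) : baInf C μ ν A ≤ ν A := by
  have := baInf_le (μ := μ) (ν := ν) hC hμ0 hν0 hA hC.1
  simpa [hμ.1] using this

lemma baInf_empty (hC : IsSetAlg C) (hμ : IsFinAdd C μ) (hν : IsFinAdd C ν) :
    baInf C μ ν ∅ = 0 := by
  have : baSet C μ ν ∅ = {0} := by
    ext x
    constructor
    · rintro ⟨B, hB, rfl⟩; simp [hμ.1, hν.1]
    · rintro rfl; exact ⟨∅, hC.1, by simp [hμ.1, hν.1]⟩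
  rw [baInf_def, this, csInf_singleton]

lemma baInf_symm_univ (hC : IsSetAlg C) (μ ν : Set Ω → ℝ) :
    baInf C μ ν univ = baInf C ν μ univ := by
  rw [baInf_def, baInf_def]
  congr 1
  ext x
  constructor
  · rintro ⟨B, hB, rfl⟩
    exact ⟨Bᶜ, compl_mem hC hB, by simp [add_comm]⟩
  · rintro ⟨B, hB, rfl⟩
    exact ⟨Bᶜ, compl_mem hC hB, by simp [add_comm]⟩

lemma baInf_add (hC : IsSetAlg C) (hμ : IsFinAdd C μ) (hμ0 : ∀ A ∈ C, 0 ≤ μ A)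
    (hν : IsFinAdd C ν) (hν0 : ∀ A ∈ C, 0 ≤ ν A)
    {A1 A2 : Set Ω} (h1 : A1 ∈ C) (h2 : A2 ∈ C) (hd : Disjoint A1 A2) :
    baInf C μ ν (A1 ∪ A2) = baInf C μ ν A1 + baInf C μ ν A2 := by
  have hA : A1 ∪ A2 ∈ C := union_mem hC h1 h2
  apply le_antisymm
  · apply le_of_forall_pos_le_add
    intro ε hε
    obtain ⟨x1, ⟨B1, hB1, rfl⟩, hx1⟩ :=
      exists_lt_of_csInf_lt (baSet_nonempty hC μ ν A1)
        (show sInf (baSet C μ ν A1) < baInf C μ ν A1 + ε/2 by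
          rw [← baInf_def]; linarith)
    obtain ⟨x2, ⟨B2, hB2, rfl⟩, hx2⟩ :=
      exists_lt_of_csInf_lt (baSet_nonempty hC μ ν A2)
        (show sInf (baSet C μ ν A2) < baInf C μ ν A2 + ε/2 by
          rw [← baInf_def]; linarith)
    set B : Set Ω := (A1 ∩ B1) ∪ (A2 ∩ B2) with hBdef
    have hB : B ∈ C := union_mem hC (inter_mem hC h1 hB1) (inter_mem hC h2 hB2)
    have key := baInf_le (μ := μ) (ν := ν) hC hμ0 hν0 hA hB
    have hd' : ∀ x, x ∈ A1 → x ∉ A2 := fun x hx => Set.disjoint_left.1 hd hx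
    have e1 : (A1 ∪ A2) ∩ B = (A1 ∩ B1) ∪ (A2 ∩ B2) := by
      apply Set.inter_eq_self_of_subset_right
      exact Set.union_subset_union Set.inter_subset_left Set.inter_subset_left
    have e2 : (A1 ∪ A2) ∩ Bᶜ = (A1 ∩ B1ᶜ) ∪ (A2 ∩ B2ᶜ) := by
      ext x
      have := hd' x
      simp only [hBdef, Set.mem_inter_iff, Set.mem_union, Set.mem_compl_iff,
        Set.mem_inter_iff, Set.mem_union]
      tauto
    have dμ : Disjoint (A1 ∩ B1) (A2 ∩ B2) :=
      hd.mono Set.inter_subset_left Set.inter_subset_left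
    have dν : Disjoint (A1 ∩ B1ᶜ) (A2 ∩ B2ᶜ) :=
      hd.mono Set.inter_subset_left Set.inter_subset_left
    rw [e1, e2, hμ.2 _ (inter_mem hC h1 hB1) _ (inter_mem hC h2 hB2) dμ,
      hν.2 _ (inter_mem hC h1 (compl_mem hC hB1)) _ (inter_mem hC h2 (compl_mem hC hB2)) dν]
      at key
    linarith
  · rw [baInf_def (A := A1 ∪ A2)]
    apply le_csInf (baSet_nonempty hC μ ν _)
    rintro x ⟨B, hB, rfl⟩
    have e1 : (A1 ∪ A2) ∩ B = (A1 ∩ B) ∪ (A2 ∩ B) := Set.union_inter_distrib_right _ _ _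
    have e2 : (A1 ∪ A2) ∩ Bᶜ = (A1 ∩ Bᶜ) ∪ (A2 ∩ Bᶜ) := Set.union_inter_distrib_right _ _ _
    have dμ : Disjoint (A1 ∩ B) (A2 ∩ B) :=
      hd.mono Set.inter_subset_left Set.inter_subset_left
    have dν : Disjoint (A1 ∩ Bᶜ) (A2 ∩ Bᶜ) :=
      hd.mono Set.inter_subset_left Set.inter_subset_left
    rw [e1, e2, hμ.2 _ (inter_mem hC h1 hB) _ (inter_mem hC h2 hB) dμ,
      hν.2 _ (inter_mem hC h1 (compl_mem hC hB)) _ (inter_mem hC h2 (compl_mem hC hB)) dν]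
    have i1 := baInf_le (μ := μ) (ν := ν) hC hμ0 hν0 h1 hB
    have i2 := baInf_le (μ := μ) (ν := ν) hC hμ0 hν0 h2 hB
    linarith


lemma finset_sUnion_mem (hC : IsSetAlg C) (π : Finset (Set Ω)) (h : ∀ E ∈ π, E ∈ C) :
    ⋃₀ (π : Set (Set Ω)) ∈ C := by
  classical
  induction π using Finset.induction_on with
  | empty => simpa using hC.1
  | @insert E π hE ih =>
    rw [Finset.coe_insert, Set.sUnion_insert]
    exact union_mem hC (h E (Finset.mem_insert_self E π))
      (ih fun E' hE' => h E' (Finset.mem_insert_of_mem hE'))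

lemma partition_sum (hC : IsSetAlg C) {G : Set Ω → ℝ} (hG0 : G ∅ = 0)
    (hGadd : ∀ A ∈ C, ∀ B ∈ C, Disjoint A B → G (A ∪ B) = G A + G B) :
    ∀ (π : Finset (Set Ω)) (A : Set Ω), IsPartition C π A → ∑ E ∈ π, G E = G A := by
  classical
  intro π
  induction π using Finset.induction_on with
  | empty =>
    intro A hA
    have : A = ∅ := by simpa using hA.2.2.symm
    simp [this, hG0]
  | @insert E π hE ih =>
    intro A hA
    obtain ⟨hmem, hdisj, hun⟩ := hA
    have hmem' : ∀ E' ∈ π, E' ∈ C := fun E' h' => hmem E' (Finset.mem_insert_of_mem h')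
    have hπ : IsPartition C π (⋃₀ (π : Set (Set Ω))) :=
      ⟨hmem', hdisj.subset (by simp [Set.subset_insert]), rfl⟩
    have ihsum := ih _ hπ
    have hU : ⋃₀ (π : Set (Set Ω)) ∈ C := finset_sUnion_mem hC π hmem'
    have hEd : Disjoint E (⋃₀ (π : Set (Set Ω))) := by
      rw [Set.disjoint_sUnion_right]
      intro t ht
      exact hdisj (by simp) (by simp [ht]) (fun he => hE (by rw [he]; exact_mod_cast ht))
    have hA' : A = E ∪ ⋃₀ (π : Set (Set Ω)) := by
      rw [← hun, Finset.coe_insert, Set.sUnion_insert]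
    rw [Finset.sum_insert hE, ihsum, hA',
      hGadd E (hmem E (Finset.mem_insert_self E π)) _ hU hEd]

lemma tvNorm_eq (hC : IsSetAlg C) {G : Set Ω → ℝ} (hG0 : G ∅ = 0)
    (hGadd : ∀ A ∈ C, ∀ B ∈ C, Disjoint A B → G (A ∪ B) = G A + G B)
    (hGpos : ∀ A ∈ C, 0 ≤ G A) : tvNorm C G = G univ := by
  classical
  have hset : varSums C G univ = {G univ} := by
    ext x
    constructor
    · rintro ⟨π, hπ, rfl⟩
      have h1 := partition_sum hC hG0 hGadd π univ hπ
      have h2 : ∀ E ∈ π, |G E| = G E := fun E hE => abs_of_nonneg (hGpos E (hπ.1 E hE))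
      rw [Finset.sum_congr rfl h2, h1]
      rfl
    · rintro rfl
      refine ⟨{univ}, ⟨?_, ?_, ?_⟩, ?_⟩
      · intro E hE
        rw [Finset.mem_singleton] at hE
        rw [hE]; exact univ_mem hC
      · simp
      · simp
      · simp [abs_of_nonneg (hGpos _ (univ_mem hC))]
  rw [tvNorm, totalVar, hset, csSup_singleton]

/-- `baInf` of two nonnegative finitely additive set functions: its `tvNorm` is its value
at `univ`. -/
lemma tvNorm_baInf (hC : IsSetAlg C) (hμ : IsFinAdd C μ) (hμ0 : ∀ A ∈ C, 0 ≤ μ A)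
    (hν : IsFinAdd C ν) (hν0 : ∀ A ∈ C, 0 ≤ ν A) :
    tvNorm C (baInf C μ ν) = baInf C μ ν univ :=
  tvNorm_eq hC (baInf_empty hC hμ hν)
    (fun A hA B hB hd => baInf_add hC hμ hμ0 hν hν0 hA hB hd)
    (fun A hA => baInf_nonneg hC hμ0 hν0 hA)


lemma key (hC : IsSetAlg C) {m : ℕ} (f : Fin m → Set Ω → ℝ) (ν : Set Ω → ℝ)
    (hf : ∀ i, IsFinAdd C (f i)) (hf0 : ∀ i, ∀ A ∈ C, 0 ≤ f i A)
    (hν : IsFinAdd C ν) (hν0 : ∀ A ∈ C, 0 ≤ ν A)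
    {δ ε : ℝ} (hδ0 : 0 ≤ δ) (hε : 0 < ε)
    (hsmall : ∀ i j, i ≠ j → baInf C (f i) (f j) univ ≤ δ) :
    ∑ i, baInf C (f i) ν univ ≤ ν univ + 2 * (m:ℝ)^2 * (δ + ε) := by
  classical
  have hex : ∀ i j : Fin m, ∃ B, B ∈ C ∧ (i ≠ j → f i B + f j Bᶜ < δ + ε) := by
    intro i j
    by_cases hij : i = j
    · exact ⟨∅, hC.1, fun h => absurd hij h⟩
    · have h1 : sInf (baSet C (f i) (f j) univ) < δ + ε := by
        have := hsmall i j hij; rw [baInf_def] at this; linarith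
      obtain ⟨x, ⟨B, hBmem, rfl⟩, hx⟩ := exists_lt_of_csInf_lt (baSet_nonempty hC _ _ _) h1
      exact ⟨B, hBmem, fun _ => by simpa using hx⟩
  choose B hBC hB using hex
  set D : Fin m → Fin m → Set Ω := fun i j => (B i j)ᶜ ∩ B j i with hD
  have hDC : ∀ i j, D i j ∈ C := fun i j => inter_mem hC (compl_mem hC (hBC i j)) (hBC j i)
  set Ci : Fin m → Set Ω := fun i => ⋂ j ∈ Finset.univ.erase i, D i j with hCidef
  have hCiC : ∀ i, Ci i ∈ C := fun i => biInter_mem hC _ _ (fun j _ => hDC i j)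
  have hsub : ∀ i j, j ∈ Finset.univ.erase i → Ci i ⊆ D i j := by
    intro i j hj
    exact Set.iInter₂_subset j hj
  have hdisj : ∀ i j : Fin m, i ≠ j → Disjoint (Ci i) (Ci j) := by
    intro i j hij
    have h1 : Ci i ⊆ D i j := hsub i j (Finset.mem_erase.2 ⟨hij.symm, Finset.mem_univ j⟩)
    have h2 : Ci j ⊆ D j i := hsub j i (Finset.mem_erase.2 ⟨hij, Finset.mem_univ i⟩)
    have hDD : Disjoint (D i j) (D j i) := by
      have hss1 : D i j ⊆ B j i := Set.inter_subset_right
      have hss2 : D j i ⊆ (B j i)ᶜ := Set.inter_subset_left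
      exact Disjoint.mono hss1 hss2 disjoint_compl_right
    exact hDD.mono h1 h2
  have claim2 : ∀ i, baInf C (f i) ν univ ≤ f i ((Ci i)ᶜ) + ν (Ci i) := by
    intro i
    have := baInf_le (μ := f i) (ν := ν) hC (hf0 i) hν0 (univ_mem hC) (compl_mem hC (hCiC i))
    simpa [compl_compl] using this
  have claim3 : ∀ i, f i ((Ci i)ᶜ) ≤ (m:ℝ) * (2*(δ+ε)) := by
    intro i
    have hcompl : (Ci i)ᶜ = ⋃ j ∈ Finset.univ.erase i, (D i j)ᶜ := by
      simp [hCidef, Set.compl_iInter]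
    have hsb := fa_biUnion_subadd hC (hf i) (hf0 i) (Finset.univ.erase i) (fun j => (D i j)ᶜ)
      (fun j _ => compl_mem hC (hDC i j))
    have hterm : ∀ j ∈ Finset.univ.erase i, f i ((D i j)ᶜ) ≤ 2*(δ+ε) := by
      intro j hj
      have hji : j ≠ i := (Finset.mem_erase.1 hj).1
      have e : (D i j)ᶜ = B i j ∪ (B j i)ᶜ := by
        simp [hD, Set.compl_inter, compl_compl]
      have h1 : f i ((D i j)ᶜ) ≤ f i (B i j) + f i ((B j i)ᶜ) := by
        rw [e]; exact fa_subadd_pair hC (hf i) (hf0 i) (hBC i j) (compl_mem hC (hBC j i))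
      have h2 := hB i j hji.symm
      have h3 := hB j i hji
      have h4 := hf0 j _ (compl_mem hC (hBC i j))
      have h5 := hf0 j _ (hBC j i)
      linarith
    rw [hcompl]
    refine hsb.trans ?_
    refine (Finset.sum_le_card_nsmul _ _ _ hterm).trans ?_
    rw [nsmul_eq_mul]
    have hcard : (((Finset.univ.erase i).card : ℕ) : ℝ) ≤ (m:ℝ) := by
      have h : (Finset.univ.erase i).card ≤ m := by
        simpa using Finset.card_erase_le (s := (Finset.univ : Finset (Fin m))) (a := i)
      exact_mod_cast h
    have hpos : (0:ℝ) ≤ 2*(δ+ε) := by linarith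
    nlinarith
  have claim4 : ∑ i, ν (Ci i) ≤ ν univ := by
    rw [← fa_biUnion_add hC hν Finset.univ Ci (fun i _ => hCiC i)
      (fun i _ j _ hij => hdisj i j hij)]
    exact fa_mono hC hν hν0 (biUnion_mem hC _ _ fun i _ => hCiC i) (univ_mem hC)
      (subset_univ _)
  calc ∑ i, baInf C (f i) ν univ
      ≤ ∑ i, (f i ((Ci i)ᶜ) + ν (Ci i)) := Finset.sum_le_sum (fun i _ => claim2 i)
    _ = ∑ i, f i ((Ci i)ᶜ) + ∑ i, ν (Ci i) := Finset.sum_add_distrib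
    _ ≤ (∑ _i : Fin m, ((m:ℝ) * (2*(δ+ε)))) + ν univ :=
        add_le_add (Finset.sum_le_sum fun i _ => claim3 i) claim4
    _ = ν univ + 2*(m:ℝ)^2*(δ+ε) := by
        rw [Finset.sum_const, Finset.card_univ, Fintype.card_fin, nsmul_eq_mul]; ring


lemma select {g : ℕ → ℝ} {H : ℕ → ℕ → ℝ} {a δ' : ℝ}
    (hfreq : ∃ᶠ n in atTop, a < g n)
    (hH : ∀ j, Tendsto (fun n => H n j) atTop (nhds 0))
    (hsymm : ∀ p q, H p q = H q p) (hδ : 0 < δ') :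
    ∀ m : ℕ, ∃ s : Finset ℕ, s.card = m ∧ (∀ n ∈ s, a < g n) ∧
      ∀ p ∈ s, ∀ q ∈ s, p ≠ q → H p q < δ' := by
  intro m
  induction m with
  | zero => exact ⟨∅, rfl, by simp, by simp⟩
  | succ m ih =>
    obtain ⟨s, hcard, hg, hHs⟩ := ih
    have hev1 : ∀ᶠ n in atTop, ∀ j ∈ s, H n j < δ' := by
      rw [eventually_all_finset]
      intro j _
      exact (hH j).eventually (gt_mem_nhds hδ)
    have hev2 : ∀ᶠ n in atTop, n ∉ s := by
      have h : ∀ᶠ n in atTop, ∀ j ∈ s, n ≠ j := by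
        rw [eventually_all_finset]; intro j _; exact eventually_ne_atTop j
      exact h.mono fun n h hn => h n hn rfl
    obtain ⟨n, hgn, hns, hn2⟩ := (hfreq.and_eventually (hev1.and hev2)).exists
    refine ⟨insert n s, ?_, ?_, ?_⟩
    · rw [Finset.card_insert_of_notMem hn2, hcard]
    · intro p hp
      rcases Finset.mem_insert.1 hp with rfl | hp
      · exact hgn
      · exact hg p hp
    · intro p hp q hq hpq
      rcases Finset.mem_insert.1 hp with rfl | hp' <;>
        rcases Finset.mem_insert.1 hq with rfl | hq'
      · exact absurd rfl hpq
      · exact hns q hq'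
      · rw [hsymm]; exact hns p hp'
      · exact hHs p hp' q hq' hpq

end AO

open AO in
/-- If the norm bounded sequence `(F n)` in `ba(C)₊` is asymptotically
orthogonal (`‖F n ∧ F j‖ → 0` for each fixed `j`), then for every finitely additive
probability `l` on `C`, `sup_k limsup_n ‖F n ∧ 2^k l‖ = 0`. -/
theorem asympOrth_sup_limsup_zero {Ω : Type} (C : Set (Set Ω)) (hC : IsSetAlg C)
    (F : ℕ → Set Ω → ℝ) (hF : ∀ n, Memba C (F n))
    (hFpos : ∀ n, ∀ A ∈ C, 0 ≤ F n A)
    (hbdd : ∃ M : ℝ, ∀ n, tvNorm C (F n) ≤ M)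
    (horth : ∀ j, Tendsto (fun n => tvNorm C (baInf C (F n) (F j))) atTop (nhds 0)) :
    ∀ l : Set Ω → ℝ, IsFAProb C l →
      (⨆ k : ℕ, Filter.limsup
        (fun n => tvNorm C (baInf C (F n) (fun B => (2:ℝ) ^ k * l B))) atTop) = 0 := by
  intro l hl
  obtain ⟨⟨hlfa, _⟩, hl0, hl1⟩ := hl
  have key0 : ∀ k : ℕ, Filter.limsup
      (fun n => tvNorm C (baInf C (F n) (fun B => (2:ℝ) ^ k * l B))) atTop = 0 := by
    intro k
    set c : ℝ := (2:ℝ)^k with hc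
    have hcpos : (0:ℝ) < c := by positivity
    set ν : Set Ω → ℝ := fun B => c * l B with hν
    have hνfa : IsFinAdd C ν := by
      constructor
      · simp [hν, hlfa.1]
      · intro A hA B hB hd
        simp only [hν]
        rw [hlfa.2 A hA B hB hd]; ring
    have hν0 : ∀ A ∈ C, 0 ≤ ν A := fun A hA => mul_nonneg hcpos.le (hl0 A hA)
    have hνuniv : ν univ = c := by simp [hν, hl1]
    set g : ℕ → ℝ := fun n => tvNorm C (baInf C (F n) ν) with hg
    have hgq : ∀ n, g n = baInf C (F n) ν univ := fun n =>
      tvNorm_baInf hC (hF n).1 (hFpos n) hνfa hν0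
    have hg0 : ∀ n, 0 ≤ g n := fun n => by
      rw [hgq]; exact baInf_nonneg hC (hFpos n) hν0 (univ_mem hC)
    have hgc : ∀ n, g n ≤ c := fun n => by
      rw [hgq, ← hνuniv]
      exact baInf_le_right hC (hF n).1 (hFpos n) hν0 (univ_mem hC)
    have hbdd1 : IsBoundedUnder (· ≤ ·) atTop g := Filter.isBoundedUnder_of ⟨c, hgc⟩
    have hbdd2 : IsBoundedUnder (· ≥ ·) atTop g := Filter.isBoundedUnder_of ⟨0, hg0⟩
    set L := Filter.limsup g atTop with hL
    have hL0 : 0 ≤ L := le_limsup_of_frequently_le (Frequently.of_forall hg0) hbdd1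
    rcases eq_or_lt_of_le hL0 with heq | hpos
    · exact heq.symm
    · exfalso
      have hHtend : ∀ q, Tendsto (fun n => baInf C (F n) (F q) univ) atTop (nhds 0) := by
        intro q
        have he : (fun n => baInf C (F n) (F q) univ)
            = fun n => tvNorm C (baInf C (F n) (F q)) := by
          funext n
          exact (tvNorm_baInf hC (hF n).1 (hFpos n) (hF q).1 (hFpos q)).symm
        rw [he]; exact horth q
      have hHsymm : ∀ p q, baInf C (F p) (F q) univ = baInf C (F q) (F p) univ :=
        fun p q => baInf_symm_univ hC _ _
      obtain ⟨m, hm⟩ := exists_nat_gt ((c+1) / (L/2))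
      have hm' : (c+1) < m * (L/2) := by
        rw [div_lt_iff₀ (by linarith)] at hm; linarith
      have hmpos : 0 < m := by
        by_contra h
        push_neg at h
        interval_cases m
        simp at hm'
        linarith
      have hδpos : (0:ℝ) < 1 / (8*(m:ℝ)^2+1) := by positivity
      set δ' : ℝ := (1:ℝ) / (8*(m:ℝ)^2+1) with hδ'
      obtain ⟨s, hcard, hgs, hHs⟩ := select (g := g)
        (H := fun p q => baInf C (F p) (F q) univ) (a := L/2)
        (frequently_lt_of_lt_limsup hbdd2.isCoboundedUnder_le (by rw [← hL]; linarith))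
        hHtend hHsymm hδpos m
      let e := s.orderIsoOfFin hcard
      have hkey := key hC (fun i => F (e i)) ν (fun i => (hF _).1) (fun i => hFpos _)
        hνfa hν0 (δ := δ') (ε := δ') hδpos.le hδpos
        (fun i j hij => by
          have hne : ((e i : ℕ)) ≠ ((e j : ℕ)) := by
            intro h
            exact hij (e.injective (Subtype.ext h))
          exact (hHs _ (e i).2 _ (e j).2 hne).le)
      have hlow : ∀ i : Fin m, L/2 < baInf C (F (e i)) ν univ := by
        intro i
        have := hgs _ (e i).2
        rwa [hgq] at this
      have hlow2 : (m:ℝ) * (L/2) < ∑ i, baInf C (F (e i)) ν univ := by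
        calc (m:ℝ)*(L/2) = ∑ _i : Fin m, (L/2) := by
              rw [Finset.sum_const, Finset.card_univ, Fintype.card_fin, nsmul_eq_mul]
          _ < _ := Finset.sum_lt_sum_of_nonempty ⟨⟨0, hmpos⟩, Finset.mem_univ _⟩
              (fun i _ => hlow i)
      have hδeq : δ' * (8*(m:ℝ)^2+1) = 1 := by
        rw [hδ']; field_simp
      have hsmall2 : 2*(m:ℝ)^2*(δ'+δ') ≤ 1 := by nlinarith [sq_nonneg (m:ℝ), hδpos.le]
      rw [hνuniv] at hkey
      linarith
  calc (⨆ k : ℕ, Filter.limsup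
        (fun n => tvNorm C (baInf C (F n) (fun B => (2:ℝ) ^ k * l B))) atTop)
      = ⨆ _k : ℕ, (0:ℝ) := iSup_congr key0
    _ = 0 := ciSup_const
end
end

section
/- Let λ be a countably additive probability measure on a σ-algebra, (f_n) a bounded sequence in L¹(λ), and suppose there exist g_n in the convex hull of {f_n, f_{n+1}, ...}, sets A_n with Σ_n λ(A_nᶜ) < ∞, and ξ ∈ ba absolutely continuous w.r.t. λ such that the measures B ↦ ∫_{A_n ∩ B} g_n dλ converge in total variation to ξ. Then (g_n) is Cauchy in measure: for every c > 0, λ(|g_n − g_m| > c) → 0 as n, m → ∞. -/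
noncomputable section
open Filter Set

variable {Ω : Type}

open MeasureTheory

lemma ne_compl_self_of_nonempty {Ω : Type} [h : Nonempty Ω] (B : Set Ω) : B ≠ Bᶜ := by
  obtain ⟨x⟩ := h
  intro hEq
  by_cases hx : x ∈ B
  · have : x ∈ Bᶜ := hEq ▸ hx
    exact this hx
  · have : x ∈ Bᶜ := hx
    rw [← hEq] at this
    exact hx this

lemma abs_le_tvNorm_aux {Ω : Type} [MeasurableSpace Ω] [Nonempty Ω] (ν : Set Ω → ℝ)
    (hbdd : BddAbove (varSums {B : Set Ω | MeasurableSet B} ν univ))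
    (B : Set Ω) (hB : MeasurableSet B) :
    |ν B| ≤ tvNorm {B : Set Ω | MeasurableSet B} ν := by
  classical
  have hne : B ≠ Bᶜ := ne_compl_self_of_nonempty B
  have hmem : |ν B| + |ν Bᶜ| ∈ varSums {B : Set Ω | MeasurableSet B} ν univ := by
    refine ⟨{B, Bᶜ}, ⟨?_, ?_, ?_⟩, ?_⟩
    · intro E hE
      simp only [Finset.mem_insert, Finset.mem_singleton] at hE
      rcases hE with rfl | rfl
      · exact hB
      · exact hB.compl
    · intro E hE F hF hEF
      simp only [Finset.coe_insert, Finset.coe_singleton, Set.mem_insert_iff,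
        Set.mem_singleton_iff] at hE hF
      rcases hE with rfl | rfl <;> rcases hF with rfl | rfl
      · exact absurd rfl hEF
      · exact disjoint_compl_right
      · exact disjoint_compl_left
      · exact absurd rfl hEF
    · simp
    · rw [Finset.sum_insert (by simpa using hne), Finset.sum_singleton]
  calc |ν B| ≤ |ν B| + |ν Bᶜ| := le_add_of_nonneg_right (abs_nonneg _)
    _ ≤ tvNorm {B : Set Ω | MeasurableSet B} ν := le_csSup hbdd hmem

lemma bddAbove_varSums_aux {Ω : Type} [MeasurableSpace Ω] (lam : Measure Ω)
    [IsFiniteMeasure lam] (gn : Ω → ℝ) (hgn : Integrable gn lam)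
    (An : Set Ω) (hAn : MeasurableSet An) (ξ : Set Ω → ℝ)
    (hξ : BddAbove (varSums {B : Set Ω | MeasurableSet B} ξ univ)) :
    BddAbove (varSums {B : Set Ω | MeasurableSet B}
      (fun B => (∫ x in An ∩ B, gn x ∂lam) - ξ B) univ) := by
  classical
  refine ⟨(∫ x, |gn x| ∂lam) + tvNorm {B : Set Ω | MeasurableSet B} ξ, ?_⟩
  rintro x ⟨π, ⟨hπC, hπdisj, hπun⟩, rfl⟩
  have h1 : ∑ E ∈ π, |(∫ x in An ∩ E, gn x ∂lam) - ξ E| ≤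
      (∑ E ∈ π, |∫ x in An ∩ E, gn x ∂lam|) + ∑ E ∈ π, |ξ E| := by
    rw [← Finset.sum_add_distrib]
    exact Finset.sum_le_sum fun E _ => abs_sub _ _
  have h2 : ∑ E ∈ π, |∫ x in An ∩ E, gn x ∂lam| ≤ ∫ x, |gn x| ∂lam := by
    have hstep : ∀ E ∈ π, |∫ x in An ∩ E, gn x ∂lam| ≤ ∫ x in An ∩ E, |gn x| ∂lam := by
      intro E _
      calc |∫ x in An ∩ E, gn x ∂lam| = ‖∫ x in An ∩ E, gn x ∂lam‖ := (Real.norm_eq_abs _).symm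
        _ ≤ ∫ x in An ∩ E, ‖gn x‖ ∂lam := norm_integral_le_integral_norm _
        _ = ∫ x in An ∩ E, |gn x| ∂lam := by simp [Real.norm_eq_abs]
    have hmeas : ∀ E ∈ π, MeasurableSet (An ∩ E) := fun E hE => hAn.inter (hπC E hE)
    have hdisj : Set.Pairwise (↑π) (Function.onFun Disjoint fun E => An ∩ E) := by
      intro E hE F hF hEF
      exact Disjoint.mono Set.inter_subset_right Set.inter_subset_right
        (hπdisj hE hF hEF)
    have hint : ∀ E ∈ π, IntegrableOn (fun x => |gn x|) (An ∩ E) lam :=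
      fun E _ => hgn.abs.integrableOn
    calc ∑ E ∈ π, |∫ x in An ∩ E, gn x ∂lam|
        ≤ ∑ E ∈ π, ∫ x in An ∩ E, |gn x| ∂lam := Finset.sum_le_sum hstep
      _ = ∫ x in ⋃ E ∈ π, An ∩ E, |gn x| ∂lam :=
          (integral_biUnion_finset π hmeas hdisj hint).symm
      _ ≤ ∫ x, |gn x| ∂lam :=
          setIntegral_le_integral hgn.abs (Filter.Eventually.of_forall fun x => abs_nonneg _)
  have h3 : ∑ E ∈ π, |ξ E| ≤ tvNorm {B : Set Ω | MeasurableSet B} ξ :=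
    le_csSup hξ ⟨π, ⟨hπC, hπdisj, hπun⟩, rfl⟩
  linarith


/-- If `λ` is a countably additive probability on a σ-algebra, `(f n)` a
bounded sequence in `L¹(λ)`, `g n ∈ co {f n, f (n+1), ...}`, `A n` sets with
`Σ λ((A n)ᶜ) < ∞`, and the measures `B ↦ ∫_{A n ∩ B} g n dλ` converge in total
variation to some `ξ ≪ λ`, then `(g n)` is Cauchy in measure. -/
theorem cauchy_in_measure_of_komlos {Ω : Type} [MeasurableSpace Ω]
    (lam : Measure Ω) [IsProbabilityMeasure lam]
    (f : ℕ → Ω → ℝ) (hfInt : ∀ n, Integrable (f n) lam)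
    (hfBdd : ∃ M : ℝ, ∀ n, ∫ x, |f n x| ∂lam ≤ M)
    (g : ℕ → Ω → ℝ)
    (hg : ∀ n, g n ∈ convexHull ℝ {h : Ω → ℝ | ∃ i, n ≤ i ∧ h = f i})
    (A : ℕ → Set Ω) (hA : ∀ n, MeasurableSet (A n))
    (hAsum : Summable (fun n => (lam (A n)ᶜ).toReal))
    (ξ : Set Ω → ℝ)
    (hξ : Memba {B : Set Ω | MeasurableSet B} ξ)
    (hξac : AbsCont {B : Set Ω | MeasurableSet B} ξ (fun B => (lam B).toReal))
    (hconv : Tendsto (fun n => tvNorm {B : Set Ω | MeasurableSet B}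
        (fun B => (∫ x in A n ∩ B, g n x ∂lam) - ξ B)) atTop (nhds 0)) :
    ∀ c > (0:ℝ), Tendsto
      (fun p : ℕ × ℕ => (lam {x | c < |g p.1 x - g p.2 x|}).toReal)
      atTop (nhds 0) := by
  classical
  intro c hc
  have hgInt : ∀ n, Integrable (g n) lam := by
    intro n
    have hconvex : Convex ℝ {h : Ω → ℝ | Integrable h lam} := by
      intro u hu v hv a b _ _ _
      exact (hu.smul a).add (hv.smul b)
    exact convexHull_min (by rintro h ⟨i, _, rfl⟩; exact hfInt i) hconvex (hg n)
  have hne : Nonempty Ω := by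
    by_contra h
    have h0 : lam Set.univ = 0 := by
      rw [Set.univ_eq_empty_iff.mpr (not_nonempty_iff.mp h)]
      exact measure_empty
    rw [measure_univ] at h0
    exact one_ne_zero h0
  set t : ℕ → ℝ := fun n => tvNorm {B : Set Ω | MeasurableSet B}
      (fun B => (∫ x in A n ∩ B, g n x ∂lam) - ξ B) with ht_def
  have habs : ∀ n (B : Set Ω), MeasurableSet B →
      |(∫ x in A n ∩ B, g n x ∂lam) - ξ B| ≤ t n := by
    intro n B hB
    exact abs_le_tvNorm_aux _ (bddAbove_varSums_aux lam (g n) (hgInt n) (A n) (hA n) ξ hξ.2) B hB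
  -- the key pointwise bound
  have key : ∀ n m : ℕ, (lam {x | c < |g n x - g m x|}).toReal ≤
      (lam (A n)ᶜ).toReal + (lam (A m)ᶜ).toReal + (t n + t m) / c + (t m + t n) / c := by
    intro n m
    set φ : Ω → ℝ := fun x => g n x - g m x with hφ_def
    have hφ : Integrable φ lam := (hgInt n).sub (hgInt m)
    set ψ : Ω → ℝ := hφ.aestronglyMeasurable.mk φ with hψ_def
    have hψm : Measurable ψ := hφ.aestronglyMeasurable.stronglyMeasurable_mk.measurable
    have hψeq : φ =ᵐ[lam] ψ := hφ.aestronglyMeasurable.ae_eq_mk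
    have hψInt : Integrable ψ lam := hφ.congr hψeq
    set D1 : Set Ω := A n ∩ (A m ∩ {x | c < ψ x}) with hD1_def
    set D2 : Set Ω := A n ∩ (A m ∩ {x | c < -ψ x}) with hD2_def
    have hD1 : MeasurableSet D1 :=
      (hA n).inter ((hA m).inter (measurableSet_lt measurable_const hψm))
    have hD2 : MeasurableSet D2 :=
      (hA n).inter ((hA m).inter (measurableSet_lt measurable_const hψm.neg))
    -- bound for D1
    have hbound : ∀ D : Set Ω, MeasurableSet D → D ⊆ A n → D ⊆ A m →
        ∫ x in D, φ x ∂lam ≤ t n + t m := by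
      intro D hD hDn hDm
      have e1 : ∫ x in D, φ x ∂lam = (∫ x in D, g n x ∂lam) - ∫ x in D, g m x ∂lam :=
        integral_sub (hgInt n).integrableOn (hgInt m).integrableOn
      have e2 : A n ∩ D = D := Set.inter_eq_self_of_subset_right hDn
      have e3 : A m ∩ D = D := Set.inter_eq_self_of_subset_right hDm
      have h1 := habs n D hD
      have h2 := habs m D hD
      rw [e2] at h1
      rw [e3] at h2
      have := abs_sub ((∫ x in D, g n x ∂lam) - ξ D) ((∫ x in D, g m x ∂lam) - ξ D)
      have hle : (∫ x in D, g n x ∂lam) - ∫ x in D, g m x ∂lam ≤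
          |(∫ x in D, g n x ∂lam) - ξ D| + |(∫ x in D, g m x ∂lam) - ξ D| := by
        have := le_abs_self (((∫ x in D, g n x ∂lam) - ξ D) - ((∫ x in D, g m x ∂lam) - ξ D))
        have h' := abs_sub ((∫ x in D, g n x ∂lam) - ξ D) ((∫ x in D, g m x ∂lam) - ξ D)
        linarith
      rw [e1]
      linarith
    have hb1 : c * (lam D1).toReal ≤ t n + t m := by
      have hge : c * (lam D1).toReal ≤ ∫ x in D1, ψ x ∂lam :=
        setIntegral_ge_of_const_le_real hD1 (measure_ne_top lam D1)
          (fun x hx => le_of_lt hx.2.2) hψInt.integrableOn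
      have heq : ∫ x in D1, ψ x ∂lam = ∫ x in D1, φ x ∂lam := by
        refine setIntegral_congr_ae hD1 ?_
        filter_upwards [hψeq] with x h _ using h.symm
      calc c * (lam D1).toReal ≤ ∫ x in D1, φ x ∂lam := by rw [← heq]; exact hge
        _ ≤ t n + t m := hbound D1 hD1 Set.inter_subset_left
            (Set.inter_subset_right.trans Set.inter_subset_left)
    have hb2 : c * (lam D2).toReal ≤ t n + t m := by
      have hge : c * (lam D2).toReal ≤ ∫ x in D2, (-ψ x) ∂lam :=
        setIntegral_ge_of_const_le_real hD2 (measure_ne_top lam D2)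
          (fun x hx => le_of_lt hx.2.2) hψInt.neg.integrableOn
      have heq : ∫ x in D2, (-ψ x) ∂lam = -∫ x in D2, φ x ∂lam := by
        rw [integral_neg]
        congr 1
        refine setIntegral_congr_ae hD2 ?_
        filter_upwards [hψeq] with x h _ using h.symm
      have hφ' : -∫ x in D2, φ x ∂lam = ∫ x in D2, (g m x - g n x) ∂lam := by
        rw [← integral_neg]
        congr 1 with x
        simp [hφ_def]
      have e1 : ∫ x in D2, (g m x - g n x) ∂lam
          = (∫ x in D2, g m x ∂lam) - ∫ x in D2, g n x ∂lam :=
        integral_sub (hgInt m).integrableOn (hgInt n).integrableOn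
      have e2 : A n ∩ D2 = D2 := Set.inter_eq_self_of_subset_right Set.inter_subset_left
      have e3 : A m ∩ D2 = D2 := Set.inter_eq_self_of_subset_right
        (Set.inter_subset_right.trans Set.inter_subset_left)
      have h1 := habs n D2 hD2
      have h2 := habs m D2 hD2
      rw [e2] at h1
      rw [e3] at h2
      have h' := abs_sub ((∫ x in D2, g m x ∂lam) - ξ D2) ((∫ x in D2, g n x ∂lam) - ξ D2)
      have h'' := le_abs_self (((∫ x in D2, g m x ∂lam) - ξ D2)
        - ((∫ x in D2, g n x ∂lam) - ξ D2))
      have : ∫ x in D2, (g m x - g n x) ∂lam ≤ t n + t m := by rw [e1]; linarith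
      linarith [hge, heq ▸ hge]
    -- measure identification and union bound
    have hSeq : lam {x | c < |g n x - g m x|} = lam {x | c < |ψ x|} := by
      refine measure_congr (Filter.eventuallyEq_set.mpr ?_)
      filter_upwards [hψeq] with x h
      simp only [Set.mem_setOf_eq, hφ_def] at h ⊢
      rw [← h]
    have hsub : {x | c < |ψ x|} ⊆ (A n)ᶜ ∪ ((A m)ᶜ ∪ (D1 ∪ D2)) := by
      intro x hx
      by_cases hxn : x ∈ A n
      · by_cases hxm : x ∈ A m
        · right; right
          rcases lt_abs.mp (show c < |ψ x| from hx) with h | h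
          · exact Or.inl ⟨hxn, hxm, h⟩
          · exact Or.inr ⟨hxn, hxm, h⟩
        · exact Or.inr (Or.inl hxm)
      · exact Or.inl hxn
    have hm1 : lam {x | c < |ψ x|} ≤ lam (A n)ᶜ + (lam (A m)ᶜ + (lam D1 + lam D2)) := by
      refine le_trans (measure_mono hsub) ?_
      refine le_trans (measure_union_le _ _) ?_
      refine add_le_add le_rfl ?_
      refine le_trans (measure_union_le _ _) ?_
      exact add_le_add le_rfl (measure_union_le _ _)
    have hm2 : (lam {x | c < |g n x - g m x|}).toReal ≤
        (lam (A n)ᶜ).toReal + (lam (A m)ᶜ).toReal + (lam D1).toReal + (lam D2).toReal := by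
      rw [hSeq]
      have hfin : lam (A n)ᶜ + (lam (A m)ᶜ + (lam D1 + lam D2)) ≠ ⊤ := by finiteness
      calc (lam {x | c < |ψ x|}).toReal
          ≤ (lam (A n)ᶜ + (lam (A m)ᶜ + (lam D1 + lam D2))).toReal :=
            ENNReal.toReal_mono hfin hm1
        _ = (lam (A n)ᶜ).toReal + (lam (A m)ᶜ).toReal + (lam D1).toReal + (lam D2).toReal := by
            rw [ENNReal.toReal_add (by finiteness) (by finiteness),
              ENNReal.toReal_add (by finiteness) (by finiteness),
              ENNReal.toReal_add (by finiteness) (by finiteness)]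
            ring
    have hd1 : (lam D1).toReal ≤ (t n + t m) / c := by
      rw [le_div_iff₀ hc]
      linarith [hb1]
    have hd2 : (lam D2).toReal ≤ (t m + t n) / c := by
      rw [le_div_iff₀ hc]
      linarith [hb2]
    linarith
  -- limit of the bound
  have hfst : Tendsto (Prod.fst : ℕ × ℕ → ℕ) atTop atTop := by
    rw [← prod_atTop_atTop_eq]; exact tendsto_fst
  have hsnd : Tendsto (Prod.snd : ℕ × ℕ → ℕ) atTop atTop := by
    rw [← prod_atTop_atTop_eq]; exact tendsto_snd
  have hA0 : Tendsto (fun n => (lam (A n)ᶜ).toReal) atTop (nhds 0) :=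
    hAsum.tendsto_atTop_zero
  have ht0 : Tendsto t atTop (nhds 0) := hconv
  have hu : Tendsto (fun p : ℕ × ℕ => (lam (A p.1)ᶜ).toReal + (lam (A p.2)ᶜ).toReal
      + (t p.1 + t p.2) / c + (t p.2 + t p.1) / c) atTop (nhds 0) := by
    have h1 := (hA0.comp hfst).add (hA0.comp hsnd)
    have h2 := ((ht0.comp hfst).add (ht0.comp hsnd)).div_const c
    have h3 := ((ht0.comp hsnd).add (ht0.comp hfst)).div_const c
    have := (h1.add h2).add h3
    simpa using this
  refine squeeze_zero (fun p => ENNReal.toReal_nonneg) (fun p => key p.1 p.2) hu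
end
end
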